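/- arXiv:2507.17246 — 10 statements merged into one kernel-verified Lean document; each statement's English description precedes it below -/
import Mathlib

section
/- Among all unicyclic graphs with n ≥ 3 vertices, the cycle graph C_n is the unique graph achieving the minimum Euler Sombor index, and this minimum value equals 2√3·n. -/
open scoped Classical

noncomputable def eusWeight {V : Type*} [Fintype V] (G : SimpleGraph V) : Sym2 V → ℝ :=
  Sym2.lift ⟨fun i j => Real.sqrt ((G.degree i : ℝ)^2 + (G.degree j : ℝ)^2 +
      (G.degree i : ℝ) * (G.degree j : ℝ)),
    fun i j => by ring_nf⟩

/-- The Euler Sombor index of a finite simple graph: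
`EUS(G) = Σ_{v_i v_j ∈ E(G)} √(d_i² + d_j² + d_i d_j)`. -/
noncomputable def EUS {V : Type*} [Fintype V] (G : SimpleGraph V) : ℝ :=
  ∑ e ∈ G.edgeFinset, eusWeight G e

/-- `cycleWithPath n g` : the unicyclic graph `C_{n,g}` obtained from the cycle on vertices
`0, …, g-1` by attaching the pendant path `0 — g — (g+1) — ⋯ — (n-1)`.
For `g = n` this is just the cycle `C_n`. -/
def cycleWithPath (n g : ℕ) : SimpleGraph (Fin n) :=
  SimpleGraph.fromRel (fun i j =>
    (j.val = i.val + 1 ∧ i.val + 1 ≠ g) ∨ (i.val = 0 ∧ (j.val = g - 1 ∨ j.val = g)))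

open Finset

lemma sqrt_lemma (a b : ℝ) (ha : 0 ≤ a) (hb : 0 ≤ b) :
    Real.sqrt 3 / 2 * (a + b) ≤ Real.sqrt (a^2 + b^2 + a*b) := by
  have h4 : Real.sqrt 4 = 2 := by
    rw [show (4:ℝ) = 2^2 by norm_num, Real.sqrt_sq (by norm_num)]
  have h1 : Real.sqrt 3 / 2 * (a + b) = Real.sqrt (3/4 * (a+b)^2) := by
    rw [Real.sqrt_mul (by norm_num), Real.sqrt_sq (by positivity),
      Real.sqrt_div' 3 (by norm_num), h4]
  rw [h1]
  apply Real.sqrt_le_sqrt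
  nlinarith [sq_nonneg (a - b)]

noncomputable def dsum {V : Type*} [Fintype V] (G : SimpleGraph V) : Sym2 V → ℕ :=
  Sym2.lift ⟨fun i j => G.degree i + G.degree j, fun i j => by ring⟩

lemma sum_dsum {V : Type*} [Fintype V] (G : SimpleGraph V) :
    ∑ e ∈ G.edgeFinset, dsum G e = ∑ v, G.degree v * G.degree v := by
  have key : ∀ e ∈ G.edgeFinset, dsum G e = ∑ v, if v ∈ e then G.degree v else 0 := by
    intro e he
    induction e with
    | _ a b =>
      have hab : a ≠ b := by
        have : G.Adj a b := by simpa using he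
        exact this.ne
      rw [← Finset.sum_filter]
      have : ({v | v ∈ s(a,b)} : Finset V) = {a, b} := by
        ext v; simp [Sym2.mem_iff]
      rw [this, Finset.sum_pair hab, dsum]
      simp
  rw [Finset.sum_congr rfl key, Finset.sum_comm]
  refine Finset.sum_congr rfl fun v _ => ?_
  rw [← Finset.sum_filter, ← G.incidenceFinset_eq_filter, Finset.sum_const,
    G.card_incidenceFinset_eq_degree, smul_eq_mul]


lemma cyc_adj {n : ℕ} (hn : 3 ≤ n) (i j : Fin n) :
    (cycleWithPath n n).Adj i j ↔
      (j.val = i.val + 1 ∨ i.val = j.val + 1 ∨ (i.val = 0 ∧ j.val = n-1) ∨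
        (j.val = 0 ∧ i.val = n-1)) := by
  have h1 := i.isLt
  have h2 := j.isLt
  simp only [cycleWithPath, SimpleGraph.fromRel_adj]
  constructor
  · rintro ⟨hne, h⟩
    omega
  · intro h
    have hv : i.val ≠ j.val := by omega
    exact ⟨fun he => hv (congrArg Fin.val he), by omega⟩

lemma deg_two_of_nbrs {V : Type*} [Fintype V] (G : SimpleGraph V) (i a b : V) (hab : a ≠ b)
    (h : ∀ j, G.Adj i j ↔ (j = a ∨ j = b)) : G.degree i = 2 := by
  have h2 : G.neighborFinset i = {a, b} := by
    ext j; simp [SimpleGraph.mem_neighborFinset, h]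
  show (G.neighborFinset i).card = 2
  rw [h2, Finset.card_pair hab]

lemma cyc_degree {n : ℕ} (hn : 3 ≤ n) (i : Fin n) : (cycleWithPath n n).degree i = 2 := by
  have h1 := i.isLt
  rcases Nat.lt_or_ge (i.val + 1) n with hi | hi
  · rcases Nat.eq_zero_or_pos i.val with hz | hz
    · exact deg_two_of_nbrs _ i ⟨1, by omega⟩ ⟨n-1, by omega⟩
        (Fin.ne_of_val_ne (by simp only [Fin.val_mk]; omega))
        (fun j => by rw [cyc_adj hn]; simp only [Fin.ext_iff, Fin.val_mk]; have := j.isLt; omega)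
    · exact deg_two_of_nbrs _ i ⟨i.val + 1, by omega⟩ ⟨i.val - 1, by omega⟩
        (Fin.ne_of_val_ne (by simp only [Fin.val_mk]; omega))
        (fun j => by rw [cyc_adj hn]; simp only [Fin.ext_iff, Fin.val_mk]; have := j.isLt; omega)
  · -- i.val = n - 1
    exact deg_two_of_nbrs _ i ⟨n-2, by omega⟩ ⟨0, by omega⟩
      (Fin.ne_of_val_ne (by simp only [Fin.val_mk]; omega))
      (fun j => by rw [cyc_adj hn]; simp only [Fin.ext_iff, Fin.val_mk]; have := j.isLt; omega)

lemma iso_degree {V W : Type*} [Fintype V] [Fintype W] {G : SimpleGraph V} {H : SimpleGraph W}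
    (f : G ≃g H) (v : V) : H.degree (f v) = G.degree v := by
  rw [← SimpleGraph.card_neighborSet_eq_degree, ← SimpleGraph.card_neighborSet_eq_degree]
  exact Fintype.card_congr (f.mapNeighborSet v).symm

section Walk
variable {V : Type*} [Fintype V]

noncomputable def nxt (G : SimpleGraph V) (u v : V) : V :=
  if h : ∃ w, G.Adj v w ∧ w ≠ u then h.choose else v

lemma nxt_spec (G : SimpleGraph V) {u v : V} (h2 : G.degree v = 2) (h : G.Adj v u) :
    G.Adj v (nxt G u v) ∧ nxt G u v ≠ u ∧ ∀ z, G.Adj v z → z = u ∨ z = nxt G u v := by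
  have hu : u ∈ G.neighborFinset v := by simpa using h
  have hnc : (G.neighborFinset v).card = 2 := h2
  have hcard : ((G.neighborFinset v).erase u).card = 1 := by
    rw [Finset.card_erase_of_mem hu, hnc]
  obtain ⟨w, hw⟩ := Finset.card_eq_one.mp hcard
  have hwmem : w ∈ (G.neighborFinset v).erase u := by rw [hw]; exact Finset.mem_singleton_self w
  have hwne : w ≠ u := (Finset.mem_erase.mp hwmem).1
  have hwadj : G.Adj v w := by
    have := (Finset.mem_erase.mp hwmem).2
    simpa using this
  have hex : ∃ w, G.Adj v w ∧ w ≠ u := ⟨w, hwadj, hwne⟩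
  have hdef : nxt G u v = hex.choose := dif_pos hex
  obtain ⟨hc1, hc2⟩ := hex.choose_spec
  have hcw : hex.choose = w := by
    have : hex.choose ∈ (G.neighborFinset v).erase u :=
      Finset.mem_erase.mpr ⟨hc2, by simpa using hc1⟩
    rw [hw] at this; exact Finset.mem_singleton.mp this
  refine ⟨by rw [hdef]; exact hc1, by rw [hdef]; exact hc2, fun z hz => ?_⟩
  by_cases hzu : z = u
  · exact Or.inl hzu
  · right
    have : z ∈ (G.neighborFinset v).erase u := Finset.mem_erase.mpr ⟨hzu, by simpa using hz⟩
    rw [hw] at this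
    rw [hdef, hcw]
    exact Finset.mem_singleton.mp this

noncomputable def walkSeq (G : SimpleGraph V) (v0 a0 : V) : ℕ → V × V
  | 0 => (v0, a0)
  | k+1 => ((walkSeq G v0 a0 k).2, nxt G (walkSeq G v0 a0 k).1 (walkSeq G v0 a0 k).2)

lemma two_regular_iso (G : SimpleGraph V) (n : ℕ) (hn : 3 ≤ n)
    (hcard : Fintype.card V = n) (hconn : G.Connected) (hreg : ∀ v, G.degree v = 2) :
    Nonempty (G ≃g cycleWithPath n n) := by
  have hneV : Nonempty V := hconn.nonempty
  obtain ⟨v0⟩ := hneV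
  have hnb : (G.neighborFinset v0).Nonempty := by
    rw [← Finset.card_pos]; rw [show (G.neighborFinset v0).card = G.degree v0 from rfl, hreg]
    norm_num
  obtain ⟨a0, ha0⟩ := hnb
  have hadj0 : G.Adj v0 a0 := by simpa using ha0
  set x : ℕ → V := fun k => (walkSeq G v0 a0 k).1 with hxdef
  have hx2 : ∀ k, x (k+2) = nxt G (x k) (x (k+1)) := fun k => rfl
  have hxs : ∀ k, x (k+1) = (walkSeq G v0 a0 k).2 := fun k => rfl
  -- adjacency along the walk
  have hadj : ∀ k, G.Adj (x k) (x (k+1)) := by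
    intro k
    induction k with
    | zero => exact hadj0
    | succ k ih =>
      have := (nxt_spec G (hreg (x (k+1))) ih.symm).1
      rw [← hx2 k] at this
      exact this
  have hne2 : ∀ k, x (k+2) ≠ x k := by
    intro k
    have := (nxt_spec G (hreg (x (k+1))) (hadj k).symm).2.1
    rw [← hx2 k] at this
    exact this
  have hnbr : ∀ k z, G.Adj (x (k+1)) z → z = x k ∨ z = x (k+2) := by
    intro k z hz
    have := (nxt_spec G (hreg (x (k+1))) (hadj k).symm).2.2 z hz
    rw [← hx2 k] at this
    exact this
  -- forward and backward determinism
  have hfwd : ∀ i j, x i = x j → x (i+1) = x (j+1) → x (i+2) = x (j+2) := by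
    intro i j h1 h2
    rw [hx2 i, hx2 j, h1, h2]
  have hback : ∀ i j, x (i+1) = x (j+1) → x (i+2) = x (j+2) → x i = x j := by
    intro i j h1 h2
    have hadji : G.Adj (x (j+1)) (x i) := by rw [← h1]; exact (hadj i).symm
    rcases hnbr j (x i) hadji with h | h
    · exact h
    · exact absurd (h.trans h2.symm).symm (hne2 i)
  -- existence of a period
  obtain ⟨i0, j0, hij0, heq0⟩ :=
    Finite.exists_ne_map_eq_of_infinite (walkSeq G v0 a0)
  have hcol : ∃ i d, 0 < d ∧ x i = x (i+d) ∧ x (i+1) = x (i+d+1) := by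
    rcases Nat.lt_or_ge i0 j0 with h | h
    · exact ⟨i0, j0 - i0, by omega, by
        have h1 : x i0 = x j0 := congrArg Prod.fst heq0
        have h2 : x (i0+1) = x (j0+1) := by rw [hxs, hxs, heq0]
        constructor
        · rw [show i0 + (j0 - i0) = j0 by omega]; exact h1
        · rw [show i0 + (j0 - i0) + 1 = j0 + 1 by omega]; exact h2⟩
    · have hlt : j0 < i0 := by omega
      exact ⟨j0, i0 - j0, by omega, by
        have h1 : x j0 = x i0 := (congrArg Prod.fst heq0).symm
        have h2 : x (j0+1) = x (i0+1) := by rw [hxs, hxs, heq0]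
        constructor
        · rw [show j0 + (i0 - j0) = i0 by omega]; exact h1
        · rw [show j0 + (i0 - j0) + 1 = i0 + 1 by omega]; exact h2⟩
  -- push the period down to 0
  have hdown : ∀ i d, x i = x (i+d) → x (i+1) = x (i+d+1) →
      x 0 = x d ∧ x 1 = x (d+1) := by
    intro i d
    induction i with
    | zero => intro h1 h2; exact ⟨by simpa using h1, by rw [show d + 1 = 0 + d + 1 from by omega]; simpa using h2⟩
    | succ i ih =>
      intro h1 h2
      apply ih
      · apply hback
        · rw [show i + d + 1 = (i+1) + d from by omega]; exact h1
        · rw [show i + d + 2 = (i+1) + d + 1 from by omega]; exact h2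
      · rw [show i + d + 1 = (i+1) + d from by omega]; exact h1
  have hper : ∃ d, 0 < d ∧ x d = x 0 ∧ x (d+1) = x 1 := by
    obtain ⟨i, d, hd, h1, h2⟩ := hcol
    obtain ⟨g1, g2⟩ := hdown i d h1 h2
    exact ⟨d, hd, g1.symm, g2.symm⟩
  set m := Nat.find hper with hmdef
  obtain ⟨hm0, hxm, hxm1⟩ := Nat.find_spec hper
  have hmin : ∀ k, k < m → ¬(0 < k ∧ x k = x 0 ∧ x (k+1) = x 1) := fun k hk => Nat.find_min hper hk
  -- periodicity with period m
  have hshift : ∀ k, x (k + m) = x k ∧ x (k + m + 1) = x (k+1) := by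
    intro k
    induction k with
    | zero => exact ⟨by simpa using hxm, by simpa using hxm1⟩
    | succ k ih =>
      constructor
      · rw [show k + 1 + m = (k + m) + 1 from by omega]; exact ih.2
      · have := hfwd (k + m) k ih.1 ih.2
        rw [show k + 1 + m + 1 = k + m + 2 from by omega]
        exact this
  have hxper : ∀ k, x (k + m) = x k := fun k => (hshift k).1
  -- reversal argument
  have hrev : ∀ i j, i < j → x i = x j → x (i+1) = x (j-1) → False := by
    intro i j hij h0 h1
    set g := j - i with hg
    have hg1 : 1 ≤ g := by omega
    rcases Nat.eq_or_lt_of_le hg1 with hg2 | hg2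
    · have : x i = x (i+1) := by rw [show i+1 = j by omega]; exact h0
      exact (hadj i).ne this
    · have hQ : ∀ k, k + 1 ≤ g → x (i+k) = x (j-k) ∧ x (i+k+1) = x (j-k-1) := by
        intro k
        induction k with
        | zero => intro _; exact ⟨by simpa using h0, by simpa using h1⟩
        | succ k ih =>
          intro hk
          obtain ⟨q1, q2⟩ := ih (by omega)
          have hadjz : G.Adj (x (j-k-1)) (x (i+k+2)) := by
            rw [← q2]; exact hadj (i+k+1)
          have ht1 : j - k - 2 + 1 = j - k - 1 := by omega
          have ht2 : j - k - 2 + 2 = j - k := by omega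
          have hh := hnbr (j-k-2) (x (i+k+2)) (by rw [ht1]; exact hadjz)
          rw [ht2] at hh
          rcases hh with h' | h'
          · refine ⟨by rw [show i + (k+1) = i+k+1 from rfl, show j - (k+1) = j - k - 1 by omega]; exact q2, ?_⟩
            rw [show i+(k+1)+1 = i+k+2 from rfl, show j - (k+1) - 1 = j - k - 2 by omega]
            exact h'
          · exact absurd (h'.trans q1.symm) (hne2 (i+k))
      rcases Nat.even_or_odd g with ⟨t, ht⟩ | ⟨t, ht⟩
      · have ht1 : 1 ≤ t := by omega
        obtain ⟨q1, q2⟩ := hQ t (by omega)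
        have hcc : x (i+t+1) = x (i+t-1) := by
          rw [q2]; congr 1; omega
        exact hne2 (i+t-1) (by rw [show i+t-1+2 = i+t+1 by omega]; exact hcc)
      · obtain ⟨q1, q2⟩ := hQ t (by omega)
        have hcc : x (i+t) = x (i+t+1) := by rw [q1]; congr 1; omega
        exact (hadj (i+t)).ne hcc
  -- injectivity below the period
  have hinj : ∀ i j, i < j → j < m → x i ≠ x j := by
    intro i j hij hjm heq
    have hz : G.Adj (x j) (x (i+1)) := by rw [← heq]; exact hadj i
    have hj1 : j - 1 + 1 = j := by omega
    have hh := hnbr (j-1) (x (i+1)) (by rw [hj1]; exact hz)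
    rcases hh with h | h
    · exact hrev i j hij heq h
    · have h' : x (i+1) = x (j+1) := by rw [h]; congr 1; omega
      have hd := hdown i (j-i) (by rw [show i + (j-i) = j by omega]; exact heq)
        (by rw [show i+(j-i)+1 = j+1 by omega]; exact h')
      exact hmin (j-i) (by omega) ⟨by omega, hd.1.symm, hd.2.symm⟩
  -- the image of the walk
  set S : Finset V := (Finset.range m).image x with hSdef
  have hclose : ∀ u ∈ S, ∀ w, G.Adj u w → w ∈ S := by
    intro u hu w hw
    obtain ⟨k, hk, rfl⟩ := Finset.mem_image.mp hu
    rw [Finset.mem_range] at hk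
    have hadjw : G.Adj (x (k + m)) w := by rw [hxper k]; exact hw
    have hkm : k + m - 1 + 1 = k + m := by omega
    have hh := hnbr (k+m-1) w (by rw [hkm]; exact hadjw)
    rw [show k+m-1+2 = k+m+1 by omega] at hh
    rcases hh with h | h
    · rcases Nat.eq_zero_or_pos k with h0 | h0
      · subst h0
        exact Finset.mem_image.mpr ⟨m-1, Finset.mem_range.mpr (by omega),
          by rw [h]; congr 1; omega⟩
      · refine Finset.mem_image.mpr ⟨k-1, Finset.mem_range.mpr (by omega), ?_⟩
        rw [h, show k+m-1 = (k-1)+m by omega, hxper]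
    · have hw1 : w = x (k+1) := by rw [h, show k+m+1 = (k+1)+m by omega, hxper]
      rcases Nat.lt_or_ge (k+1) m with hlt | hge
      · exact Finset.mem_image.mpr ⟨k+1, Finset.mem_range.mpr hlt, hw1.symm⟩
      · have hk1 : k + 1 = m := by omega
        refine Finset.mem_image.mpr ⟨0, Finset.mem_range.mpr (by omega), ?_⟩
        rw [hw1, hk1, hxm]
  have hx0S : x 0 ∈ S := Finset.mem_image.mpr ⟨0, Finset.mem_range.mpr (by omega), rfl⟩
  have hall : ∀ v, v ∈ S := by
    have walkS : ∀ (a b : V), G.Walk a b → a ∈ S → b ∈ S := by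
      intro a b p
      induction p with
      | nil => exact id
      | cons h p ih => intro ha; exact ih (hclose _ ha _ h)
    intro v
    obtain ⟨p⟩ := hconn.preconnected (x 0) v
    exact walkS _ _ p hx0S
  have hSuniv : S = Finset.univ := Finset.eq_univ_iff_forall.mpr hall
  have hcardS : S.card = m := by
    rw [hSdef, Finset.card_image_of_injOn, Finset.card_range]
    intro a ha b hb hab
    rw [Finset.mem_coe, Finset.mem_range] at ha hb
    by_contra hne
    rcases lt_trichotomy a b with h' | h' | h'
    · exact hinj a b h' hb hab
    · exact hne h'
    · exact hinj b a h' ha hab.symm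
  have hmn : m = n := by
    rw [← hcardS, ← hcard, ← Finset.card_univ, hSuniv]
  have hxinj : ∀ a b, a < n → b < n → x a = x b → a = b := by
    intro a b ha hb h
    by_contra hne
    rcases lt_trichotomy a b with h' | h' | h'
    · exact hinj a b h' (by omega) h
    · exact hne h'
    · exact hinj b a h' (by omega) h.symm
  have hxn0 : x n = x 0 := by
    have := hxper 0
    rw [Nat.zero_add] at this
    rw [← hmn]; exact this
  have hxn1 : x (n+1) = x 1 := by
    have := hxper 1
    rw [show 1 + m = m + 1 by omega] at this
    rw [← hmn]; exact this
  -- build the isomorphism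
  have hbij : Function.Bijective (fun k : Fin n => x k.val) := by
    rw [Fintype.bijective_iff_injective_and_card]
    constructor
    · intro a b hab
      exact Fin.ext (hxinj a.val b.val a.isLt b.isLt hab)
    · simp [hcard]
  refine ⟨(SimpleGraph.Iso.symm ⟨Equiv.ofBijective _ hbij, ?_⟩ : G ≃g cycleWithPath n n)⟩
  intro a b
  show G.Adj (x a.val) (x b.val) ↔ (cycleWithPath n n).Adj a b
  rw [cyc_adj hn]
  constructor
  · intro h
    have hadjw : G.Adj (x (a.val + m)) (x b.val) := by rw [hxper]; exact h
    have hh := hnbr (a.val+m-1) (x b.val) (by rw [show a.val+m-1+1 = a.val+m by omega]; exact hadjw)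
    rw [show a.val+m-1+2 = a.val+m+1 by omega] at hh
    have hb := b.isLt
    have ha := a.isLt
    rcases hh with h' | h'
    · rcases Nat.eq_zero_or_pos a.val with h0 | h0
      · have : b.val = m - 1 := by
          apply hxinj _ _ hb (by omega)
          rw [h']; congr 1; omega
        right; right; left; exact ⟨h0, by omega⟩
      · have : b.val = a.val - 1 := by
          apply hxinj _ _ hb (by omega)
          rw [h', show a.val+m-1 = (a.val-1)+m by omega, hxper]
        right; left; omega
    · rcases Nat.lt_or_ge (a.val+1) n with hlt | hge
      · have : b.val = a.val + 1 := by
          apply hxinj _ _ hb (by omega)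
          rw [h', show a.val+m+1 = (a.val+1)+m by omega, hxper]
        left; exact this
      · have han : a.val = n - 1 := by omega
        have : b.val = 0 := by
          apply hxinj _ _ hb (by omega)
          rw [h', show a.val+m+1 = n+m by omega, hxper, hxn0]
        right; right; right; exact ⟨this, han⟩
  · intro h
    rcases h with h | h | ⟨h1, h2⟩ | ⟨h1, h2⟩
    · rw [h]; exact hadj a.val
    · rw [h]; exact (hadj b.val).symm
    · rw [h1, h2]
      have := (hadj (n-1)).symm
      rw [show n-1+1 = n by omega, hxn0] at this
      exact this
    · rw [h1, h2]
      have := hadj (n-1)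
      rw [show n-1+1 = n by omega, hxn0] at this
      exact this


end Walk

/-- Among all unicyclic graphs (connected graphs whose number of edges equals the number of
vertices) with `n ≥ 3` vertices, the cycle `C_n` is the unique graph achieving the minimum
Euler Sombor index, and the minimum value is `2√3·n`. -/
theorem eus_min_unicyclic {V : Type*} [Fintype V] (G : SimpleGraph V) (n : ℕ)
    (hn : 3 ≤ n) (hcard : Fintype.card V = n)
    (hconn : G.Connected) (hunicyclic : G.edgeSet.ncard = Fintype.card V) :
    2 * Real.sqrt 3 * n ≤ EUS G ∧
      (EUS G = 2 * Real.sqrt 3 * n ↔ Nonempty (G ≃g cycleWithPath n n)) := by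
  have hedge : G.edgeFinset.card = n := by
    rw [← hcard, ← hunicyclic, Set.ncard_eq_toFinset_card']
    congr 1
  have hsumdeg : ∑ v : V, G.degree v = 2 * n := by
    rw [G.sum_degrees_eq_twice_card_edges, hedge]
  have hsum2 : ∑ v : V, ((G.degree v : ℝ)) = 2 * n := by
    exact_mod_cast hsumdeg
  have key : (4:ℝ) * n + ∑ v : V, ((G.degree v : ℝ) - 2)^2 = ∑ v : V, (G.degree v : ℝ)^2 := by
    have expand : ∀ v : V, ((G.degree v:ℝ) - 2)^2 = (G.degree v:ℝ)^2 - 4*(G.degree v:ℝ) + 4 := by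
      intro v; ring
    rw [Finset.sum_congr rfl (fun v _ => expand v), Finset.sum_add_distrib,
      Finset.sum_sub_distrib, ← Finset.mul_sum, Finset.sum_const, Finset.card_univ, hcard,
      hsum2, nsmul_eq_mul]
    ring
  have hsumd : ∑ v : V, (G.degree v:ℝ)^2 = ∑ e ∈ G.edgeFinset, ((dsum G e : ℝ)) := by
    calc ∑ v : V, (G.degree v:ℝ)^2
        = ∑ v : V, ((G.degree v * G.degree v : ℕ) : ℝ) := by
          refine Finset.sum_congr rfl fun v _ => ?_; push_cast; ring
      _ = ((∑ v : V, G.degree v * G.degree v : ℕ) : ℝ) := by rw [Nat.cast_sum]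
      _ = ((∑ e ∈ G.edgeFinset, dsum G e : ℕ) : ℝ) := by rw [sum_dsum]
      _ = ∑ e ∈ G.edgeFinset, ((dsum G e : ℝ)) := by rw [Nat.cast_sum]
  have hEUS1 : Real.sqrt 3 / 2 * ∑ v : V, (G.degree v:ℝ)^2 ≤ EUS G := by
    rw [hsumd, Finset.mul_sum]
    apply Finset.sum_le_sum
    intro e _
    induction e with
    | _ a b =>
      show Real.sqrt 3 / 2 * ((dsum G s(a,b) : ℕ) : ℝ) ≤ eusWeight G s(a,b)
      simp only [dsum, eusWeight, Sym2.lift_mk]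
      push_cast
      exact sqrt_lemma _ _ (by positivity) (by positivity)
  have hsq_nonneg : (0:ℝ) ≤ ∑ v : V, ((G.degree v : ℝ) - 2)^2 :=
    Finset.sum_nonneg fun v _ => sq_nonneg _
  have h34 : (0:ℝ) < Real.sqrt 3 / 2 := by positivity
  have hmain : 2 * Real.sqrt 3 * n ≤ EUS G := by
    have h1 : (4:ℝ)*n ≤ ∑ v : V, (G.degree v:ℝ)^2 := by linarith
    calc 2 * Real.sqrt 3 * n = Real.sqrt 3 / 2 * (4*n) := by ring
      _ ≤ Real.sqrt 3 / 2 * ∑ v : V, (G.degree v:ℝ)^2 :=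
          mul_le_mul_of_nonneg_left h1 h34.le
      _ ≤ EUS G := hEUS1
  refine ⟨hmain, ?_, ?_⟩
  · intro heq
    have hS : ∑ v : V, (G.degree v:ℝ)^2 ≤ 4*n := by
      by_contra hc
      push_neg at hc
      have h2 := mul_lt_mul_of_pos_left hc h34
      have h3 : Real.sqrt 3 / 2 * (4*(n:ℝ)) = 2 * Real.sqrt 3 * n := by ring
      rw [heq] at hEUS1
      linarith
    have hzero : ∑ v : V, ((G.degree v : ℝ) - 2)^2 = 0 := by linarith
    have hreg : ∀ v, G.degree v = 2 := by
      intro v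
      have hz := (Finset.sum_eq_zero_iff_of_nonneg (fun i _ => sq_nonneg _)).mp hzero v
        (Finset.mem_univ v)
      have : (G.degree v : ℝ) = 2 := by nlinarith [hz]
      exact_mod_cast this
    exact two_regular_iso G n hn hcard hconn hreg
  · rintro ⟨f⟩
    have hreg : ∀ v, G.degree v = 2 := fun v => by
      rw [← iso_degree f v, cyc_degree hn]
    have hconst : EUS G = ∑ e ∈ G.edgeFinset, (2 * Real.sqrt 3) := by
      apply Finset.sum_congr rfl
      intro e _
      induction e with
      | _ a b =>
        show eusWeight G s(a,b) = 2 * Real.sqrt 3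
        simp only [eusWeight, Sym2.lift_mk]
        rw [hreg a, hreg b]
        rw [show (((2:ℕ):ℝ))^2 + (((2:ℕ):ℝ))^2 + ((2:ℕ):ℝ) * ((2:ℕ):ℝ) = 2^2*3 by push_cast; norm_num]
        rw [Real.sqrt_mul (by positivity), Real.sqrt_sq (by norm_num)]
    rw [hconst, Finset.sum_const, hedge, nsmul_eq_mul]
    ring
end

section
/- Let H₁ be the unicyclic graph of order n obtained from a cycle C_g (3 ≤ g ≤ n−2) by attaching, at a single vertex of the cycle, k ≥ 0 pendant paths of length 1 and ℓ ≥ 0 pendant paths of length at least 2 (so that the attachment vertex has degree k+ℓ+2). Then EUS(H₁) = (ℓ+2)√((k+ℓ+2)² + 2(k+ℓ+2) + 4) + ℓ√7 + k√((k+ℓ+2)² + (k+ℓ+2) + 1) + (n − k − 2ℓ − 2)√12. -/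
open scoped Classical
open Finset

/-- Starting index (offset) of the `t`-th long pendant path in the graph `H₁`:
the cycle uses vertices `0,…,g-1`, the `k` pendant (length-one) neighbours of the hub `0` are
`g,…,g+k-1`, and the `t`-th pendant path of length `m t ≥ 2` occupies the `m t` consecutive
vertices starting at `pathOffset g k m t`. -/
def pathOffset {ℓ : ℕ} (g k : ℕ) (m : Fin ℓ → ℕ) (t : Fin ℓ) : ℕ :=
  g + k + ∑ s ∈ Finset.univ.filter (fun s => s < t), m s

section aux
variable {n g k ℓ : ℕ} {m : Fin ℓ → ℕ}

lemma pathOffset_ge (t : Fin ℓ) : g + k ≤ pathOffset g k m t :=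
  Nat.le_add_right _ _

lemma pathOffset_add_le {t t' : Fin ℓ} (h : t < t') :
    pathOffset g k m t + m t ≤ pathOffset g k m t' := by
  unfold pathOffset
  have ht : t ∉ univ.filter (fun s => s < t) := by simp
  have hsub : insert t (univ.filter (fun s => s < t)) ⊆ univ.filter (fun s => s < t') := by
    intro s hs
    simp only [mem_insert, mem_filter, mem_univ, true_and] at *
    rcases hs with rfl | hs
    · exact h
    · exact lt_trans hs h
  have := Finset.sum_le_sum_of_subset (f := m) hsub
  rw [Finset.sum_insert ht] at this
  omega

lemma pathOffset_add_le_n (hn : n = g + k + ∑ t, m t) (t : Fin ℓ) :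
    pathOffset g k m t + m t ≤ n := by
  unfold pathOffset
  have ht : t ∉ univ.filter (fun s => s < t) := by simp
  have hsub : insert t (univ.filter (fun s => s < t)) ⊆ univ := by
    intro s _; exact mem_univ s
  have := Finset.sum_le_sum_of_subset (f := m) hsub
  rw [Finset.sum_insert ht] at this
  omega

lemma pathOffset_succ {t t' : Fin ℓ} (h : t'.val = t.val + 1) :
    pathOffset g k m t' = pathOffset g k m t + m t := by
  unfold pathOffset
  have ht : t ∉ univ.filter (fun s => s < t) := by simp
  have : univ.filter (fun s => s < t') = insert t (univ.filter (fun s => s < t)) := by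
    ext s
    simp only [mem_insert, mem_filter, mem_univ, true_and, Fin.lt_def, Fin.ext_iff]
    omega
  rw [this, Finset.sum_insert ht]
  omega

lemma pathOffset_last {t : Fin ℓ} (h : t.val + 1 = ℓ) :
    pathOffset g k m t + m t = g + k + ∑ s, m s := by
  unfold pathOffset
  have ht : t ∉ univ.filter (fun s => s < t) := by simp
  have huniv : insert t (univ.filter (fun s => s < t)) = (univ : Finset (Fin ℓ)) := by
    ext s
    have hs := s.isLt
    simp only [mem_insert, mem_filter, mem_univ, true_and, Fin.lt_def, Fin.ext_iff, iff_true]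
    omega
  have hsum : ∑ s, m s = m t + ∑ s ∈ univ.filter (fun s => s < t), m s := by
    conv_lhs => rw [← huniv]
    rw [Finset.sum_insert ht]
  omega

lemma exists_path (hn : n = g + k + ∑ t, m t) {v : ℕ} (h1 : g + k ≤ v) (h2 : v < n) :
    ∃ t, pathOffset g k m t ≤ v ∧ v < pathOffset g k m t + m t := by
  have hl : 0 < ℓ := by
    by_contra h
    have : ℓ = 0 := by omega
    subst this
    simp at hn
    omega
  have h0 : pathOffset g k m ⟨0, hl⟩ ≤ v := by
    have : (univ.filter (fun s => s < (⟨0, hl⟩ : Fin ℓ))) = ∅ := by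
      ext s; simp [Fin.lt_def]
    simp [pathOffset, this, h1]
  set S := univ.filter (fun t : Fin ℓ => pathOffset g k m t ≤ v) with hS
  have hSne : S.Nonempty := ⟨⟨0, hl⟩, by simp [hS, h0]⟩
  obtain ⟨t, htS, htmax⟩ := S.exists_max_image (fun t => t.val) hSne
  refine ⟨t, (mem_filter.mp htS).2, ?_⟩
  by_contra hcon
  push_neg at hcon
  by_cases hlast : t.val + 1 = ℓ
  · have := pathOffset_last (g := g) (k := k) (m := m) hlast
    omega
  · have ht' : t.val + 1 < ℓ := by omega
    have := pathOffset_succ (g := g) (k := k) (m := m) (t := t) (t' := ⟨t.val+1, ht'⟩) rfl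
    have hmem : (⟨t.val+1, ht'⟩ : Fin ℓ) ∈ S := by
      simp only [hS, mem_filter, mem_univ, true_and]
      omega
    have := htmax _ hmem
    simp at this

lemma path_unique {t t' : Fin ℓ} {v : ℕ}
    (h1 : pathOffset g k m t ≤ v) (h2 : v < pathOffset g k m t + m t)
    (h1' : pathOffset g k m t' ≤ v) (h2' : v < pathOffset g k m t' + m t') : t = t' := by
  rcases lt_trichotomy t t' with h | h | h
  · have := pathOffset_add_le (g := g) (k := k) (m := m) h; omega
  · exact h
  · have := pathOffset_add_le (g := g) (k := k) (m := m) h; omega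

end aux

/-- The unicyclic graph `H₁` of order `n`: a cycle on the vertices `0,…,g-1`, with `k` pendant
paths of length `1` (the vertices `g,…,g+k-1`) and `ℓ` pendant paths of lengths `m t ≥ 2`
(`t : Fin ℓ`), all attached at the hub vertex `0` (which then has degree `k + ℓ + 2`). -/
def H1 (n g k : ℕ) {ℓ : ℕ} (m : Fin ℓ → ℕ) : SimpleGraph (Fin n) :=
  SimpleGraph.fromRel (fun i j =>
    -- edges of the cycle `0 — 1 — ⋯ — (g-1) — 0`
    (j.val = i.val + 1 ∧ i.val + 1 < g) ∨ (i.val = 0 ∧ j.val = g - 1) ∨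
    -- the `k` pendant edges at the hub
    (i.val = 0 ∧ g ≤ j.val ∧ j.val < g + k) ∨
    -- first edge of each long pendant path
    (∃ t : Fin ℓ, i.val = 0 ∧ j.val = pathOffset g k m t) ∨
    -- internal edges of each long pendant path
    (∃ t : Fin ℓ, j.val = i.val + 1 ∧ pathOffset g k m t ≤ i.val ∧
      i.val + 1 < pathOffset g k m t + m t))


section deg
variable {n g k ℓ : ℕ} {m : Fin ℓ → ℕ}

lemma H1_adj_iff {a b : Fin n} :
    (H1 n g k m).Adj a b ↔ a.val ≠ b.val ∧
      (((b.val = a.val + 1 ∧ a.val + 1 < g) ∨ (a.val = 0 ∧ b.val = g - 1) ∨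
        (a.val = 0 ∧ g ≤ b.val ∧ b.val < g + k) ∨
        (∃ t : Fin ℓ, a.val = 0 ∧ b.val = pathOffset g k m t) ∨
        (∃ t : Fin ℓ, b.val = a.val + 1 ∧ pathOffset g k m t ≤ a.val ∧
          a.val + 1 < pathOffset g k m t + m t)) ∨
       ((a.val = b.val + 1 ∧ b.val + 1 < g) ∨ (b.val = 0 ∧ a.val = g - 1) ∨
        (b.val = 0 ∧ g ≤ a.val ∧ a.val < g + k) ∨
        (∃ t : Fin ℓ, b.val = 0 ∧ a.val = pathOffset g k m t) ∨
        (∃ t : Fin ℓ, a.val = b.val + 1 ∧ pathOffset g k m t ≤ b.val ∧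
          b.val + 1 < pathOffset g k m t + m t))) := by
  simp [H1, SimpleGraph.fromRel_adj, ne_eq, Fin.ext_iff]

lemma degree_eq_card {G : SimpleGraph (Fin n)} {v : Fin n} {T : Finset ℕ}
    (h : ∀ w : Fin n, G.Adj v w ↔ w.val ∈ T) (hT : ∀ j ∈ T, j < n) :
    G.degree v = T.card := by
  rw [← SimpleGraph.card_neighborFinset_eq_degree]
  apply Finset.card_bij (fun w _ => w.val)
  · intro w hw
    simp only [SimpleGraph.mem_neighborFinset] at hw
    exact (h w).mp hw
  · intro a _ b _ hab
    exact Fin.ext hab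
  · intro j hj
    exact ⟨⟨j, hT j hj⟩, by simp [SimpleGraph.mem_neighborFinset, (h ⟨j, hT j hj⟩), hj], rfl⟩

end deg

section deg2
variable {n g k ℓ : ℕ} {m : Fin ℓ → ℕ}

lemma pathOffset_injective (hm : ∀ t, 2 ≤ m t) :
    Function.Injective (pathOffset g k m) := by
  intro t t' h
  by_contra hne
  rcases lt_or_gt_of_ne hne with hlt | hlt
  · have := pathOffset_add_le (g := g) (k := k) (m := m) hlt
    have := hm t; omega
  · have := pathOffset_add_le (g := g) (k := k) (m := m) hlt
    have := hm t'; omega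

lemma card_filter_pair {x y N : ℕ} (hxy : x ≠ y) (hx : x < N) (hy : y < N) :
    ((Finset.range N).filter (fun j => j = x ∨ j = y)).card = 2 := by
  have h : (Finset.range N).filter (fun j => j = x ∨ j = y) = {x, y} := by
    ext j
    simp only [mem_filter, mem_range, mem_insert, mem_singleton]
    omega
  rw [h, Finset.card_insert_of_notMem (by simp [hxy]), Finset.card_singleton]

lemma card_filter_single {x N : ℕ} (hx : x < N) :
    ((Finset.range N).filter (fun j => j = x)).card = 1 := by
  have h : (Finset.range N).filter (fun j => j = x) = {x} := by
    ext j
    simp only [mem_filter, mem_range, mem_singleton]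
    omega
  rw [h, Finset.card_singleton]

lemma deg_hub (hg : 3 ≤ g) (hm : ∀ t, 2 ≤ m t) (hn : n = g + k + ∑ t, m t)
    (v : Fin n) (hv : v.val = 0) : (H1 n g k m).degree v = k + ℓ + 2 := by
  have hPn : ∀ t, pathOffset g k m t < n := by
    intro t
    have := pathOffset_add_le_n (m := m) hn t
    have := hm t; omega
  have hge : ∀ t, g + k ≤ pathOffset g k m t := fun t => pathOffset_ge t
  set T : Finset ℕ := insert 1 (insert (g - 1) ((Finset.Ico g (g + k)) ∪
      (Finset.univ.image (fun t => pathOffset g k m t)))) with hT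
  have hmem : ∀ j, j ∈ T ↔ (j = 1 ∨ j = g - 1 ∨ (g ≤ j ∧ j < g + k) ∨
      ∃ t, j = pathOffset g k m t) := by
    intro j
    simp only [hT, mem_insert, mem_union, mem_Ico, mem_image, mem_univ, true_and]
    constructor
    · rintro (h | h | h | ⟨t, ht⟩)
      · exact Or.inl h
      · exact Or.inr (Or.inl h)
      · exact Or.inr (Or.inr (Or.inl h))
      · exact Or.inr (Or.inr (Or.inr ⟨t, ht.symm⟩))
    · rintro (h | h | h | ⟨t, ht⟩)
      · exact Or.inl h
      · exact Or.inr (Or.inl h)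
      · exact Or.inr (Or.inr (Or.inl h))
      · exact Or.inr (Or.inr (Or.inr ⟨t, ht.symm⟩))
  have hQ : ∀ w : Fin n, (H1 n g k m).Adj v w ↔ w.val ∈ T := by
    intro w
    rw [H1_adj_iff, hmem]
    constructor
    · rintro ⟨hne, (⟨h1, h2⟩ | ⟨h1, h2⟩ | ⟨h1, h2, h3⟩ | ⟨t, h1, h2⟩ | ⟨t, h1, h2, h3⟩) |
        (⟨h1, h2⟩ | ⟨h1, h2⟩ | ⟨h1, h2, h3⟩ | ⟨t, h1, h2⟩ | ⟨t, h1, h2, h3⟩)⟩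
      · left; omega
      · right; left; omega
      · right; right; left; omega
      · right; right; right; exact ⟨t, h2⟩
      · have := hge t; omega
      · omega
      · omega
      · omega
      · have := hge t; omega
      · omega
    · rintro (h | h | ⟨h1, h2⟩ | ⟨t, ht⟩)
      · exact ⟨by omega, Or.inl (Or.inl ⟨by omega, by omega⟩)⟩
      · exact ⟨by omega, Or.inl (Or.inr (Or.inl ⟨hv, h⟩))⟩
      · exact ⟨by omega, Or.inl (Or.inr (Or.inr (Or.inl ⟨hv, h1, h2⟩)))⟩
      · have := hge t
        exact ⟨by omega, Or.inl (Or.inr (Or.inr (Or.inr (Or.inl ⟨t, hv, ht⟩))))⟩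
  have hTlt : ∀ j ∈ T, j < n := by
    intro j hj
    rw [hmem] at hj
    rcases hj with h | h | h | ⟨t, ht⟩
    · omega
    · omega
    · omega
    · have := hPn t; omega
  rw [degree_eq_card hQ hTlt]
  have hdisj : Disjoint (Finset.Ico g (g + k))
      (Finset.univ.image (fun t => pathOffset g k m t)) := by
    rw [Finset.disjoint_left]
    rintro x hx hx'
    simp only [mem_Ico] at hx
    simp only [mem_image, mem_univ, true_and] at hx'
    obtain ⟨t, ht⟩ := hx'
    have := hge t; omega
  have hcard_im : (Finset.univ.image (fun t => pathOffset g k m t)).card = ℓ := by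
    rw [Finset.card_image_of_injective _ (pathOffset_injective hm), Finset.card_univ,
      Fintype.card_fin]
  rw [hT, Finset.card_insert_of_notMem, Finset.card_insert_of_notMem,
    Finset.card_union_of_disjoint hdisj, Nat.card_Ico, hcard_im]
  · omega
  · simp only [mem_union, mem_Ico, mem_image, mem_univ, true_and, not_or]
    refine ⟨by omega, ?_⟩
    rintro ⟨t, ht⟩
    have := hge t; omega
  · simp only [mem_insert, mem_union, mem_Ico, mem_image, mem_univ, true_and, not_or]
    refine ⟨by omega, by omega, ?_⟩
    rintro ⟨t, ht⟩
    have := hge t; omega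

lemma deg_cycle_mid (hg : 3 ≤ g) (hn : n = g + k + ∑ t, m t)
    (v : Fin n) (h1 : 1 ≤ v.val) (h2 : v.val + 1 < g) : (H1 n g k m).degree v = 2 := by
  have hge : ∀ t, g + k ≤ pathOffset g k m t := fun t => pathOffset_ge t
  have hgn : g ≤ n := by omega
  have hQ : ∀ w : Fin n, (H1 n g k m).Adj v w ↔
      w.val ∈ ({v.val - 1, v.val + 1} : Finset ℕ) := by
    intro w
    rw [H1_adj_iff]
    simp only [Finset.mem_insert, Finset.mem_singleton]
    constructor
    · rintro ⟨hne, (⟨ha, hb⟩ | ⟨ha, hb⟩ | ⟨ha, hb, hc⟩ | ⟨t, ha, hb⟩ | ⟨t, ha, hb, hc⟩) |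
        (⟨ha, hb⟩ | ⟨ha, hb⟩ | ⟨ha, hb, hc⟩ | ⟨t, ha, hb⟩ | ⟨t, ha, hb, hc⟩)⟩
      · omega
      · omega
      · omega
      · omega
      · have := hge t; omega
      · omega
      · omega
      · omega
      · have := hge t; omega
      · have := hge t; omega
    · rintro (h | h)
      · exact ⟨by omega, Or.inr (Or.inl ⟨by omega, by omega⟩)⟩
      · exact ⟨by omega, Or.inl (Or.inl ⟨by omega, by omega⟩)⟩
  rw [degree_eq_card hQ (by intro j hj; simp only [Finset.mem_insert, Finset.mem_singleton] at hj; omega)]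
  exact Finset.card_pair (by omega)

lemma deg_cycle_top (hg : 3 ≤ g) (hn : n = g + k + ∑ t, m t)
    (v : Fin n) (hv : v.val = g - 1) : (H1 n g k m).degree v = 2 := by
  have hge : ∀ t, g + k ≤ pathOffset g k m t := fun t => pathOffset_ge t
  have hgn : g ≤ n := by omega
  have hQ : ∀ w : Fin n, (H1 n g k m).Adj v w ↔
      w.val ∈ ({g - 2, 0} : Finset ℕ) := by
    intro w
    rw [H1_adj_iff]
    simp only [Finset.mem_insert, Finset.mem_singleton]
    constructor
    · rintro ⟨hne, (⟨ha, hb⟩ | ⟨ha, hb⟩ | ⟨ha, hb, hc⟩ | ⟨t, ha, hb⟩ | ⟨t, ha, hb, hc⟩) |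
        (⟨ha, hb⟩ | ⟨ha, hb⟩ | ⟨ha, hb, hc⟩ | ⟨t, ha, hb⟩ | ⟨t, ha, hb, hc⟩)⟩
      · omega
      · omega
      · omega
      · omega
      · have := hge t; omega
      · omega
      · omega
      · omega
      · have := hge t; omega
      · have := hge t; omega
    · rintro (h | h)
      · exact ⟨by omega, Or.inr (Or.inl ⟨by omega, by omega⟩)⟩
      · exact ⟨by omega, Or.inr (Or.inr (Or.inl ⟨by omega, by omega⟩))⟩
  rw [degree_eq_card hQ (by intro j hj; simp only [Finset.mem_insert, Finset.mem_singleton] at hj; omega)]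
  exact Finset.card_pair (by omega)

lemma deg_pendant (hg : 3 ≤ g) (hn : n = g + k + ∑ t, m t)
    (v : Fin n) (h1 : g ≤ v.val) (h2 : v.val < g + k) : (H1 n g k m).degree v = 1 := by
  have hge : ∀ t, g + k ≤ pathOffset g k m t := fun t => pathOffset_ge t
  have hQ : ∀ w : Fin n, (H1 n g k m).Adj v w ↔ w.val ∈ ({0} : Finset ℕ) := by
    intro w
    rw [H1_adj_iff]
    simp only [Finset.mem_singleton]
    constructor
    · rintro ⟨hne, (⟨ha, hb⟩ | ⟨ha, hb⟩ | ⟨ha, hb, hc⟩ | ⟨t, ha, hb⟩ | ⟨t, ha, hb, hc⟩) |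
        (⟨ha, hb⟩ | ⟨ha, hb⟩ | ⟨ha, hb, hc⟩ | ⟨t, ha, hb⟩ | ⟨t, ha, hb, hc⟩)⟩
      · omega
      · omega
      · omega
      · omega
      · have := hge t; omega
      · omega
      · omega
      · omega
      · have := hge t; omega
      · have := hge t; omega
    · rintro h
      exact ⟨by omega, Or.inr (Or.inr (Or.inr (Or.inl ⟨by omega, by omega, by omega⟩)))⟩
  rw [degree_eq_card hQ (by intro j hj; simp only [Finset.mem_singleton] at hj; omega)]
  exact Finset.card_singleton _

lemma deg_path_start (hg : 3 ≤ g) (hm : ∀ t, 2 ≤ m t) (hn : n = g + k + ∑ t, m t)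
    (t : Fin ℓ) (v : Fin n) (hv : v.val = pathOffset g k m t) :
    (H1 n g k m).degree v = 2 := by
  have hge : ∀ t, g + k ≤ pathOffset g k m t := fun t => pathOffset_ge t
  have hPn : ∀ t', pathOffset g k m t' + m t' ≤ n := fun t' => pathOffset_add_le_n hn t'
  have hmt := hm t
  have hQ : ∀ w : Fin n, (H1 n g k m).Adj v w ↔
      w.val ∈ ({0, pathOffset g k m t + 1} : Finset ℕ) := by
    intro w
    rw [H1_adj_iff]
    simp only [Finset.mem_insert, Finset.mem_singleton]
    constructor
    · rintro ⟨hne, (⟨ha, hb⟩ | ⟨ha, hb⟩ | ⟨ha, hb, hc⟩ | ⟨t', ha, hb⟩ | ⟨t', ha, hb, hc⟩) |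
        (⟨ha, hb⟩ | ⟨ha, hb⟩ | ⟨ha, hb, hc⟩ | ⟨t', ha, hb⟩ | ⟨t', ha, hb, hc⟩)⟩
      · have := hge t; omega
      · have := hge t; omega
      · have := hge t; omega
      · have := hge t; omega
      · have heq : t' = t := path_unique hb (by omega) (by omega) (by omega)
        subst heq; omega
      · have := hge t; omega
      · have := hge t; omega
      · have := hge t; omega
      · omega
      · have h1' : pathOffset g k m t' ≤ v.val := by omega
        have h2' : v.val < pathOffset g k m t' + m t' := by omega
        have heq : t' = t := path_unique h1' h2' (by omega) (by omega)
        subst heq; omega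
    · rintro (h | h)
      · exact ⟨by have := hge t; omega,
          Or.inr (Or.inr (Or.inr (Or.inr (Or.inl ⟨t, by omega, by omega⟩))))⟩
      · exact ⟨by omega,
          Or.inl (Or.inr (Or.inr (Or.inr (Or.inr ⟨t, by omega, by omega, by omega⟩))))⟩
  rw [degree_eq_card hQ (by
    intro j hj; simp only [Finset.mem_insert, Finset.mem_singleton] at hj
    have := hPn t; omega)]
  exact Finset.card_pair (by omega)

lemma deg_path_mid (hg : 3 ≤ g) (hm : ∀ t, 2 ≤ m t) (hn : n = g + k + ∑ t, m t)
    (t : Fin ℓ) (v : Fin n) (h1 : pathOffset g k m t < v.val)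
    (h2 : v.val + 1 < pathOffset g k m t + m t) : (H1 n g k m).degree v = 2 := by
  have hge : ∀ t, g + k ≤ pathOffset g k m t := fun t => pathOffset_ge t
  have hPn : ∀ t', pathOffset g k m t' + m t' ≤ n := fun t' => pathOffset_add_le_n hn t'
  have hmt := hm t
  have hQ : ∀ w : Fin n, (H1 n g k m).Adj v w ↔
      w.val ∈ ({v.val - 1, v.val + 1} : Finset ℕ) := by
    intro w
    rw [H1_adj_iff]
    simp only [Finset.mem_insert, Finset.mem_singleton]
    constructor
    · rintro ⟨hne, (⟨ha, hb⟩ | ⟨ha, hb⟩ | ⟨ha, hb, hc⟩ | ⟨t', ha, hb⟩ | ⟨t', ha, hb, hc⟩) |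
        (⟨ha, hb⟩ | ⟨ha, hb⟩ | ⟨ha, hb, hc⟩ | ⟨t', ha, hb⟩ | ⟨t', ha, hb, hc⟩)⟩
      · have := hge t; omega
      · have := hge t; omega
      · have := hge t; omega
      · have := hge t; omega
      · have heq : t' = t := path_unique hb (by omega) (by omega) (by omega)
        subst heq; omega
      · have := hge t; omega
      · have := hge t; omega
      · have := hge t; omega
      · have hmt' := hm t'
        have heq : t' = t := path_unique (g := g) (k := k) (m := m) (v := v.val) (by omega) (by omega) (by omega) (by omega)
        subst heq; omega
      · have heq : t' = t := path_unique (g := g) (k := k) (m := m) (v := v.val) (by omega) (by omega) (by omega) (by omega)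
        subst heq; omega
    · rintro (h | h)
      · exact ⟨by omega,
          Or.inr (Or.inr (Or.inr (Or.inr (Or.inr ⟨t, by omega, by omega, by omega⟩))))⟩
      · exact ⟨by omega,
          Or.inl (Or.inr (Or.inr (Or.inr (Or.inr ⟨t, by omega, by omega, by omega⟩))))⟩
  rw [degree_eq_card hQ (by
    intro j hj; simp only [Finset.mem_insert, Finset.mem_singleton] at hj
    have := hPn t; omega)]
  exact Finset.card_pair (by omega)

lemma deg_path_end (hg : 3 ≤ g) (hm : ∀ t, 2 ≤ m t) (hn : n = g + k + ∑ t, m t)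
    (t : Fin ℓ) (v : Fin n) (hv : v.val = pathOffset g k m t + m t - 1) :
    (H1 n g k m).degree v = 1 := by
  have hge : ∀ t, g + k ≤ pathOffset g k m t := fun t => pathOffset_ge t
  have hPn : ∀ t', pathOffset g k m t' + m t' ≤ n := fun t' => pathOffset_add_le_n hn t'
  have hmt := hm t
  have hQ : ∀ w : Fin n, (H1 n g k m).Adj v w ↔ w.val ∈ ({v.val - 1} : Finset ℕ) := by
    intro w
    rw [H1_adj_iff]
    simp only [Finset.mem_singleton]
    constructor
    · rintro ⟨hne, (⟨ha, hb⟩ | ⟨ha, hb⟩ | ⟨ha, hb, hc⟩ | ⟨t', ha, hb⟩ | ⟨t', ha, hb, hc⟩) |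
        (⟨ha, hb⟩ | ⟨ha, hb⟩ | ⟨ha, hb, hc⟩ | ⟨t', ha, hb⟩ | ⟨t', ha, hb, hc⟩)⟩
      · have := hge t; omega
      · have := hge t; omega
      · have := hge t; omega
      · have := hge t; omega
      · have heq : t' = t := path_unique hb (by omega) (by omega) (by omega)
        subst heq; omega
      · have := hge t; omega
      · have := hge t; omega
      · have := hge t; omega
      · have hmt' := hm t'
        have heq : t' = t := path_unique (g := g) (k := k) (m := m) (v := v.val) (by omega) (by omega) (by omega) (by omega)
        subst heq; omega
      · have heq : t' = t := path_unique (g := g) (k := k) (m := m) (v := v.val) (by omega) (by omega) (by omega) (by omega)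
        subst heq; omega
    · rintro h
      exact ⟨by omega,
        Or.inr (Or.inr (Or.inr (Or.inr (Or.inr ⟨t, by omega, by omega, by omega⟩))))⟩
  rw [degree_eq_card hQ (by
    intro j hj; simp only [Finset.mem_singleton] at hj
    have := hPn t; omega)]
  exact Finset.card_singleton _

end deg2


lemma sum_attachFin {M : Type*} [AddCommMonoid M] {N : ℕ} {s : Finset ℕ}
    (h : ∀ j ∈ s, j < N) (f : Fin N → M) (w : ℕ → M)
    (hw : ∀ v : Fin N, v.val ∈ s → f v = w v.val) :
    ∑ v ∈ s.attachFin h, f v = ∑ j ∈ s, w j := by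
  refine Finset.sum_bij (fun v _ => v.val) ?_ ?_ ?_ ?_
  · intro v hv
    rwa [Finset.mem_attachFin] at hv
  · intro a _ b _ hab
    exact Fin.ext hab
  · intro j hj
    exact ⟨⟨j, h j hj⟩, by simp [Finset.mem_attachFin, hj], rfl⟩
  · intro v hv
    exact hw v (by rwa [Finset.mem_attachFin] at hv)


/-- The Euler Sombor index of the unicyclic graph `H₁` of order `n`, girth `g` (with
`3 ≤ g ≤ n-2`), having `k ≥ 0` pendant paths of length `1` and `ℓ ≥ 0` pendant paths of
length at least `2` attached at one vertex of the cycle, equals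
`(ℓ+2)√((k+ℓ+2)² + 2(k+ℓ+2) + 4) + ℓ√7 + k√((k+ℓ+2)² + (k+ℓ+2) + 1) + (n-k-2ℓ-2)√12`. -/
theorem eus_H1 (n g k ℓ : ℕ) (m : Fin ℓ → ℕ) (hg : 3 ≤ g) (hgn : g + 2 ≤ n)
    (hm : ∀ t, 2 ≤ m t) (hn : n = g + k + ∑ t, m t) :
    EUS (H1 n g k m) =
      ((ℓ : ℝ) + 2) * Real.sqrt (((k : ℝ) + ℓ + 2)^2 + 2 * ((k : ℝ) + ℓ + 2) + 4) +
        (ℓ : ℝ) * Real.sqrt 7 +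
        (k : ℝ) * Real.sqrt (((k : ℝ) + ℓ + 2)^2 + ((k : ℝ) + ℓ + 2) + 1) +
        ((n : ℝ) - k - 2 * ℓ - 2) * Real.sqrt 12 := by
  have hn0 : 0 < n := by omega
  have hge : ∀ t, g + k ≤ pathOffset g k m t := fun t => pathOffset_ge t
  have hPmn : ∀ t, pathOffset g k m t + m t ≤ n := fun t => pathOffset_add_le_n hn t
  have hPlt : ∀ t, pathOffset g k m t < n := fun t => by have := hPmn t; have := hm t; omega
  set G := H1 n g k m with hG
  set z : Fin n := ⟨0, hn0⟩ with hz
  set succe : Fin n → Sym2 (Fin n) :=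
    fun v => s(v, (⟨(v.val + 1) % n, Nat.mod_lt _ hn0⟩ : Fin n)) with hsucce
  have hsucc_eq : ∀ (v : Fin n) (h : v.val + 1 < n),
      succe v = s(v, (⟨v.val + 1, h⟩ : Fin n)) := by
    intro v h
    have hx : (⟨(v.val + 1) % n, Nat.mod_lt _ hn0⟩ : Fin n) = ⟨v.val + 1, h⟩ :=
      Fin.ext (by simpa using Nat.mod_eq_of_lt h)
    simp only [hsucce, hx]
  have hA0 : ∀ j ∈ Finset.range (g - 1), j < n := by
    intro j hj; simp only [mem_range] at hj; omega
  have hC0 : ∀ j ∈ Finset.Ico g (g + k), j < n := by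
    intro j hj; simp only [mem_Ico] at hj; omega
  have hE0 : ∀ t : Fin ℓ, ∀ j ∈ Finset.Ico (pathOffset g k m t)
      (pathOffset g k m t + m t - 1), j < n := by
    intro t j hj; simp only [mem_Ico] at hj; have := hPmn t; omega
  set A : Finset (Sym2 (Fin n)) := ((Finset.range (g - 1)).attachFin hA0).image succe with hA
  set B : Finset (Sym2 (Fin n)) := {s(z, (⟨g - 1, by omega⟩ : Fin n))} with hB
  set C : Finset (Sym2 (Fin n)) :=
    ((Finset.Ico g (g + k)).attachFin hC0).image (fun w => s(z, w)) with hC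
  set D : Finset (Sym2 (Fin n)) :=
    (Finset.univ : Finset (Fin ℓ)).image
      (fun t => s(z, (⟨pathOffset g k m t, hPlt t⟩ : Fin n))) with hD
  set E : Finset (Sym2 (Fin n)) :=
    (Finset.univ : Finset (Fin ℓ)).biUnion (fun t =>
      ((Finset.Ico (pathOffset g k m t) (pathOffset g k m t + m t - 1)).attachFin
        (hE0 t)).image succe) with hE
  have hedge : G.edgeFinset = A ∪ B ∪ C ∪ D ∪ E := by
    ext e
    induction e using Sym2.ind with
    | _ a b =>
    rw [SimpleGraph.mem_edgeFinset, SimpleGraph.mem_edgeSet, hG, H1_adj_iff]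
    simp only [hA, hB, hC, hD, hE, Finset.mem_union, Finset.mem_image, Finset.mem_biUnion,
      Finset.mem_attachFin, Finset.mem_singleton, Finset.mem_range, Finset.mem_Ico,
      Finset.mem_univ, true_and]
    constructor
    · rintro ⟨hne, (⟨h1, h2⟩ | ⟨h1, h2⟩ | ⟨h1, h2, h3⟩ | ⟨t, h1, h2⟩ | ⟨t, h1, h2, h3⟩) |
        (⟨h1, h2⟩ | ⟨h1, h2⟩ | ⟨h1, h2, h3⟩ | ⟨t, h1, h2⟩ | ⟨t, h1, h2, h3⟩)⟩
      · refine Or.inl (Or.inl (Or.inl (Or.inl ⟨a, by omega, ?_⟩)))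
        rw [hsucc_eq a (by omega)]
        have hb : (⟨a.val + 1, by omega⟩ : Fin n) = b := Fin.ext (by simp only [Fin.val_mk]; omega)
        rw [hb]
      · refine Or.inl (Or.inl (Or.inl (Or.inr ?_)))
        have ha : z = a := Fin.ext (by simp only [hz, Fin.val_mk]; omega)
        have hb : (⟨g - 1, by omega⟩ : Fin n) = b := Fin.ext (by simp only [Fin.val_mk]; omega)
        rw [ha, hb]
      · refine Or.inl (Or.inl (Or.inr ⟨b, ⟨h2, h3⟩, ?_⟩))
        have ha : z = a := Fin.ext (by simp only [hz, Fin.val_mk]; omega)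
        rw [ha, Sym2.eq_swap]
      · refine Or.inl (Or.inr ⟨t, ?_⟩)
        have ha : z = a := Fin.ext (by simp only [hz, Fin.val_mk]; omega)
        have hb : (⟨pathOffset g k m t, hPlt t⟩ : Fin n) = b := Fin.ext (by simp only [Fin.val_mk]; omega)
        rw [ha, hb]
      · refine Or.inr ⟨t, a, by omega, ?_⟩
        rw [hsucc_eq a (by have := hPmn t; omega)]
        have hb : (⟨a.val + 1, by have := hPmn t; omega⟩ : Fin n) = b := Fin.ext (by simp only [Fin.val_mk]; omega)
        rw [hb]
      · refine Or.inl (Or.inl (Or.inl (Or.inl ⟨b, by omega, ?_⟩)))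
        rw [hsucc_eq b (by omega)]
        have ha : (⟨b.val + 1, by omega⟩ : Fin n) = a := Fin.ext (by simp only [Fin.val_mk]; omega)
        rw [ha, Sym2.eq_swap]
      · refine Or.inl (Or.inl (Or.inl (Or.inr ?_)))
        have hb : z = b := Fin.ext (by simp only [hz, Fin.val_mk]; omega)
        have ha : (⟨g - 1, by omega⟩ : Fin n) = a := Fin.ext (by simp only [Fin.val_mk]; omega)
        rw [hb, ha, Sym2.eq_swap]
      · refine Or.inl (Or.inl (Or.inr ⟨a, ⟨h2, h3⟩, ?_⟩))
        have hb : z = b := Fin.ext (by simp only [hz, Fin.val_mk]; omega)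
        rw [hb, Sym2.eq_swap]
      · refine Or.inl (Or.inr ⟨t, ?_⟩)
        have hb : z = b := Fin.ext (by simp only [hz, Fin.val_mk]; omega)
        have ha : (⟨pathOffset g k m t, hPlt t⟩ : Fin n) = a := Fin.ext (by simp only [Fin.val_mk]; omega)
        rw [hb, ha, Sym2.eq_swap]
      · refine Or.inr ⟨t, b, by omega, ?_⟩
        rw [hsucc_eq b (by have := hPmn t; omega)]
        have ha : (⟨b.val + 1, by have := hPmn t; omega⟩ : Fin n) = a := Fin.ext (by simp only [Fin.val_mk]; omega)
        rw [ha, Sym2.eq_swap]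
    · rintro ((((⟨v, hv, hveq⟩ | hveq) | ⟨w, hw, hveq⟩) | ⟨t, hveq⟩) | ⟨t, v, hv, hveq⟩)
      · rw [hsucc_eq v (by omega)] at hveq
        rw [Sym2.eq_iff] at hveq
        simp only [Fin.ext_iff, Fin.val_mk] at hveq
        rcases hveq with ⟨hva, hvb⟩ | ⟨hvb, hva⟩
        · exact ⟨by omega, Or.inl (Or.inl ⟨by omega, by omega⟩)⟩
        · exact ⟨by omega, Or.inr (Or.inl ⟨by omega, by omega⟩)⟩
      · rw [Sym2.eq_iff] at hveq
        simp only [hz, Fin.ext_iff, Fin.val_mk] at hveq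
        rcases hveq with ⟨hva, hvb⟩ | ⟨hvb, hva⟩
        · exact ⟨by omega, Or.inl (Or.inr (Or.inl ⟨by omega, by omega⟩))⟩
        · exact ⟨by omega, Or.inr (Or.inr (Or.inl ⟨by omega, by omega⟩))⟩
      · rw [Sym2.eq_iff] at hveq
        simp only [hz, Fin.ext_iff, Fin.val_mk] at hveq
        rcases hveq with ⟨hva, hvb⟩ | ⟨hvb, hva⟩
        · exact ⟨by omega, Or.inl (Or.inr (Or.inr (Or.inl ⟨by omega, by omega, by omega⟩)))⟩
        · exact ⟨by omega, Or.inr (Or.inr (Or.inr (Or.inl ⟨by omega, by omega, by omega⟩)))⟩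
      · rw [Sym2.eq_iff] at hveq
        simp only [hz, Fin.ext_iff, Fin.val_mk] at hveq
        have hgt := hge t
        rcases hveq with ⟨hva, hvb⟩ | ⟨hvb, hva⟩
        · exact ⟨by omega, Or.inl (Or.inr (Or.inr (Or.inr (Or.inl ⟨t, by omega, by omega⟩))))⟩
        · exact ⟨by omega, Or.inr (Or.inr (Or.inr (Or.inr (Or.inl ⟨t, by omega, by omega⟩))))⟩
      · have hb1 : v.val + 1 < n := by have := hPmn t; omega
        rw [hsucc_eq v hb1] at hveq
        rw [Sym2.eq_iff] at hveq
        simp only [Fin.ext_iff, Fin.val_mk] at hveq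
        rcases hveq with ⟨hva, hvb⟩ | ⟨hvb, hva⟩
        · exact ⟨by omega,
            Or.inl (Or.inr (Or.inr (Or.inr (Or.inr ⟨t, by omega, by omega, by omega⟩))))⟩
        · exact ⟨by omega,
            Or.inr (Or.inr (Or.inr (Or.inr (Or.inr ⟨t, by omega, by omega, by omega⟩))))⟩
  have hz0 : z.val = 0 := rfl
  have hdec : ∀ u v x y : Fin n, s(u,v) = s(x,y) →
      (u.val = x.val ∧ v.val = y.val) ∨ (u.val = y.val ∧ v.val = x.val) := by
    intro u v x y h
    rw [Sym2.eq_iff] at h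
    rcases h with ⟨h1, h2⟩ | ⟨h1, h2⟩
    · exact Or.inl ⟨congrArg Fin.val h1, congrArg Fin.val h2⟩
    · exact Or.inr ⟨congrArg Fin.val h1, congrArg Fin.val h2⟩
  have hW : ∀ a b : Fin n, eusWeight G s(a, b) =
      Real.sqrt ((G.degree a : ℝ)^2 + (G.degree b : ℝ)^2 +
        (G.degree a : ℝ) * (G.degree b : ℝ)) := fun _ _ => rfl
  set W2 : ℝ := Real.sqrt (((k : ℝ) + ℓ + 2)^2 + 2 * ((k : ℝ) + ℓ + 2) + 4) with hW2
  set W1 : ℝ := Real.sqrt (((k : ℝ) + ℓ + 2)^2 + ((k : ℝ) + ℓ + 2) + 1) with hW1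
  have h22 : ∀ a b : Fin n, G.degree a = 2 → G.degree b = 2 →
      eusWeight G s(a, b) = Real.sqrt 12 := by
    intro a b ha hb
    rw [hW, ha, hb]; norm_num
  have h21 : ∀ a b : Fin n, G.degree a = 2 → G.degree b = 1 →
      eusWeight G s(a, b) = Real.sqrt 7 := by
    intro a b ha hb
    rw [hW, ha, hb]; norm_num
  have hD2 : ∀ a b : Fin n, G.degree a = k + ℓ + 2 → G.degree b = 2 →
      eusWeight G s(a, b) = W2 := by
    intro a b ha hb
    rw [hW, ha, hb, hW2]
    congr 1
    push_cast
    ring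
  have hD1 : ∀ a b : Fin n, G.degree a = k + ℓ + 2 → G.degree b = 1 →
      eusWeight G s(a, b) = W1 := by
    intro a b ha hb
    rw [hW, ha, hb, hW1]
    congr 1
    push_cast
    ring
  have hdz : G.degree z = k + ℓ + 2 := deg_hub hg hm hn z hz0
  have hdeg2path : ∀ (t : Fin ℓ) (v : Fin n), pathOffset g k m t ≤ v.val →
      v.val + 1 < pathOffset g k m t + m t → G.degree v = 2 := by
    intro t v h1 h2
    rcases eq_or_lt_of_le h1 with he | hlt
    · exact deg_path_start hg hm hn t v he.symm
    · exact deg_path_mid hg hm hn t v hlt h2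
  have hdeg2cyc : ∀ v : Fin n, 1 ≤ v.val → v.val < g → G.degree v = 2 := by
    intro v h1 h2
    rcases Nat.lt_or_ge (v.val + 1) g with h | h
    · exact deg_cycle_mid hg hn v h1 h
    · exact deg_cycle_top hg hn v (by omega)
  -- disjointness
  have hdAB : Disjoint A B := by
    rw [Finset.disjoint_left]
    rintro e heA heB
    simp only [hA, Finset.mem_image, Finset.mem_attachFin, Finset.mem_range] at heA
    simp only [hB, Finset.mem_singleton] at heB
    obtain ⟨v, hv, hveq⟩ := heA
    rw [hsucc_eq v (by omega), heB] at hveq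
    rcases hdec _ _ _ _ hveq with ⟨h1, h2⟩ | ⟨h1, h2⟩ <;>
      simp only [Fin.val_mk, hz0] at h1 h2 <;> omega
  have hdABC : Disjoint (A ∪ B) C := by
    rw [Finset.disjoint_left]
    rintro e heAB heC
    simp only [hC, Finset.mem_image, Finset.mem_attachFin, Finset.mem_Ico] at heC
    obtain ⟨w, hw, hweq⟩ := heC
    rcases Finset.mem_union.mp heAB with heA | heB
    · simp only [hA, Finset.mem_image, Finset.mem_attachFin, Finset.mem_range] at heA
      obtain ⟨v, hv, hveq⟩ := heA
      rw [hsucc_eq v (by omega), ← hweq] at hveq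
      rcases hdec _ _ _ _ hveq with ⟨h1, h2⟩ | ⟨h1, h2⟩ <;>
        simp only [Fin.val_mk, hz0] at h1 h2 <;> omega
    · simp only [hB, Finset.mem_singleton] at heB
      rw [heB] at hweq
      rcases hdec _ _ _ _ hweq with ⟨h1, h2⟩ | ⟨h1, h2⟩ <;>
        simp only [Fin.val_mk, hz0] at h1 h2 <;> omega
  have hdABCD : Disjoint (A ∪ B ∪ C) D := by
    rw [Finset.disjoint_left]
    rintro e heABC heD
    simp only [hD, Finset.mem_image, Finset.mem_univ, true_and] at heD
    obtain ⟨t, hteq⟩ := heD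
    have hgt := hge t
    rcases Finset.mem_union.mp heABC with heAB | heC
    · rcases Finset.mem_union.mp heAB with heA | heB
      · simp only [hA, Finset.mem_image, Finset.mem_attachFin, Finset.mem_range] at heA
        obtain ⟨v, hv, hveq⟩ := heA
        rw [hsucc_eq v (by omega), ← hteq] at hveq
        rcases hdec _ _ _ _ hveq with ⟨h1, h2⟩ | ⟨h1, h2⟩ <;>
          simp only [Fin.val_mk, hz0] at h1 h2 <;> omega
      · simp only [hB, Finset.mem_singleton] at heB
        rw [heB] at hteq
        rcases hdec _ _ _ _ hteq with ⟨h1, h2⟩ | ⟨h1, h2⟩ <;>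
          simp only [Fin.val_mk, hz0] at h1 h2 <;> omega
    · simp only [hC, Finset.mem_image, Finset.mem_attachFin, Finset.mem_Ico] at heC
      obtain ⟨w, hw, hweq⟩ := heC
      rw [← hteq] at hweq
      rcases hdec _ _ _ _ hweq with ⟨h1, h2⟩ | ⟨h1, h2⟩ <;>
        simp only [Fin.val_mk, hz0] at h1 h2 <;> omega
  have hdABCDE : Disjoint (A ∪ B ∪ C ∪ D) E := by
    rw [Finset.disjoint_left]
    rintro e heABCD heE
    simp only [hE, Finset.mem_biUnion, Finset.mem_image, Finset.mem_attachFin, Finset.mem_Ico,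
      Finset.mem_univ, true_and] at heE
    obtain ⟨t, v, hv, hveq⟩ := heE
    have hgt := hge t
    have hPt := hPmn t
    rw [hsucc_eq v (by omega)] at hveq
    rcases Finset.mem_union.mp heABCD with heABC | heD
    · rcases Finset.mem_union.mp heABC with heAB | heC
      · rcases Finset.mem_union.mp heAB with heA | heB
        · simp only [hA, Finset.mem_image, Finset.mem_attachFin, Finset.mem_range] at heA
          obtain ⟨v', hv', hveq'⟩ := heA
          rw [hsucc_eq v' (by omega), ← hveq] at hveq'
          rcases hdec _ _ _ _ hveq' with ⟨h1, h2⟩ | ⟨h1, h2⟩ <;>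
            simp only [Fin.val_mk, hz0] at h1 h2 <;> omega
        · simp only [hB, Finset.mem_singleton] at heB
          rw [heB] at hveq
          rcases hdec _ _ _ _ hveq with ⟨h1, h2⟩ | ⟨h1, h2⟩ <;>
            simp only [Fin.val_mk, hz0] at h1 h2 <;> omega
      · simp only [hC, Finset.mem_image, Finset.mem_attachFin, Finset.mem_Ico] at heC
        obtain ⟨w, hw, hweq⟩ := heC
        rw [← hveq] at hweq
        rcases hdec _ _ _ _ hweq with ⟨h1, h2⟩ | ⟨h1, h2⟩ <;>
          simp only [Fin.val_mk, hz0] at h1 h2 <;> omega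
    · simp only [hD, Finset.mem_image, Finset.mem_univ, true_and] at heD
      obtain ⟨t', hteq⟩ := heD
      have hgt' := hge t'
      rw [← hveq] at hteq
      rcases hdec _ _ _ _ hteq with ⟨h1, h2⟩ | ⟨h1, h2⟩ <;>
        simp only [Fin.val_mk, hz0] at h1 h2 <;> omega
  have hpdE : (↑(Finset.univ : Finset (Fin ℓ)) : Set (Fin ℓ)).PairwiseDisjoint (fun t =>
      ((Finset.Ico (pathOffset g k m t) (pathOffset g k m t + m t - 1)).attachFin
        (hE0 t)).image succe) := by
    intro t _ t' _ htt'
    rw [Function.onFun, Finset.disjoint_left]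
    rintro e he he'
    simp only [Finset.mem_image, Finset.mem_attachFin, Finset.mem_Ico] at he he'
    obtain ⟨v, hv, hveq⟩ := he
    obtain ⟨v', hv', hveq'⟩ := he'
    have hPt := hPmn t
    have hPt' := hPmn t'
    rw [hsucc_eq v (by omega)] at hveq
    rw [hsucc_eq v' (by omega), ← hveq] at hveq'
    have hvv : v'.val = v.val := by
      rcases hdec _ _ _ _ hveq' with ⟨h1, h2⟩ | ⟨h1, h2⟩ <;>
        simp only [Fin.val_mk] at h1 h2 <;> omega
    exact htt' (path_unique (g := g) (k := k) (m := m) (v := v.val)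
      (by omega) (by omega) (by omega) (by omega)).symm
  -- sums
  have hsumA : ∑ e ∈ A, eusWeight G e = W2 + ((g : ℝ) - 2) * Real.sqrt 12 := by
    rw [hA]
    rw [Finset.sum_image (by
      intro v hv v' hv' hveq
      simp only [Finset.mem_coe, Finset.mem_attachFin, Finset.mem_range] at hv hv'
      rw [hsucc_eq v (by omega), hsucc_eq v' (by omega)] at hveq
      rcases hdec _ _ _ _ hveq with ⟨h1, h2⟩ | ⟨h1, h2⟩ <;>
        simp only [Fin.val_mk] at h1 h2 <;> exact Fin.ext (by omega))]
    rw [sum_attachFin _ _ (fun j => if j = 0 then W2 else Real.sqrt 12) (by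
      intro v hv
      rw [Finset.mem_range] at hv
      have hvn : v.val + 1 < n := by omega
      rw [hsucc_eq v hvn]
      by_cases hv0 : v.val = 0
      · rw [if_pos hv0]
        refine hD2 _ _ (deg_hub hg hm hn v hv0) (hdeg2cyc _ (by simp only [Fin.val_mk]; omega) (by simp only [Fin.val_mk]; omega))
      · rw [if_neg hv0]
        refine h22 _ _ (hdeg2cyc _ (by omega) (by omega))
          (hdeg2cyc _ (by simp only [Fin.val_mk]; omega) (by simp only [Fin.val_mk]; omega)))]
    have hsplit : Finset.range (g - 1) = insert 0 (Finset.Ico 1 (g - 1)) := by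
      ext j
      simp only [Finset.mem_range, Finset.mem_insert, Finset.mem_Ico]
      omega
    rw [hsplit, Finset.sum_insert (by simp), if_pos rfl]
    have hconst : ∑ j ∈ Finset.Ico 1 (g - 1), (if j = 0 then W2 else Real.sqrt 12) =
        ∑ j ∈ Finset.Ico 1 (g - 1), Real.sqrt 12 := by
      refine Finset.sum_congr rfl (fun j hj => ?_)
      rw [Finset.mem_Ico] at hj
      rw [if_neg (by omega)]
    rw [hconst, Finset.sum_const, Nat.card_Ico]
    have hgc : ((g - 1 - 1 : ℕ) : ℝ) = (g : ℝ) - 2 := by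
      have h' : g - 1 - 1 = g - 2 := by omega
      rw [h', Nat.cast_sub (by omega : 2 ≤ g)]
      norm_num
    rw [nsmul_eq_mul, hgc]
  have hsumB : ∑ e ∈ B, eusWeight G e = W2 := by
    rw [hB, Finset.sum_singleton]
    exact hD2 _ _ hdz (deg_cycle_top hg hn _ (by simp))
  have hsumC : ∑ e ∈ C, eusWeight G e = (k : ℝ) * W1 := by
    rw [hC]
    rw [Finset.sum_image (by
      intro w hw w' hw' hweq
      simp only [Finset.mem_coe, Finset.mem_attachFin, Finset.mem_Ico] at hw hw'
      rcases hdec _ _ _ _ hweq with ⟨h1, h2⟩ | ⟨h1, h2⟩ <;>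
        simp only [hz0] at h1 h2 <;> exact Fin.ext (by omega))]
    rw [sum_attachFin _ _ (fun _ => W1) (by
      intro w hw
      rw [Finset.mem_Ico] at hw
      exact hD1 _ _ hdz (deg_pendant hg hn w hw.1 hw.2))]
    have hkc : g + k - g = k := by omega
    rw [Finset.sum_const, Nat.card_Ico, hkc, nsmul_eq_mul]
  have hsumD : ∑ e ∈ D, eusWeight G e = (ℓ : ℝ) * W2 := by
    rw [hD]
    rw [Finset.sum_image (by
      intro t _ t' _ hteq
      have hgt := hge t
      have hgt' := hge t'
      rcases hdec _ _ _ _ hteq with ⟨h1, h2⟩ | ⟨h1, h2⟩ <;>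
        simp only [Fin.val_mk, hz0] at h1 h2
      · exact pathOffset_injective (g := g) (k := k) hm (by omega)
      · omega)]
    rw [Finset.sum_congr rfl (fun t _ => hD2 _ _ hdz
      (deg_path_start hg hm hn t _ (by simp)))]
    rw [Finset.sum_const, Finset.card_univ, Fintype.card_fin, nsmul_eq_mul]
  have hsumE : ∑ e ∈ E, eusWeight G e =
      (ℓ : ℝ) * Real.sqrt 7 + ((∑ t, (m t : ℝ)) - 2 * ℓ) * Real.sqrt 12 := by
    rw [hE, Finset.sum_biUnion hpdE]
    have hEt : ∀ t : Fin ℓ, ∑ e ∈ ((Finset.Ico (pathOffset g k m t)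
        (pathOffset g k m t + m t - 1)).attachFin (hE0 t)).image succe, eusWeight G e =
        Real.sqrt 7 + ((m t : ℝ) - 2) * Real.sqrt 12 := by
      intro t
      have hPt := hPmn t
      have hmt := hm t
      rw [Finset.sum_image (by
        intro v hv v' hv' hveq
        simp only [Finset.mem_coe, Finset.mem_attachFin, Finset.mem_Ico] at hv hv'
        rw [hsucc_eq v (by omega), hsucc_eq v' (by omega)] at hveq
        rcases hdec _ _ _ _ hveq with ⟨h1, h2⟩ | ⟨h1, h2⟩ <;>
          simp only [Fin.val_mk] at h1 h2 <;> exact Fin.ext (by omega))]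
      rw [sum_attachFin _ _ (fun j => if j = pathOffset g k m t + m t - 2 then Real.sqrt 7
        else Real.sqrt 12) (by
        intro v hv
        rw [Finset.mem_Ico] at hv
        have hvn : v.val + 1 < n := by omega
        rw [hsucc_eq v hvn]
        have hdv : G.degree v = 2 := hdeg2path t v hv.1 (by omega)
        by_cases hlast : v.val = pathOffset g k m t + m t - 2
        · rw [if_pos hlast]
          exact h21 _ _ hdv (deg_path_end hg hm hn t _ (by simp only [Fin.val_mk]; omega))
        · rw [if_neg hlast]
          exact h22 _ _ hdv (hdeg2path t _ (by simp only [Fin.val_mk]; omega) (by simp only [Fin.val_mk]; omega)))]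
      have hsplit : Finset.Ico (pathOffset g k m t) (pathOffset g k m t + m t - 1) =
          insert (pathOffset g k m t + m t - 2)
            (Finset.Ico (pathOffset g k m t) (pathOffset g k m t + m t - 2)) := by
        ext j
        simp only [Finset.mem_Ico, Finset.mem_insert]
        omega
      rw [hsplit, Finset.sum_insert (by simp only [Finset.mem_Ico]; omega), if_pos rfl]
      have hconst : ∑ j ∈ Finset.Ico (pathOffset g k m t) (pathOffset g k m t + m t - 2),
          (if j = pathOffset g k m t + m t - 2 then Real.sqrt 7 else Real.sqrt 12) =
          ∑ j ∈ Finset.Ico (pathOffset g k m t) (pathOffset g k m t + m t - 2),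
            Real.sqrt 12 := by
        refine Finset.sum_congr rfl (fun j hj => ?_)
        rw [Finset.mem_Ico] at hj
        rw [if_neg (by omega)]
      rw [hconst, Finset.sum_const, Nat.card_Ico, nsmul_eq_mul]
      have : ((pathOffset g k m t + m t - 2 - pathOffset g k m t : ℕ) : ℝ) = (m t : ℝ) - 2 := by
        have h1 : pathOffset g k m t + m t - 2 - pathOffset g k m t = m t - 2 := by omega
        rw [h1, Nat.cast_sub hmt]
        norm_num
      rw [this]
    rw [Finset.sum_congr rfl (fun t _ => hEt t), Finset.sum_add_distrib, Finset.sum_const,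
      Finset.card_univ, Fintype.card_fin, nsmul_eq_mul, ← Finset.sum_mul,
      Finset.sum_sub_distrib, Finset.sum_const, Finset.card_univ, Fintype.card_fin,
      nsmul_eq_mul]
    ring
  have hEUS : EUS G = ∑ e ∈ G.edgeFinset, eusWeight G e := rfl
  rw [hEUS, hedge, Finset.sum_union hdABCDE, Finset.sum_union hdABCD, Finset.sum_union hdABC,
    Finset.sum_union hdAB, hsumA, hsumB, hsumC, hsumD, hsumE]
  have hnr : (n : ℝ) = (g : ℝ) + k + ∑ t, (m t : ℝ) := by
    rw [hn]; push_cast; ring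
  rw [hnr]
  ring
end

section
/- Let H₁ be the unicyclic graph of order n obtained from a cycle C_g (3 ≤ g ≤ n−2) by attaching, at a single vertex of the cycle, k ≥ 0 pendant paths of length 1 and ℓ ≥ 0 pendant paths of length at least 2 (with k + ℓ ≥ 1 since g ≤ n−2). Then EUS(H₁) ≥ 3√19 + 2(n−4)√3 + √7, with equality if and only if H₁ is isomorphic to C_{n,g}, the graph obtained by attaching a single pendant path P_{n−g} to one vertex of the cycle C_g. -/
open scoped Classical

namespace Aux

variable {ℓ : ℕ} (g k : ℕ) (m : Fin ℓ → ℕ)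

lemma off_ge (t : Fin ℓ) : g + k ≤ pathOffset g k m t := Nat.le_add_right _ _

lemma off_add_le (t : Fin ℓ) : pathOffset g k m t + m t ≤ g + k + ∑ s, m s := by
  have h : insert t (Finset.univ.filter (fun s => s < t)) ⊆ Finset.univ := by
    intro s _; exact Finset.mem_univ s
  have h2 := Finset.sum_le_sum_of_subset (f := m) h
  rw [Finset.sum_insert (by simp)] at h2
  unfold pathOffset
  omega

lemma off_mono {t t' : Fin ℓ} (h : t < t') :
    pathOffset g k m t + m t ≤ pathOffset g k m t' := by
  have hsub : insert t (Finset.univ.filter (fun s => s < t)) ⊆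
      Finset.univ.filter (fun s => s < t') := by
    intro s hs
    rcases Finset.mem_insert.1 hs with rfl | hs
    · simp [h]
    · simp only [Finset.mem_filter, Finset.mem_univ, true_and] at hs ⊢
      exact hs.trans h
  have h2 := Finset.sum_le_sum_of_subset (f := m) hsub
  rw [Finset.sum_insert (by simp)] at h2
  unfold pathOffset
  omega

lemma off_zero (h : 0 < ℓ) : pathOffset g k m ⟨0, h⟩ = g + k := by
  unfold pathOffset
  have : Finset.univ.filter (fun s => s < (⟨0, h⟩ : Fin ℓ)) = ∅ := by
    ext s; simp [Fin.lt_def]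
  rw [this]; simp

lemma off_succ (t : Fin ℓ) (h : t.val + 1 < ℓ) :
    pathOffset g k m ⟨t.val + 1, h⟩ = pathOffset g k m t + m t := by
  unfold pathOffset
  have : Finset.univ.filter (fun s => s < (⟨t.val + 1, h⟩ : Fin ℓ)) =
      insert t (Finset.univ.filter (fun s => s < t)) := by
    ext s
    simp only [Finset.mem_filter, Finset.mem_univ, true_and, Finset.mem_insert, Fin.lt_def]
    constructor
    · intro hs
      rcases Nat.lt_succ_iff_lt_or_eq.1 hs with h' | h'
      · exact Or.inr h'
      · exact Or.inl (Fin.ext h')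
    · rintro (rfl | hs)
      · omega
      · omega
  rw [this, Finset.sum_insert (by simp)]
  omega

lemma off_last (t : Fin ℓ) (h : t.val + 1 = ℓ) :
    pathOffset g k m t + m t = g + k + ∑ s, m s := by
  unfold pathOffset
  have : Finset.univ = insert t (Finset.univ.filter (fun s => s < t)) := by
    ext s
    simp only [Finset.mem_filter, Finset.mem_univ, true_and, Finset.mem_insert, Fin.lt_def,
      iff_true]
    constructor
    · intro
      have := s.isLt
      rcases Nat.lt_or_ge s.val t.val with h' | h'
      · exact Or.inr h'
      · exact Or.inl (Fin.ext (by omega))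
    · intro _; trivial
  conv_rhs => rw [this, Finset.sum_insert (by simp)]
  omega

lemma off_cover (hm : ∀ t, 1 ≤ m t) {v : ℕ} (hv : g + k ≤ v)
    (hvn : v < g + k + ∑ s, m s) :
    ∃ t, pathOffset g k m t ≤ v ∧ v < pathOffset g k m t + m t := by
  have hl : 0 < ℓ := by
    by_contra h
    have : ℓ = 0 := by omega
    subst this
    simp at hvn
    omega
  set S := Finset.univ.filter (fun t : Fin ℓ => pathOffset g k m t ≤ v) with hS
  have hne : S.Nonempty := ⟨⟨0, hl⟩, by simp [hS, off_zero g k m hl, hv]⟩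
  set t := S.max' hne with ht
  have htS : t ∈ S := S.max'_mem hne
  have ht1 : pathOffset g k m t ≤ v := by simpa [hS] using htS
  refine ⟨t, ht1, ?_⟩
  by_contra hcon
  push_neg at hcon
  rcases Nat.lt_or_ge (t.val + 1) ℓ with h' | h'
  · have hsucc := off_succ g k m t h'
    have : (⟨t.val + 1, h'⟩ : Fin ℓ) ∈ S := by simp [hS]; omega
    have := S.le_max' _ this
    rw [← ht] at this
    simp only [Fin.le_def] at this
    omega
  · have h'' : t.val + 1 = ℓ := by have := t.isLt; omega
    have := off_last g k m t h''
    omega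

lemma off_uniq {t t' : Fin ℓ} {v : ℕ}
    (h1 : pathOffset g k m t ≤ v) (h2 : v < pathOffset g k m t + m t)
    (h3 : pathOffset g k m t' ≤ v) (h4 : v < pathOffset g k m t' + m t') : t = t' := by
  rcases lt_trichotomy t t' with h | h | h
  · have := off_mono g k m h; omega
  · exact h
  · have := off_mono g k m h; omega


def rel (g k : ℕ) {ℓ : ℕ} (m : Fin ℓ → ℕ) (a b : ℕ) : Prop :=
  (b = a + 1 ∧ a + 1 < g) ∨ (a = 0 ∧ b = g - 1) ∨ (a = 0 ∧ g ≤ b ∧ b < g + k) ∨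
  (∃ t : Fin ℓ, a = 0 ∧ b = pathOffset g k m t) ∨
  (∃ t : Fin ℓ, b = a + 1 ∧ pathOffset g k m t ≤ a ∧ a + 1 < pathOffset g k m t + m t)

lemma H1_adj {n g k ℓ : ℕ} {m : Fin ℓ → ℕ} (i j : Fin n) :
    (H1 n g k m).Adj i j ↔ i ≠ j ∧ (rel g k m i.val j.val ∨ rel g k m j.val i.val) := by
  rw [H1, SimpleGraph.fromRel_adj]
  rfl


lemma off_inj {ℓ : ℕ} (g k : ℕ) (m : Fin ℓ → ℕ) (hm : ∀ t, 2 ≤ m t) :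
    Function.Injective (fun t => pathOffset g k m t) := by
  intro t t' h
  simp only at h
  rcases lt_trichotomy t t' with hlt | he | hlt
  · have := off_mono g k m hlt; have := hm t; omega
  · exact he
  · have := off_mono g k m hlt; have := hm t'; omega

lemma card_filter_val {n : ℕ} (P : ℕ → Prop) :
    (Finset.univ.filter (fun u : Fin n => P u.val)).card =
      ((Finset.range n).filter P).card := by
  apply Finset.card_bij (fun u _ => u.val)
  · intro u hu
    simp only [Finset.mem_filter, Finset.mem_univ, true_and] at hu
    simp [u.isLt, hu]
  · intro a _ b _ h
    exact Fin.ext h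
  · intro b hb
    simp only [Finset.mem_filter, Finset.mem_range] at hb
    exact ⟨⟨b, hb.1⟩, by simp [hb.2], rfl⟩

lemma degree_filter {n g k ℓ : ℕ} {m : Fin ℓ → ℕ} (v : Fin n) :
    (H1 n g k m).degree v =
      ((Finset.range n).filter
        (fun b => v.val ≠ b ∧ (rel g k m v.val b ∨ rel g k m b v.val))).card := by
  rw [SimpleGraph.degree, SimpleGraph.neighborFinset_eq_filter]
  apply Finset.card_bij (fun u _ => u.val)
  · intro u hu
    simp only [Finset.mem_filter, Finset.mem_univ, true_and] at hu
    rw [H1_adj] at hu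
    simp only [Finset.mem_filter, Finset.mem_range]
    refine ⟨u.isLt, ?_, hu.2⟩
    intro h
    exact hu.1 (Fin.ext h)
  · intro a _ b _ h
    exact Fin.ext h
  · intro b hb
    simp only [Finset.mem_filter, Finset.mem_range] at hb
    refine ⟨⟨b, hb.1⟩, ?_, rfl⟩
    simp only [Finset.mem_filter, Finset.mem_univ, true_and]
    rw [H1_adj]
    exact ⟨fun h => hb.2.1 (congrArg Fin.val h), hb.2.2⟩

section DegLemmas

variable {n g k ℓ : ℕ} {m : Fin ℓ → ℕ}

lemma degree_hub (hg : 3 ≤ g) (hm : ∀ t, 2 ≤ m t) (hn : n = g + k + ∑ t, m t)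
    (hgn : g + 2 ≤ n) (v : Fin n) (hv : v.val = 0) :
    (H1 n g k m).degree v = k + ℓ + 2 := by
  have hoffle : ∀ t : Fin ℓ, pathOffset g k m t + m t ≤ n := fun t => by
    have := off_add_le g k m t; omega
  rw [degree_filter, hv]
  have hset : ((Finset.range n).filter
      (fun b => (0:ℕ) ≠ b ∧ (rel g k m 0 b ∨ rel g k m b 0))) =
      insert 1 (insert (g-1) (Finset.Ico g (g+k) ∪
        Finset.image (fun t => pathOffset g k m t) Finset.univ)) := by
    ext b
    simp only [Finset.mem_filter, Finset.mem_range, Finset.mem_insert, Finset.mem_union,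
      Finset.mem_Ico, Finset.mem_image, Finset.mem_univ, true_and]
    constructor
    · rintro ⟨hbn, hb0, hr | hr⟩ <;> simp only [rel] at hr
      · rcases hr with ⟨h1,h2⟩ | ⟨_,h⟩ | ⟨_,h2,h3⟩ | ⟨t,_,h⟩ | ⟨t,h1,h2,h3⟩
        · left; omega
        · right; left; exact h
        · right; right; left; exact ⟨h2, h3⟩
        · right; right; right; exact ⟨t, h.symm⟩
        · have := off_ge g k m t; omega
      · rcases hr with ⟨h1,h2⟩ | ⟨h,h'⟩ | ⟨h,h2,h3⟩ | ⟨t,h,h'⟩ | ⟨t,h1,h2,h3⟩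
        · omega
        · omega
        · omega
        · omega
        · omega
    · intro hb
      rcases hb with rfl | rfl | ⟨h1,h2⟩ | ⟨t, rfl⟩
      · refine ⟨by omega, by omega, Or.inl ?_⟩
        exact Or.inl ⟨rfl, by omega⟩
      · refine ⟨by omega, by omega, Or.inl ?_⟩
        exact Or.inr (Or.inl ⟨rfl, rfl⟩)
      · refine ⟨by omega, by omega, Or.inl ?_⟩
        exact Or.inr (Or.inr (Or.inl ⟨rfl, h1, h2⟩))
      · have h1 := hm t; have h2 := off_ge g k m t; have h3 := hoffle t
        refine ⟨by omega, by omega, Or.inl ?_⟩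
        exact Or.inr (Or.inr (Or.inr (Or.inl ⟨t, rfl, rfl⟩)))
  rw [hset]
  have hBcard : (Finset.image (fun t => pathOffset g k m t) (Finset.univ : Finset (Fin ℓ))).card = ℓ := by
    rw [Finset.card_image_of_injective _ (off_inj g k m hm), Finset.card_univ, Fintype.card_fin]
  have hgoff : ∀ t : Fin ℓ, g + k ≤ pathOffset g k m t := fun t => off_ge g k m t
  have h1ni : (1:ℕ) ∉ insert (g-1) (Finset.Ico g (g+k) ∪
      Finset.image (fun t => pathOffset g k m t) Finset.univ) := by
    simp only [Finset.mem_insert, Finset.mem_union, Finset.mem_Ico, Finset.mem_image,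
      Finset.mem_univ, true_and, not_or]
    refine ⟨by omega, by omega, ?_⟩
    rintro ⟨t, h⟩
    have := hgoff t; omega
  have h2ni : (g-1:ℕ) ∉ Finset.Ico g (g+k) ∪
      Finset.image (fun t => pathOffset g k m t) Finset.univ := by
    simp only [Finset.mem_union, Finset.mem_Ico, Finset.mem_image,
      Finset.mem_univ, true_and, not_or]
    refine ⟨by omega, ?_⟩
    rintro ⟨t, h⟩
    have := hgoff t; omega
  have hdisj : Disjoint (Finset.Ico g (g+k))
      (Finset.image (fun t => pathOffset g k m t) Finset.univ) := by
    rw [Finset.disjoint_left]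
    intro a ha hb
    simp only [Finset.mem_Ico] at ha
    simp only [Finset.mem_image, Finset.mem_univ, true_and] at hb
    rcases hb with ⟨t, rfl⟩
    have := hgoff t; omega
  rw [Finset.card_insert_of_notMem h1ni, Finset.card_insert_of_notMem h2ni,
    Finset.card_union_of_disjoint hdisj, Nat.card_Ico, hBcard]
  omega

lemma card_pair {x y : ℕ} (h : x ≠ y) : ({x, y} : Finset ℕ).card = 2 := by
  rw [Finset.card_insert_of_notMem (by simp [h]), Finset.card_singleton]

lemma degree_cycle (hg : 3 ≤ g) (hm : ∀ t, 2 ≤ m t) (hn : n = g + k + ∑ t, m t)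
    (hgn : g + 2 ≤ n) (v : Fin n) (hv1 : 1 ≤ v.val) (hv2 : v.val < g) :
    (H1 n g k m).degree v = 2 := by
  have hoffge : ∀ u : Fin ℓ, g + k ≤ pathOffset g k m u := fun u => off_ge g k m u
  rw [degree_filter]
  set a := v.val with ha
  rcases Nat.lt_or_ge a (g-1) with hcase | hcase
  · have hset : ((Finset.range n).filter
        (fun b => a ≠ b ∧ (rel g k m a b ∨ rel g k m b a))) = {a-1, a+1} := by
      ext b
      simp only [Finset.mem_filter, Finset.mem_range, Finset.mem_insert, Finset.mem_singleton]
      constructor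
      · rintro ⟨hbn, hne, hr | hr⟩ <;> simp only [rel] at hr
        · rcases hr with ⟨h1,h2⟩ | ⟨h1,h2⟩ | ⟨h1,h2,h3⟩ | ⟨t,h1,h2⟩ | ⟨t,h1,h2,h3⟩
          · omega
          · omega
          · omega
          · omega
          · have := hoffge t; omega
        · rcases hr with ⟨h1,h2⟩ | ⟨h1,h2⟩ | ⟨h1,h2,h3⟩ | ⟨t,h1,h2⟩ | ⟨t,h1,h2,h3⟩
          · omega
          · omega
          · omega
          · have := hoffge t; omega
          · have := hoffge t; omega
      · intro hb
        rcases hb with rfl | rfl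
        · exact ⟨by omega, by omega, Or.inr (Or.inl ⟨by omega, by omega⟩)⟩
        · exact ⟨by omega, by omega, Or.inl (Or.inl ⟨by omega, by omega⟩)⟩
    rw [hset]; exact card_pair (by omega)
  · have hag : a = g - 1 := by omega
    have hset : ((Finset.range n).filter
        (fun b => a ≠ b ∧ (rel g k m a b ∨ rel g k m b a))) = {0, g-2} := by
      ext b
      simp only [Finset.mem_filter, Finset.mem_range, Finset.mem_insert, Finset.mem_singleton]
      constructor
      · rintro ⟨hbn, hne, hr | hr⟩ <;> simp only [rel] at hr
        · rcases hr with ⟨h1,h2⟩ | ⟨h1,h2⟩ | ⟨h1,h2,h3⟩ | ⟨t,h1,h2⟩ | ⟨t,h1,h2,h3⟩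
          · omega
          · omega
          · omega
          · omega
          · have := hoffge t; omega
        · rcases hr with ⟨h1,h2⟩ | ⟨h1,h2⟩ | ⟨h1,h2,h3⟩ | ⟨t,h1,h2⟩ | ⟨t,h1,h2,h3⟩
          · omega
          · omega
          · omega
          · have := hoffge t; omega
          · have := hoffge t; omega
      · intro hb
        rcases hb with rfl | rfl
        · exact ⟨by omega, by omega, Or.inr (Or.inr (Or.inl ⟨by omega, by omega⟩))⟩
        · exact ⟨by omega, by omega, Or.inr (Or.inl ⟨by omega, by omega⟩)⟩
    rw [hset]; exact card_pair (by omega)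

lemma degree_pend (hg : 3 ≤ g) (hm : ∀ t, 2 ≤ m t) (hn : n = g + k + ∑ t, m t)
    (hgn : g + 2 ≤ n) (v : Fin n) (hv1 : g ≤ v.val) (hv2 : v.val < g + k) :
    (H1 n g k m).degree v = 1 := by
  have hoffge : ∀ u : Fin ℓ, g + k ≤ pathOffset g k m u := fun u => off_ge g k m u
  rw [degree_filter]
  set a := v.val with ha
  have hset : ((Finset.range n).filter
      (fun b => a ≠ b ∧ (rel g k m a b ∨ rel g k m b a))) = {0} := by
    ext b
    simp only [Finset.mem_filter, Finset.mem_range, Finset.mem_singleton]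
    constructor
    · rintro ⟨hbn, hne, hr | hr⟩ <;> simp only [rel] at hr
      · rcases hr with ⟨h1,h2⟩ | ⟨h1,h2⟩ | ⟨h1,h2,h3⟩ | ⟨t,h1,h2⟩ | ⟨t,h1,h2,h3⟩
        · omega
        · omega
        · omega
        · omega
        · have := hoffge t; omega
      · rcases hr with ⟨h1,h2⟩ | ⟨h1,h2⟩ | ⟨h1,h2,h3⟩ | ⟨t,h1,h2⟩ | ⟨t,h1,h2,h3⟩
        · omega
        · omega
        · omega
        · have := hoffge t; omega
        · have := hoffge t; omega
    · rintro rfl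
      exact ⟨by omega, by omega, Or.inr (Or.inr (Or.inr (Or.inl ⟨rfl, hv1, hv2⟩)))⟩
  rw [hset, Finset.card_singleton]

lemma degree_path_first (hg : 3 ≤ g) (hm : ∀ t, 2 ≤ m t) (hn : n = g + k + ∑ t, m t)
    (hgn : g + 2 ≤ n) (v : Fin n) (t : Fin ℓ) (hv : v.val = pathOffset g k m t) :
    (H1 n g k m).degree v = 2 := by
  have hoffge : ∀ u : Fin ℓ, g + k ≤ pathOffset g k m u := fun u => off_ge g k m u
  have hoffle : ∀ u : Fin ℓ, pathOffset g k m u + m u ≤ n := fun u => by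
    have := off_add_le g k m u; omega
  rw [degree_filter]
  set a := v.val with ha
  have hset : ((Finset.range n).filter
      (fun b => a ≠ b ∧ (rel g k m a b ∨ rel g k m b a))) = {0, a+1} := by
    ext b
    simp only [Finset.mem_filter, Finset.mem_range, Finset.mem_insert, Finset.mem_singleton]
    constructor
    · rintro ⟨hbn, hne, hr | hr⟩ <;> simp only [rel] at hr
      · rcases hr with ⟨h1,h2⟩ | ⟨h1,h2⟩ | ⟨h1,h2,h3⟩ | ⟨t',h1,h2⟩ | ⟨t',h1,h2,h3⟩
        · have := hoffge t; omega
        · have := hoffge t; omega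
        · have := hoffge t; omega
        · have := hoffge t; omega
        · omega
      · rcases hr with ⟨h1,h2⟩ | ⟨h1,h2⟩ | ⟨h1,h2,h3⟩ | ⟨t',h1,h2⟩ | ⟨t',h1,h2,h3⟩
        · have := hoffge t; omega
        · have := hoffge t; omega
        · have := hoffge t; omega
        · omega
        · exfalso
          have hmt := hm t; have hmt' := hm t'
          have : t' = t :=
            off_uniq g k m (t := t') (t' := t) (v := a) (by omega) (by omega) (by omega) (by omega)
          subst this
          omega
    · intro hb
      have hmt := hm t; have h1 := hoffge t; have h2 := hoffle t
      rcases hb with rfl | rfl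
      · exact ⟨by omega, by omega, Or.inr (Or.inr (Or.inr (Or.inr (Or.inl ⟨t, rfl, hv⟩))))⟩
      · exact ⟨by omega, by omega, Or.inl (Or.inr (Or.inr (Or.inr (Or.inr ⟨t, rfl, by omega, by omega⟩))))⟩
  rw [hset]
  exact card_pair (by have := hoffge t; omega)

lemma degree_path_mid (hg : 3 ≤ g) (hm : ∀ t, 2 ≤ m t) (hn : n = g + k + ∑ t, m t)
    (hgn : g + 2 ≤ n) (v : Fin n) (t : Fin ℓ) (hv1 : pathOffset g k m t < v.val)
    (hv2 : v.val + 1 < pathOffset g k m t + m t) :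
    (H1 n g k m).degree v = 2 := by
  have hoffge : ∀ u : Fin ℓ, g + k ≤ pathOffset g k m u := fun u => off_ge g k m u
  have hoffle : ∀ u : Fin ℓ, pathOffset g k m u + m u ≤ n := fun u => by
    have := off_add_le g k m u; omega
  rw [degree_filter]
  set a := v.val with ha
  have hset : ((Finset.range n).filter
      (fun b => a ≠ b ∧ (rel g k m a b ∨ rel g k m b a))) = {a-1, a+1} := by
    ext b
    simp only [Finset.mem_filter, Finset.mem_range, Finset.mem_insert, Finset.mem_singleton]
    constructor
    · rintro ⟨hbn, hne, hr | hr⟩ <;> simp only [rel] at hr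
      · rcases hr with ⟨h1,h2⟩ | ⟨h1,h2⟩ | ⟨h1,h2,h3⟩ | ⟨t',h1,h2⟩ | ⟨t',h1,h2,h3⟩
        · have := hoffge t; omega
        · have := hoffge t; omega
        · have := hoffge t; omega
        · have := hoffge t; omega
        · omega
      · rcases hr with ⟨h1,h2⟩ | ⟨h1,h2⟩ | ⟨h1,h2,h3⟩ | ⟨t',h1,h2⟩ | ⟨t',h1,h2,h3⟩
        · have := hoffge t; omega
        · have := hoffge t; omega
        · have := hoffge t; omega
        · exfalso
          have hmt := hm t; have hmt' := hm t'
          have : t' = t :=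
            off_uniq g k m (t := t') (t' := t) (v := a) (by omega) (by omega) (by omega) (by omega)
          subst this
          omega
        · omega
    · intro hb
      have hmt := hm t; have h1 := hoffge t; have h2 := hoffle t
      rcases hb with rfl | rfl
      · exact ⟨by omega, by omega, Or.inr (Or.inr (Or.inr (Or.inr (Or.inr ⟨t, by omega, by omega, by omega⟩))))⟩
      · exact ⟨by omega, by omega, Or.inl (Or.inr (Or.inr (Or.inr (Or.inr ⟨t, rfl, by omega, by omega⟩))))⟩
  rw [hset]
  exact card_pair (by have := hoffge t; omega)

lemma degree_path_last (hg : 3 ≤ g) (hm : ∀ t, 2 ≤ m t) (hn : n = g + k + ∑ t, m t)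
    (hgn : g + 2 ≤ n) (v : Fin n) (t : Fin ℓ) (hv : v.val + 1 = pathOffset g k m t + m t) :
    (H1 n g k m).degree v = 1 := by
  have hoffge : ∀ u : Fin ℓ, g + k ≤ pathOffset g k m u := fun u => off_ge g k m u
  have hoffle : ∀ u : Fin ℓ, pathOffset g k m u + m u ≤ n := fun u => by
    have := off_add_le g k m u; omega
  have hmt := hm t
  rw [degree_filter]
  set a := v.val with ha
  have hset : ((Finset.range n).filter
      (fun b => a ≠ b ∧ (rel g k m a b ∨ rel g k m b a))) = {a-1} := by
    ext b
    simp only [Finset.mem_filter, Finset.mem_range, Finset.mem_singleton]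
    constructor
    · rintro ⟨hbn, hne, hr | hr⟩ <;> simp only [rel] at hr
      · rcases hr with ⟨h1,h2⟩ | ⟨h1,h2⟩ | ⟨h1,h2,h3⟩ | ⟨t',h1,h2⟩ | ⟨t',h1,h2,h3⟩
        · have := hoffge t; omega
        · have := hoffge t; omega
        · have := hoffge t; omega
        · have := hoffge t; omega
        · exfalso
          have hmt' := hm t'
          have : t' = t :=
            off_uniq g k m (t := t') (t' := t) (v := a) (by omega) (by omega) (by omega) (by omega)
          subst this
          omega
      · rcases hr with ⟨h1,h2⟩ | ⟨h1,h2⟩ | ⟨h1,h2,h3⟩ | ⟨t',h1,h2⟩ | ⟨t',h1,h2,h3⟩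
        · have := hoffge t; omega
        · have := hoffge t; omega
        · have := hoffge t; omega
        · exfalso
          have hmt' := hm t'
          have : t' = t :=
            off_uniq g k m (t := t') (t' := t) (v := a) (by omega) (by omega) (by omega) (by omega)
          subst this
          omega
        · omega
    · rintro rfl
      have h1 := hoffge t; have h2 := hoffle t
      exact ⟨by omega, by omega, Or.inr (Or.inr (Or.inr (Or.inr (Or.inr ⟨t, by omega, by omega, by omega⟩))))⟩
  rw [hset, Finset.card_singleton]

end DegLemmas

noncomputable def D (g k : ℕ) {ℓ : ℕ} (m : Fin ℓ → ℕ) (v : ℕ) : ℕ :=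
  if v = 0 then k + ℓ + 2
  else if v < g then 2
  else if v < g + k then 1
  else if ∃ t : Fin ℓ, v + 1 = pathOffset g k m t + m t then 1 else 2

noncomputable def par (g k : ℕ) {ℓ : ℕ} (m : Fin ℓ → ℕ) (a : ℕ) : ℕ :=
  if (g ≤ a ∧ a < g + k) ∨ (∃ t : Fin ℓ, a = pathOffset g k m t) then 0 else a - 1

section Evals

variable {n g k ℓ : ℕ} {m : Fin ℓ → ℕ}

lemma D_zero : D g k m 0 = k + ℓ + 2 := by rw [D]; simp

lemma D_two (hg : 3 ≤ g) (h1 : 1 ≤ a) (h2 : a < g) : D g k m a = 2 := by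
  have hoffge : ∀ u : Fin ℓ, g + k ≤ pathOffset g k m u := fun u => off_ge g k m u
  rw [D, if_neg (by omega), if_pos h2]

lemma D_pend (h1 : g ≤ a) (h2 : a < g + k) (hg : 3 ≤ g) : D g k m a = 1 := by
  rw [D, if_neg (by omega), if_neg (by omega), if_pos h2]

lemma D_path2 (hg : 3 ≤ g) (hm : ∀ t, 2 ≤ m t) (t : Fin ℓ)
    (h1 : pathOffset g k m t ≤ a) (h2 : a + 1 < pathOffset g k m t + m t) :
    D g k m a = 2 := by
  have hge := off_ge g k m t
  rw [D, if_neg (by omega), if_neg (by omega), if_neg (by omega), if_neg]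
  rintro ⟨t', ht'⟩
  have hmt' := hm t'
  have : t' = t :=
    off_uniq g k m (t := t') (t' := t) (v := a) (by omega) (by omega) (by omega) (by omega)
  subst this
  omega

lemma D_path1 (hg : 3 ≤ g) (hm : ∀ t, 2 ≤ m t) (t : Fin ℓ)
    (h1 : a + 1 = pathOffset g k m t + m t) : D g k m a = 1 := by
  have hge := off_ge g k m t
  have hmt := hm t
  rw [D, if_neg (by omega), if_neg (by omega), if_neg (by omega), if_pos ⟨t, h1⟩]

lemma par_cycle (hg : 3 ≤ g) (h1 : 1 ≤ a) (h2 : a < g) : par g k m a = a - 1 := by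
  have hoffge : ∀ u : Fin ℓ, g + k ≤ pathOffset g k m u := fun u => off_ge g k m u
  rw [par, if_neg]
  rintro (⟨h3, h4⟩ | ⟨t, ht⟩)
  · omega
  · have := hoffge t; omega

lemma par_pend (h1 : g ≤ a) (h2 : a < g + k) : par g k m a = 0 := by
  rw [par, if_pos (Or.inl ⟨h1, h2⟩)]

lemma par_first (t : Fin ℓ) (h : a = pathOffset g k m t) : par g k m a = 0 := by
  rw [par, if_pos (Or.inr ⟨t, h⟩)]

lemma par_late (hg : 3 ≤ g) (hm : ∀ t, 2 ≤ m t) (t : Fin ℓ)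
    (h1 : pathOffset g k m t < a) (h2 : a < pathOffset g k m t + m t) :
    par g k m a = a - 1 := by
  have hge := off_ge g k m t
  rw [par, if_neg]
  rintro (⟨h3, h4⟩ | ⟨t', ht'⟩)
  · omega
  · have hmt' := hm t'
    have : t' = t :=
      off_uniq g k m (t := t') (t' := t) (v := a) (by omega) (by omega) (by omega) (by omega)
    subst this
    omega

lemma par_le (a : ℕ) : par g k m a ≤ a := by
  rw [par]; split <;> omega

lemma par_lt (a : ℕ) (h : 1 ≤ a) : par g k m a < a := by
  rw [par]; split <;> omega

lemma degree_eq_D (hg : 3 ≤ g) (hm : ∀ t, 2 ≤ m t) (hn : n = g + k + ∑ t, m t)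
    (hgn : g + 2 ≤ n) (v : Fin n) : (H1 n g k m).degree v = D g k m v.val := by
  rcases Nat.eq_zero_or_pos v.val with hv | hv
  · rw [degree_hub hg hm hn hgn v hv, hv, D_zero]
  rcases Nat.lt_or_ge v.val g with hvg | hvg
  · rw [degree_cycle hg hm hn hgn v hv hvg, D_two hg hv hvg]
  rcases Nat.lt_or_ge v.val (g + k) with hvk | hvk
  · rw [degree_pend hg hm hn hgn v hvg hvk, D_pend hvg hvk hg]
  obtain ⟨t, ht1, ht2⟩ := off_cover g k m (fun u => by have := hm u; omega) hvk
    (by have := v.isLt; omega)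
  have hmt := hm t
  rcases Nat.lt_or_ge (v.val + 1) (pathOffset g k m t + m t) with hlast | hlast
  · rcases Nat.eq_or_lt_of_le ht1 with hfirst | hmid
    · rw [degree_path_first hg hm hn hgn v t hfirst.symm, D_path2 hg hm t ht1 hlast]
    · rw [degree_path_mid hg hm hn hgn v t hmid hlast, D_path2 hg hm t ht1 hlast]
  · have hl : v.val + 1 = pathOffset g k m t + m t := by omega
    rw [degree_path_last hg hm hn hgn v t hl, D_path1 hg hm t hl]

end Evals

noncomputable def W (x y : ℕ) : ℝ :=
  Real.sqrt ((x : ℝ)^2 + (y : ℝ)^2 + (x : ℝ) * (y : ℝ))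

section Edges

variable {n g k ℓ : ℕ} {m : Fin ℓ → ℕ}

noncomputable def parF (g k : ℕ) {ℓ : ℕ} (m : Fin ℓ → ℕ) {n : ℕ} (v : Fin n) : Fin n :=
  ⟨par g k m v.val, lt_of_le_of_lt (par_le v.val) v.isLt⟩

lemma eusWeight_mk {V : Type*} [Fintype V] (G : SimpleGraph V) (u v : V) :
    eusWeight G s(u, v) = W (G.degree u) (G.degree v) := by
  rw [eusWeight, Sym2.lift_mk, W]

lemma edgeFinset_eq (hg : 3 ≤ g) (hm : ∀ t, 2 ≤ m t) (hn : n = g + k + ∑ t, m t)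
    (hgn : g + 2 ≤ n) :
    (H1 n g k m).edgeFinset =
      insert s((⟨0, by omega⟩ : Fin n), (⟨g - 1, by omega⟩ : Fin n))
        ((Finset.univ.filter (fun v : Fin n => v.val ≠ 0)).image
          (fun v => s(parF g k m v, v))) := by
  have hoffge : ∀ u : Fin ℓ, g + k ≤ pathOffset g k m u := fun u => off_ge g k m u
  have hoffle : ∀ u : Fin ℓ, pathOffset g k m u + m u ≤ n := fun u => by
    have := off_add_le g k m u; omega
  ext e
  induction e using Sym2.ind with
  | _ i j =>
  rw [SimpleGraph.mem_edgeFinset, SimpleGraph.mem_edgeSet]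
  constructor
  · intro hadj
    rw [H1_adj] at hadj
    obtain ⟨hne, hr⟩ := hadj
    -- helper to place a generator-edge into the RHS
    have key : ∀ i j : Fin n, rel g k m i.val j.val →
        s(i, j) ∈ insert s((⟨0, by omega⟩ : Fin n), (⟨g - 1, by omega⟩ : Fin n))
        ((Finset.univ.filter (fun v : Fin n => v.val ≠ 0)).image
          (fun v => s(parF g k m v, v))) := by
      clear hne hr i j
      intro i j hr
      simp only [Finset.mem_insert, Finset.mem_image, Finset.mem_filter, Finset.mem_univ,
        true_and]
      simp only [rel] at hr
      rcases hr with ⟨h1, h2⟩ | ⟨h1, h2⟩ | ⟨h1, h2, h3⟩ | ⟨t, h1, h2⟩ | ⟨t, h1, h2, h3⟩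
      · right
        refine ⟨j, by omega, ?_⟩
        have : parF g k m j = i := by
          apply Fin.ext
          show par g k m j.val = i.val
          rw [par_cycle hg (by omega) (by omega)]
          omega
        rw [this]
      · left
        have hi : i = ⟨0, by omega⟩ := Fin.ext h1
        have hj : j = ⟨g - 1, by omega⟩ := Fin.ext h2
        rw [Sym2.eq_iff]
        exact Or.inl ⟨hi, hj⟩
      · right
        refine ⟨j, by omega, ?_⟩
        have : parF g k m j = i := by
          apply Fin.ext
          show par g k m j.val = i.val
          rw [par_pend h2 h3]
          omega
        rw [this]
      · right
        have := hoffge t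
        refine ⟨j, by omega, ?_⟩
        have : parF g k m j = i := by
          apply Fin.ext
          show par g k m j.val = i.val
          rw [par_first t h2]
          omega
        rw [this]
      · right
        have := hoffge t
        have hmt := hm t
        refine ⟨j, by omega, ?_⟩
        have : parF g k m j = i := by
          apply Fin.ext
          show par g k m j.val = i.val
          rw [par_late hg hm t (by omega) (by omega)]
          omega
        rw [this]
    rcases hr with hr | hr
    · exact key i j hr
    · have hkey := key j i hr
      have hsw : s(j, i) = s(i, j) := Sym2.eq_swap
      rwa [hsw] at hkey
  · intro he
    simp only [Finset.mem_insert, Finset.mem_image, Finset.mem_filter, Finset.mem_univ,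
      true_and] at he
    rcases he with he | ⟨v, hv0, hv⟩
    · rw [Sym2.eq_iff] at he
      have hadj : (H1 n g k m).Adj (⟨0, by omega⟩ : Fin n) (⟨g - 1, by omega⟩ : Fin n) := by
        rw [H1_adj]
        constructor
        · intro h
          have := congrArg Fin.val h
          simp at this
          omega
        · exact Or.inl (Or.inr (Or.inl ⟨rfl, rfl⟩))
      rcases he with ⟨h1, h2⟩ | ⟨h1, h2⟩
      · subst h1; subst h2; exact hadj
      · subst h1; subst h2; exact hadj.symm
    · have hA : (H1 n g k m).Adj (parF g k m v) v := ?_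
      · have hmem : s(parF g k m v, v) ∈ (H1 n g k m).edgeSet :=
          ((H1 n g k m).mem_edgeSet).mpr hA
        rw [hv] at hmem
        exact hmem
      rw [H1_adj]
      have hlt := par_lt (g := g) (k := k) (m := m) v.val (by omega)
      constructor
      · intro h
        have := congrArg Fin.val h
        simp only [parF] at this
        omega
      · show rel g k m (par g k m v.val) v.val ∨ _
        rcases Nat.lt_or_ge v.val g with hvg | hvg
        · left
          rw [par_cycle hg (by omega) hvg]
          exact Or.inl ⟨by omega, by omega⟩
        rcases Nat.lt_or_ge v.val (g + k) with hvk | hvk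
        · left
          rw [par_pend hvg hvk]
          exact Or.inr (Or.inr (Or.inl ⟨rfl, hvg, hvk⟩))
        obtain ⟨t, ht1, ht2⟩ := off_cover g k m (fun u => by have := hm u; omega) hvk
          (by have := v.isLt; omega)
        rcases Nat.eq_or_lt_of_le ht1 with hfirst | hmid
        · left
          rw [par_first t hfirst.symm]
          exact Or.inr (Or.inr (Or.inr (Or.inl ⟨t, rfl, hfirst.symm⟩)))
        · left
          rw [par_late hg hm t hmid ht2]
          exact Or.inr (Or.inr (Or.inr (Or.inr ⟨t, by omega, by omega, by omega⟩)))

end Edges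

section SumFormula

variable {n g k ℓ : ℕ} {m : Fin ℓ → ℕ}

noncomputable def fw (g k : ℕ) {ℓ : ℕ} (m : Fin ℓ → ℕ) (a : ℕ) : ℝ :=
  W (D g k m (par g k m a)) (D g k m a)

lemma Ico_single (a : ℕ) : Finset.Ico a (a+1) = {a} := by
  ext x; simp only [Finset.mem_Ico, Finset.mem_singleton]; omega

lemma sum_path (hg : 3 ≤ g) (hm : ∀ t, 2 ≤ m t) (t : Fin ℓ) :
    ∑ a ∈ Finset.Ico (pathOffset g k m t) (pathOffset g k m t + m t), fw g k m a
      = W (k + ℓ + 2) 2 + ((m t : ℝ) - 2) * W 2 2 + W 2 1 := by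
  set o := pathOffset g k m t with ho
  have hmt := hm t
  have h1 : o ≤ o + 1 := by omega
  have h2 : o + 1 ≤ o + m t - 1 := by omega
  have h3 : o + m t - 1 ≤ o + m t := by omega
  rw [← Finset.sum_Ico_consecutive _ (by omega : o ≤ o + m t - 1) h3,
      ← Finset.sum_Ico_consecutive _ h1 h2]
  have e1 : ∑ a ∈ Finset.Ico o (o+1), fw g k m a = W (k + ℓ + 2) 2 := by
    rw [Ico_single, Finset.sum_singleton, fw, par_first t ho, D_zero,
      D_path2 hg hm t (by omega) (by omega)]
  have e2 : ∑ a ∈ Finset.Ico (o+1) (o + m t - 1), fw g k m a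
      = ((m t : ℝ) - 2) * W 2 2 := by
    rw [Finset.sum_congr rfl (fun a ha => ?_), Finset.sum_const, Nat.card_Ico]
    · rw [nsmul_eq_mul]
      congr 1
      have : o + m t - 1 - (o + 1) = m t - 2 := by omega
      rw [this, Nat.cast_sub hmt, Nat.cast_ofNat]
    · simp only [Finset.mem_Ico] at ha
      rw [fw, par_late hg hm t (by omega) (by omega),
        D_path2 hg hm t (by omega) (by omega), D_path2 hg hm t (by omega) (by omega)]
  have e3 : ∑ a ∈ Finset.Ico (o + m t - 1) (o + m t), fw g k m a = W 2 1 := by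
    have hh : Finset.Ico (o + m t - 1) (o + m t) = {o + m t - 1} := by
      ext x; simp only [Finset.mem_Ico, Finset.mem_singleton]; omega
    rw [hh, Finset.sum_singleton, fw,
      par_late hg hm t (by omega) (by omega),
      D_path2 hg hm t (by omega) (by omega), D_path1 hg hm t (by omega)]
  rw [e1, e2, e3]

lemma sum_tail (hg : 3 ≤ g) (hm : ∀ t, 2 ≤ m t) (hn : n = g + k + ∑ t, m t) :
    ∑ a ∈ Finset.Ico (g + k) n, fw g k m a
      = (ℓ : ℝ) * W (k + ℓ + 2) 2 + ((∑ t, (m t : ℝ)) - 2*ℓ) * W 2 2 + (ℓ : ℝ) * W 2 1 := by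
  have hbi : Finset.Ico (g + k) n
      = Finset.univ.biUnion (fun t : Fin ℓ => Finset.Ico (pathOffset g k m t)
          (pathOffset g k m t + m t)) := by
    ext a
    simp only [Finset.mem_Ico, Finset.mem_biUnion, Finset.mem_univ, true_and]
    constructor
    · intro ha
      exact off_cover g k m (fun u => by have := hm u; omega) ha.1 (by omega)
    · rintro ⟨t, h1, h2⟩
      have := off_ge g k m t
      have := off_add_le g k m t
      omega
  rw [hbi, Finset.sum_biUnion]
  · have hmid : ∑ t : Fin ℓ, (((m t : ℝ) - 2) * W 2 2) = ((∑ t, (m t:ℝ)) - 2*ℓ) * W 2 2 := by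
      rw [← Finset.sum_mul]
      congr 1
      rw [Finset.sum_sub_distrib, Finset.sum_const]
      simp only [nsmul_eq_mul, Finset.card_univ, Fintype.card_fin]
      ring
    rw [Finset.sum_congr rfl (fun t _ => sum_path hg hm t), Finset.sum_add_distrib,
      Finset.sum_add_distrib, hmid, Finset.sum_const, Finset.sum_const]
    simp only [nsmul_eq_mul, Finset.card_univ, Fintype.card_fin]
  · intro t _ t' _ hne
    simp only [Function.onFun]
    rw [Finset.disjoint_left]
    intro a ha ha'
    simp only [Finset.mem_Ico] at ha ha'
    exact hne (off_uniq g k m ha.1 ha.2 ha'.1 ha'.2)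

lemma EUS_formula (hg : 3 ≤ g) (hm : ∀ t, 2 ≤ m t) (hn : n = g + k + ∑ t, m t)
    (hgn : g + 2 ≤ n) :
    EUS (H1 n g k m) = ((ℓ:ℝ) + 2) * W (k+ℓ+2) 2 + (k:ℝ) * W (k+ℓ+2) 1 + (ℓ:ℝ) * W 2 1
      + ((n:ℝ) - (k:ℝ) - 2*(ℓ:ℝ) - 4) * W 2 2 + 2 * W 2 2 := by
  have hoffge : ∀ u : Fin ℓ, g + k ≤ pathOffset g k m u := fun u => off_ge g k m u
  rw [EUS, edgeFinset_eq hg hm hn hgn]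
  have hd := degree_eq_D (m := m) hg hm hn hgn
  have hnotmem : s((⟨0, by omega⟩ : Fin n), (⟨g - 1, by omega⟩ : Fin n)) ∉
      ((Finset.univ.filter (fun v : Fin n => v.val ≠ 0)).image
        (fun v => s(parF g k m v, v))) := by
    simp only [Finset.mem_image, Finset.mem_filter, Finset.mem_univ, true_and, not_exists]
    rintro v ⟨hv0, hveq⟩
    rw [Sym2.eq_iff] at hveq
    have hlt := par_lt (g := g) (k := k) (m := m) v.val (by omega)
    rcases hveq with ⟨h1, h2⟩ | ⟨h1, h2⟩
    · have hv1 := congrArg Fin.val h1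
      have hv2 := congrArg Fin.val h2
      simp only [parF] at hv1 hv2
      rw [par_cycle hg (by omega) (by omega)] at hv1
      omega
    · have hv1 := congrArg Fin.val h1
      have hv2 := congrArg Fin.val h2
      simp only [parF] at hv1 hv2
      omega
  rw [Finset.sum_insert hnotmem]
  have hinj : ∀ u ∈ (Finset.univ.filter (fun v : Fin n => v.val ≠ 0)),
      ∀ v ∈ (Finset.univ.filter (fun v : Fin n => v.val ≠ 0)),
      s(parF g k m u, u) = s(parF g k m v, v) → u = v := by
    intro u hu v hv huv
    simp only [Finset.mem_filter, Finset.mem_univ, true_and] at hu hv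
    simp only [Sym2.eq_iff] at huv
    have hltu := par_lt (g := g) (k := k) (m := m) u.val (by omega)
    have hltv := par_lt (g := g) (k := k) (m := m) v.val (by omega)
    rcases huv with ⟨h1, h2⟩ | ⟨h1, h2⟩
    · exact h2
    · have hv1 := congrArg Fin.val h1
      have hv2 := congrArg Fin.val h2
      simp only [parF] at hv1 hv2
      omega
  rw [Finset.sum_image hinj]
  have hins : eusWeight (H1 n g k m) s((⟨0, by omega⟩ : Fin n), (⟨g - 1, by omega⟩ : Fin n))
      = W (k + ℓ + 2) 2 := by
    rw [eusWeight_mk, hd, hd]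
    show W (D g k m 0) (D g k m (g-1)) = _
    rw [D_zero, D_two hg (by omega) (by omega)]
  rw [hins]
  have hsummand : ∀ v ∈ (Finset.univ.filter (fun v : Fin n => v.val ≠ 0)),
      eusWeight (H1 n g k m) s(parF g k m v, v) = fw g k m v.val := by
    intro v hv
    rw [eusWeight_mk, hd, hd]
    rfl
  rw [Finset.sum_congr rfl hsummand]
  have htrans : ∑ v ∈ Finset.univ.filter (fun v : Fin n => v.val ≠ 0), fw g k m v.val
      = ∑ a ∈ Finset.Ico 1 n, fw g k m a := by
    apply Finset.sum_bij (fun v _ => v.val)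
    · intro u hu
      simp only [Finset.mem_filter, Finset.mem_univ, true_and] at hu
      simp only [Finset.mem_Ico]
      exact ⟨by omega, u.isLt⟩
    · intro a _ b _ h; exact Fin.ext h
    · intro b hb
      simp only [Finset.mem_Ico] at hb
      exact ⟨⟨b, hb.2⟩, by simp; omega, rfl⟩
    · intro a _; rfl
  rw [htrans]
  have hgk : g + k ≤ n := by omega
  rw [← Finset.sum_Ico_consecutive _ (by omega : 1 ≤ g + k) hgk,
      ← Finset.sum_Ico_consecutive _ (by omega : 1 ≤ g) (by omega : g ≤ g + k),
      ← Finset.sum_Ico_consecutive _ (by omega : 1 ≤ 2) (by omega : 2 ≤ g)]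
  have e1 : ∑ a ∈ Finset.Ico 1 2, fw g k m a = W (k + ℓ + 2) 2 := by
    rw [Ico_single, Finset.sum_singleton, fw, par_cycle hg (by omega) (by omega)]
    show W (D g k m 0) (D g k m 1) = _
    rw [D_zero, D_two hg (by omega) (by omega)]
  have e2 : ∑ a ∈ Finset.Ico 2 g, fw g k m a = ((g : ℝ) - 2) * W 2 2 := by
    rw [Finset.sum_congr rfl (fun a ha => ?_), Finset.sum_const, Nat.card_Ico,
      nsmul_eq_mul, Nat.cast_sub (by omega), Nat.cast_ofNat]
    simp only [Finset.mem_Ico] at ha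
    rw [fw, par_cycle hg (by omega) (by omega), D_two hg (by omega) (by omega),
      D_two hg (by omega) (by omega)]
  have e3 : ∑ a ∈ Finset.Ico g (g + k), fw g k m a = (k : ℝ) * W (k + ℓ + 2) 1 := by
    rw [Finset.sum_congr rfl (fun a ha => ?_), Finset.sum_const, Nat.card_Ico,
      nsmul_eq_mul]
    · rw [show g + k - g = k from by omega]
    simp only [Finset.mem_Ico] at ha
    rw [fw, par_pend ha.1 ha.2, D_zero, D_pend ha.1 ha.2 hg]
  rw [e1, e2, e3, sum_tail hg hm hn]
  have hcast : (n : ℝ) = (g : ℝ) + (k : ℝ) + ∑ t, (m t : ℝ) := by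
    rw [hn]; push_cast; ring
  rw [hcast]
  ring

end SumFormula

section Analysis

lemma W_nonneg (x y : ℕ) : 0 ≤ W x y := Real.sqrt_nonneg _

lemma W22 : W 2 2 = 2 * Real.sqrt 3 := by
  rw [W, show (((2:ℕ)):ℝ)^2 + (((2:ℕ)):ℝ)^2 + (((2:ℕ)):ℝ) * (((2:ℕ)):ℝ) = 2^2*3 by push_cast; norm_num,
    Real.sqrt_mul (by norm_num), Real.sqrt_sq (by norm_num)]

lemma W21 : W 2 1 = Real.sqrt 7 := by
  rw [W]; norm_num

lemma W32 : W 3 2 = Real.sqrt 19 := by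
  rw [W]; norm_num

lemma W31 : W 3 1 = Real.sqrt 13 := by
  rw [W]; norm_num

lemma WA_lb (k ℓ : ℕ) : (k:ℝ) + ℓ + 3 ≤ W (k + ℓ + 2) 2 := by
  rw [W]
  apply Real.le_sqrt_of_sq_le
  push_cast
  nlinarith [sq_nonneg ((k:ℝ) + ℓ)]

lemma WB_lb (k ℓ : ℕ) : (k:ℝ) + ℓ + 2.5 ≤ W (k + ℓ + 2) 1 := by
  rw [W]
  apply Real.le_sqrt_of_sq_le
  push_cast
  nlinarith [sq_nonneg ((k:ℝ) + ℓ)]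

lemma sqrt3_ub : Real.sqrt 3 ≤ 1.7321 := by
  rw [Real.sqrt_le_left (by norm_num)]; norm_num

lemma sqrt3_lb : (1.732 : ℝ) ≤ Real.sqrt 3 := Real.le_sqrt_of_sq_le (by norm_num)

lemma sqrt19_ub : Real.sqrt 19 ≤ 4.3589 := by
  rw [Real.sqrt_le_left (by norm_num)]; norm_num

lemma sqrt19_lb : (4.358 : ℝ) ≤ Real.sqrt 19 := Real.le_sqrt_of_sq_le (by norm_num)

lemma sqrt7_ub : Real.sqrt 7 ≤ 2.6458 := by
  rw [Real.sqrt_le_left (by norm_num)]; norm_num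

lemma sqrt7_lb : (2.645 : ℝ) ≤ Real.sqrt 7 := Real.le_sqrt_of_sq_le (by norm_num)

lemma sqrt13_lb : (3.6055 : ℝ) ≤ Real.sqrt 13 := Real.le_sqrt_of_sq_le (by norm_num)

lemma F_main (k ℓ : ℕ) (hkl : 1 ≤ k + ℓ) :
    (3 * Real.sqrt 19 + (2*(k:ℝ) + 4*(ℓ:ℝ) - 4) * Real.sqrt 3 + Real.sqrt 7
      ≤ ((ℓ:ℝ)+2) * W (k+ℓ+2) 2 + (k:ℝ) * W (k+ℓ+2) 1 + (ℓ:ℝ) * W 2 1) ∧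
    (¬(k = 0 ∧ ℓ = 1) →
      3 * Real.sqrt 19 + (2*(k:ℝ) + 4*(ℓ:ℝ) - 4) * Real.sqrt 3 + Real.sqrt 7
      < ((ℓ:ℝ)+2) * W (k+ℓ+2) 2 + (k:ℝ) * W (k+ℓ+2) 1 + (ℓ:ℝ) * W 2 1) := by
  rcases Decidable.em (k = 0 ∧ ℓ = 1) with heq | hne
  · obtain ⟨rfl, rfl⟩ := heq
    norm_num [W21, W32]
  · have hstrict : 3 * Real.sqrt 19 + (2*(k:ℝ) + 4*(ℓ:ℝ) - 4) * Real.sqrt 3 + Real.sqrt 7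
      < ((ℓ:ℝ)+2) * W (k+ℓ+2) 2 + (k:ℝ) * W (k+ℓ+2) 1 + (ℓ:ℝ) * W 2 1 := by
      rcases Decidable.em (k = 1 ∧ ℓ = 0) with h10 | h10
      · obtain ⟨rfl, rfl⟩ := h10
        rw [W21, W32, W31]
        norm_num
        nlinarith [sqrt3_lb, sqrt19_ub, sqrt7_ub, sqrt13_lb]
      · have hs : 2 ≤ k + ℓ := by omega
        have hWA := WA_lb k ℓ
        have hWB := WB_lb k ℓ
        have hx : (0:ℝ) ≤ (k:ℝ) := Nat.cast_nonneg k
        have hy : (0:ℝ) ≤ (ℓ:ℝ) := Nat.cast_nonneg ℓ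
        have hxy : (2:ℝ) ≤ (k:ℝ) + (ℓ:ℝ) := by exact_mod_cast hs
        have t1 : ((ℓ:ℝ)+2) * ((k:ℝ) + ℓ + 3) ≤ ((ℓ:ℝ)+2) * W (k+ℓ+2) 2 :=
          mul_le_mul_of_nonneg_left hWA (by linarith)
        have t2 : (k:ℝ) * ((k:ℝ) + ℓ + 2.5) ≤ (k:ℝ) * W (k+ℓ+2) 1 :=
          mul_le_mul_of_nonneg_left hWB hx
        have t3 : (2*(k:ℝ) + 4*(ℓ:ℝ) - 4) * Real.sqrt 3
            ≤ (2*(k:ℝ) + 4*(ℓ:ℝ) - 4) * 1.7321 :=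
          mul_le_mul_of_nonneg_left sqrt3_ub (by linarith)
        have t4 : (ℓ:ℝ) * 2.645 ≤ (ℓ:ℝ) * W 2 1 := by
          rw [W21]; exact mul_le_mul_of_nonneg_left sqrt7_lb hy
        have h19 := sqrt19_ub
        have h7 := sqrt7_ub
        nlinarith [t1, t2, t3, t4, sq_nonneg ((k:ℝ) + ℓ - 2), mul_nonneg hx hy,
          mul_nonneg hx (by linarith : (0:ℝ) ≤ (k:ℝ) + ℓ - 2),
          mul_nonneg hy (by linarith : (0:ℝ) ≤ (k:ℝ) + ℓ - 2)]
    exact ⟨le_of_lt hstrict, fun _ => hstrict⟩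

end Analysis

section IsoPart

lemma degree_iso {V V' : Type*} [Fintype V] [Fintype V'] {G : SimpleGraph V}
    {G' : SimpleGraph V'} (φ : G ≃g G') (v : V) : G'.degree (φ v) = G.degree v := by
  rw [← SimpleGraph.card_neighborSet_eq_degree, ← SimpleGraph.card_neighborSet_eq_degree]
  exact Fintype.card_congr (φ.mapNeighborSet v).symm

lemma EUS_iso {V V' : Type*} [Fintype V] [Fintype V'] {G : SimpleGraph V}
    {G' : SimpleGraph V'} (φ : G ≃g G') : EUS G = EUS G' := by
  rw [EUS, EUS]
  apply Finset.sum_nbij' (i := fun e => Sym2.map φ e) (j := fun e => Sym2.map φ.symm e)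
  · intro e he
    induction e using Sym2.ind with
    | _ a b =>
      rw [SimpleGraph.mem_edgeFinset, SimpleGraph.mem_edgeSet] at he
      rw [Sym2.map_pair_eq, SimpleGraph.mem_edgeFinset, SimpleGraph.mem_edgeSet]
      exact φ.map_rel_iff.mpr he
  · intro e he
    induction e using Sym2.ind with
    | _ a b =>
      rw [SimpleGraph.mem_edgeFinset, SimpleGraph.mem_edgeSet] at he
      rw [Sym2.map_pair_eq, SimpleGraph.mem_edgeFinset, SimpleGraph.mem_edgeSet]
      exact φ.symm.map_rel_iff.mpr he
  · intro e _
    induction e using Sym2.ind with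
    | _ a b => simp [Sym2.map_pair_eq]
  · intro e _
    induction e using Sym2.ind with
    | _ a b => simp [Sym2.map_pair_eq]
  · intro e _
    induction e using Sym2.ind with
    | _ a b =>
      rw [Sym2.map_pair_eq, eusWeight_mk, eusWeight_mk, degree_iso φ, degree_iso φ]

lemma cwp_eq {n g : ℕ} (hg : 3 ≤ g) (hgn : g + 2 ≤ n) (m : Fin 1 → ℕ) (hm0 : m 0 = n - g) :
    H1 n g 0 m = cycleWithPath n g := by
  have hoff : ∀ t : Fin 1, pathOffset g 0 m t = g := by
    intro t
    have ht : t = ⟨0, by norm_num⟩ := Subsingleton.elim _ _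
    rw [ht, off_zero g 0 m (by norm_num)]
    omega
  ext i j
  rw [H1_adj, cycleWithPath, SimpleGraph.fromRel_adj]
  apply and_congr_right
  intro hne
  have key : ∀ a b : Fin n, rel g 0 m a.val b.val ↔
      ((b.val = a.val + 1 ∧ a.val + 1 ≠ g) ∨ (a.val = 0 ∧ (b.val = g - 1 ∨ b.val = g))) := by
    intro a b
    constructor
    · intro hr
      simp only [rel] at hr
      rcases hr with ⟨h1,h2⟩ | ⟨h1,h2⟩ | ⟨h1,h2,h3⟩ | ⟨t,h1,h2⟩ | ⟨t,h1,h2,h3⟩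
      · exact Or.inl ⟨h1, by omega⟩
      · exact Or.inr ⟨h1, Or.inl h2⟩
      · omega
      · rw [hoff t] at h2
        exact Or.inr ⟨h1, Or.inr h2⟩
      · rw [hoff t] at h2
        exact Or.inl ⟨h1, by omega⟩
    · intro hr
      rcases hr with ⟨h1, h2⟩ | ⟨h1, h2 | h2⟩
      · rcases Nat.lt_or_ge (a.val + 1) g with hlt | hge
        · exact Or.inl ⟨h1, hlt⟩
        · refine Or.inr (Or.inr (Or.inr (Or.inr ⟨⟨0, by norm_num⟩, h1, ?_, ?_⟩)))
          · rw [off_zero g 0 m (by norm_num)]; omega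
          · rw [off_zero g 0 m (by norm_num)]
            have hb := b.isLt
            have hm00 : m ⟨0, by norm_num⟩ = n - g := by
              rw [show (⟨0, by norm_num⟩ : Fin 1) = 0 from rfl, hm0]
            omega
      · exact Or.inr (Or.inl ⟨h1, h2⟩)
      · refine Or.inr (Or.inr (Or.inr (Or.inl ⟨⟨0, by norm_num⟩, h1, ?_⟩)))
        rw [off_zero g 0 m (by norm_num)]; omega
  rw [key i j, key j i]

end IsoPart

end Aux

/-- For the unicyclic graph `H₁` of order `n` and girth `g` (`3 ≤ g ≤ n-2`), having `k ≥ 0`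
pendant paths of length `1` and `ℓ ≥ 0` pendant paths of length at least `2` attached at one
vertex of the cycle, we have `EUS(H₁) ≥ 3√19 + 2(n-4)√3 + √7`, with equality if and only if
`H₁ ≅ C_{n,g}`. -/
theorem eus_H1_lower_bound (n g k ℓ : ℕ) (m : Fin ℓ → ℕ) (hg : 3 ≤ g) (hgn : g + 2 ≤ n)
    (hm : ∀ t, 2 ≤ m t) (hn : n = g + k + ∑ t, m t) :
    3 * Real.sqrt 19 + 2 * ((n : ℝ) - 4) * Real.sqrt 3 + Real.sqrt 7 ≤ EUS (H1 n g k m) ∧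
      (EUS (H1 n g k m) = 3 * Real.sqrt 19 + 2 * ((n : ℝ) - 4) * Real.sqrt 3 + Real.sqrt 7 ↔
        Nonempty (H1 n g k m ≃g cycleWithPath n g)) := by
  have hkl : 1 ≤ k + ℓ := by
    by_contra hcon
    push_neg at hcon
    have hk0 : k = 0 := by omega
    have hl0 : ℓ = 0 := by omega
    subst hk0; subst hl0
    simp only [Finset.univ_eq_empty, Finset.sum_empty] at hn
    omega
  have hform := Aux.EUS_formula hg hm hn hgn
  have hF := Aux.F_main k ℓ hkl
  have hF1 := hF.1
  have hF2 := hF.2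
  rw [Aux.W21] at hF1 hF2
  have hcwp : EUS (cycleWithPath n g) =
      3 * Real.sqrt 19 + 2 * ((n : ℝ) - 4) * Real.sqrt 3 + Real.sqrt 7 := by
    rw [← Aux.cwp_eq hg hgn (fun _ : Fin 1 => n - g) rfl]
    rw [Aux.EUS_formula hg (fun _ => by omega) (by rw [Fin.sum_univ_one]; omega) hgn]
    rw [show (0 + 1 + 2 : ℕ) = 3 from rfl]
    rw [Aux.W32, Aux.W21, Aux.W22]
    push_cast
    ring
  constructor
  · rw [hform, Aux.W22, Aux.W21]
    linarith [hF1]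
  · constructor
    · intro heq
      have h01 : k = 0 ∧ ℓ = 1 := by
        by_contra hcon
        have hstrict := hF2 hcon
        rw [hform, Aux.W22, Aux.W21] at heq
        linarith [hstrict]
      obtain ⟨hk0, hl1⟩ := h01
      subst hk0
      subst hl1
      have hm0 : m 0 = n - g := by
        rw [Fin.sum_univ_one] at hn; omega
      rw [← Aux.cwp_eq hg hgn m hm0]
      exact ⟨SimpleGraph.Iso.refl⟩
    · rintro ⟨φ⟩
      rw [Aux.EUS_iso φ, hcwp]
end

section
/- Let G be a finite simple graph and let v_i, v_j be two distinct non-adjacent vertices of G. Then EUS(G) < EUS(G + v_i v_j), where G + v_i v_j is the graph obtained from G by adding the edge v_i v_j. -/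
open scoped Classical

lemma degree_mono {V : Type*} [Fintype V] {G G' : SimpleGraph V} (h : G ≤ G') (v : V) :
    G.degree v ≤ G'.degree v := by
  classical
  simp only [← SimpleGraph.card_neighborFinset_eq_degree]
  apply Finset.card_le_card
  intro u hu
  simp only [SimpleGraph.mem_neighborFinset] at hu ⊢
  exact h hu

lemma eusWeight_mono {V : Type*} [Fintype V] {G G' : SimpleGraph V} (h : G ≤ G')
    (e : Sym2 V) : eusWeight G e ≤ eusWeight G' e := by
  induction e using Sym2.ind with
  | _ a b =>
    simp only [eusWeight, Sym2.lift_mk]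
    apply Real.sqrt_le_sqrt
    have ha : (G.degree a : ℝ) ≤ (G'.degree a : ℝ) := by exact_mod_cast degree_mono h a
    have hb : (G.degree b : ℝ) ≤ (G'.degree b : ℝ) := by exact_mod_cast degree_mono h b
    have h0a : (0:ℝ) ≤ (G.degree a : ℝ) := by positivity
    have h0b : (0:ℝ) ≤ (G.degree b : ℝ) := by positivity
    nlinarith

/-- Adding a new edge between two distinct non-adjacent vertices strictly increases the
Euler Sombor index: `EUS(G) < EUS(G + v_i v_j)`. -/
theorem eus_lt_of_addEdge {V : Type*} [Fintype V] (G : SimpleGraph V) (i j : V)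
    (hij : i ≠ j) (hadj : ¬ G.Adj i j) :
    EUS G < EUS (G ⊔ SimpleGraph.fromEdgeSet {s(i, j)}) := by
  classical
  set G' := G ⊔ SimpleGraph.fromEdgeSet {s(i, j)} with hG'
  have hle : G ≤ G' := le_sup_left
  have hadj' : G'.Adj i j := by
    simp [hG', SimpleGraph.sup_adj, SimpleGraph.fromEdgeSet_adj, hij]
  have hmem : s(i, j) ∉ G.edgeFinset := by
    simp [SimpleGraph.mem_edgeFinset, hadj]
  have hedge : G'.edgeFinset = insert s(i, j) G.edgeFinset := by
    ext e
    simp only [SimpleGraph.mem_edgeFinset, Finset.mem_insert, hG',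
      SimpleGraph.edgeSet_sup, Set.mem_union, SimpleGraph.edgeSet_fromEdgeSet,
      Set.mem_diff, Set.mem_singleton_iff, Set.mem_setOf_eq]
    constructor
    · rintro (h | ⟨h, _⟩)
      · exact Or.inr h
      · exact Or.inl h
    · rintro (h | h)
      · exact Or.inr ⟨h, by subst h; simpa [Sym2.isDiag_iff_proj_eq] using hij⟩
      · exact Or.inl h
  have key : ∀ a b : ℝ, 1 ≤ a → 0 ≤ b → 0 < a^2 + b^2 + a*b := by
    intro a b ha hb
    nlinarith
  have hpos : 0 < eusWeight G' s(i, j) := by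
    simp only [eusWeight, Sym2.lift_mk]
    apply Real.sqrt_pos.mpr
    apply key
    · rw [Nat.one_le_cast, ← SimpleGraph.card_neighborFinset_eq_degree]
      refine Finset.card_pos.mpr ⟨j, ?_⟩
      rw [SimpleGraph.mem_neighborFinset]
      exact hadj'
    · positivity
  calc EUS G = ∑ e ∈ G.edgeFinset, eusWeight G e := rfl
    _ ≤ ∑ e ∈ G.edgeFinset, eusWeight G' e :=
        Finset.sum_le_sum fun e _ => eusWeight_mono hle e
    _ < eusWeight G' s(i, j) + ∑ e ∈ G.edgeFinset, eusWeight G' e := by linarith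
    _ = ∑ e ∈ insert s(i, j) G.edgeFinset, eusWeight G' e := (Finset.sum_insert hmem).symm
    _ = EUS G' := by
        rw [EUS]
        apply Finset.sum_congr _ (fun _ _ => rfl)
        ext e
        simp only [SimpleGraph.mem_edgeFinset, Finset.mem_insert, hG',
          SimpleGraph.edgeSet_sup, Set.mem_union, SimpleGraph.edgeSet_fromEdgeSet,
          Set.mem_diff, Set.mem_singleton_iff, Set.mem_setOf_eq]
        constructor
        · rintro (h | h)
          · exact Or.inr ⟨h, by subst h; simpa [Sym2.isDiag_iff_proj_eq] using hij⟩
          · exact Or.inl h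
        · rintro (h | ⟨h, _⟩)
          · exact Or.inr h
          · exact Or.inl h
end

section
/- Let n, p be positive integers with n − p ≥ 2, and let a₁ ≥ aᵢ ≥ 1 be positive integers with i ≥ 2. Then √((n−p+a₁)² + (n−p−2+aᵢ)² + (n−p+a₁)(n−p−2+aᵢ)) > √((n−p−1+a₁)² + (n−p−1+aᵢ)² + (n−p−1+a₁)(n−p−1+aᵢ)). -/
/-- Claim 1: for positive integers `n, p` with `n - p ≥ 2` and positive integers `a₁ ≥ aᵢ ≥ 1`,
`√((n-p+a₁)² + (n-p-2+aᵢ)² + (n-p+a₁)(n-p-2+aᵢ))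
  > √((n-p-1+a₁)² + (n-p-1+aᵢ)² + (n-p-1+a₁)(n-p-1+aᵢ))`. -/
theorem eus_weight_shift_gt (n p a₁ aᵢ : ℕ) (hn : 0 < n) (hp : 0 < p) (hnp : p + 2 ≤ n)
    (hai : 1 ≤ aᵢ) (ha : aᵢ ≤ a₁) :
    Real.sqrt (((n : ℝ) - p - 1 + a₁)^2 + ((n : ℝ) - p - 1 + aᵢ)^2 +
        ((n : ℝ) - p - 1 + a₁) * ((n : ℝ) - p - 1 + aᵢ)) <
      Real.sqrt (((n : ℝ) - p + a₁)^2 + ((n : ℝ) - p - 2 + aᵢ)^2 +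
        ((n : ℝ) - p + a₁) * ((n : ℝ) - p - 2 + aᵢ)) := by
  have hx : (2 : ℝ) ≤ (n : ℝ) - p := by
    have : (p : ℝ) + 2 ≤ (n : ℝ) := by exact_mod_cast hnp
    linarith
  have h1 : (1 : ℝ) ≤ (aᵢ : ℝ) := by exact_mod_cast hai
  have h2 : (aᵢ : ℝ) ≤ (a₁ : ℝ) := by exact_mod_cast ha
  apply Real.sqrt_lt_sqrt
  · nlinarith [sq_nonneg ((n : ℝ) - p - 1 + a₁), sq_nonneg ((n : ℝ) - p - 1 + aᵢ)]
  · nlinarith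
end

section
/- Let n, p be positive integers with n − p ≥ 2, and let a₁ ≥ aᵢ ≥ 1 be positive integers. Then (a₁+1)√((n−p+a₁)² + n−p+a₁+1) − a₁√((n−p−1+a₁)² + n−p+a₁) + (aᵢ−1)√((n−p−2+aᵢ)² + n−p−1+aᵢ) − aᵢ√((n−p−1+aᵢ)² + n−p+aᵢ) > 0. -/
lemma sqrt_lb_aux (s : ℝ) (hs : 0 ≤ s) : s ≤ Real.sqrt (s^2 + 3/4) := by
  have : s = Real.sqrt (s^2) := by rw [Real.sqrt_sq hs]
  rw [this]
  exact Real.sqrt_le_sqrt (by nlinarith [Real.sq_sqrt (by positivity : (0:ℝ) ≤ s^2)])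

lemma sqrt_mul_ub_aux (a s : ℝ) (ha : 0 ≤ a) (has : a ≤ s) (hs : 0 < s) :
    a * Real.sqrt (s^2 + 3/4) ≤ a * s + 3/8 := by
  have hub : Real.sqrt (s^2 + 3/4) ≤ s + 3/(8*s) := by
    have h1 : (0:ℝ) ≤ s + 3/(8*s) := by positivity
    have h2 : s^2 + 3/4 ≤ (s + 3/(8*s))^2 := by
      have h3 : (s + 3/(8*s))^2 = s^2 + 3/4 + 9/(64*s^2) := by
        field_simp; ring
      have : (0:ℝ) ≤ 9/(64*s^2) := by positivity
      linarith
    calc Real.sqrt (s^2 + 3/4) ≤ Real.sqrt ((s + 3/(8*s))^2) := Real.sqrt_le_sqrt h2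
      _ = s + 3/(8*s) := Real.sqrt_sq h1
  have h4 : a * (3/(8*s)) ≤ 3/8 := by
    have he : a * (3/(8*s)) = 3*a/(8*s) := by ring
    rw [he, div_le_div_iff₀ (by positivity) (by norm_num : (0:ℝ) < 8)]
    nlinarith
  calc a * Real.sqrt (s^2 + 3/4) ≤ a * (s + 3/(8*s)) :=
        mul_le_mul_of_nonneg_left hub ha
    _ = a * s + a * (3/(8*s)) := by ring
    _ ≤ a * s + 3/8 := by linarith

set_option maxHeartbeats 1000000 in
/-- Claim 2: for positive integers `n, p` with `n - p ≥ 2` and positive integers `a₁ ≥ aᵢ ≥ 1`,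
`(a₁+1)√((n-p+a₁)² + n-p+a₁+1) − a₁√((n-p-1+a₁)² + n-p+a₁)
  + (aᵢ−1)√((n-p-2+aᵢ)² + n-p-1+aᵢ) − aᵢ√((n-p-1+aᵢ)² + n-p+aᵢ) > 0`. -/
theorem eus_pendant_shift_gt (n p a₁ aᵢ : ℕ) (hn : 0 < n) (hp : 0 < p) (hnp : p + 2 ≤ n)
    (hai : 1 ≤ aᵢ) (ha : aᵢ ≤ a₁) :
    0 < ((a₁ : ℝ) + 1) * Real.sqrt (((n : ℝ) - p + a₁)^2 + (n : ℝ) - p + a₁ + 1) -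
        (a₁ : ℝ) * Real.sqrt (((n : ℝ) - p - 1 + a₁)^2 + (n : ℝ) - p + a₁) +
        ((aᵢ : ℝ) - 1) * Real.sqrt (((n : ℝ) - p - 2 + aᵢ)^2 + (n : ℝ) - p - 1 + aᵢ) -
        (aᵢ : ℝ) * Real.sqrt (((n : ℝ) - p - 1 + aᵢ)^2 + (n : ℝ) - p + aᵢ) := by
  have hx2 : (2:ℝ) ≤ (n:ℝ) - p := by
    have : (p:ℝ) + 2 ≤ (n:ℝ) := by exact_mod_cast hnp
    linarith
  have hB1 : (1:ℝ) ≤ (aᵢ:ℝ) := by exact_mod_cast hai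
  have hBA : (aᵢ:ℝ) ≤ (a₁:ℝ) := by exact_mod_cast ha
  have r1 : ((n : ℝ) - p + a₁)^2 + (n : ℝ) - p + a₁ + 1
      = ((n:ℝ) - p + 1/2 + a₁)^2 + 3/4 := by ring
  have r2 : ((n : ℝ) - p - 1 + a₁)^2 + (n : ℝ) - p + a₁
      = ((n:ℝ) - p - 1/2 + a₁)^2 + 3/4 := by ring
  have r3 : ((n : ℝ) - p - 2 + aᵢ)^2 + (n : ℝ) - p - 1 + aᵢ
      = ((n:ℝ) - p - 3/2 + aᵢ)^2 + 3/4 := by ring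
  have r4 : ((n : ℝ) - p - 1 + aᵢ)^2 + (n : ℝ) - p + aᵢ
      = ((n:ℝ) - p - 1/2 + aᵢ)^2 + 3/4 := by ring
  rw [r1, r2, r3, r4]
  have l1 : ((a₁:ℝ) + 1) * ((n:ℝ) - p + 1/2 + a₁)
      ≤ ((a₁:ℝ) + 1) * Real.sqrt (((n:ℝ) - p + 1/2 + a₁)^2 + 3/4) :=
    mul_le_mul_of_nonneg_left (sqrt_lb_aux _ (by linarith)) (by linarith)
  have l3 : ((aᵢ:ℝ) - 1) * ((n:ℝ) - p - 3/2 + aᵢ)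
      ≤ ((aᵢ:ℝ) - 1) * Real.sqrt (((n:ℝ) - p - 3/2 + aᵢ)^2 + 3/4) :=
    mul_le_mul_of_nonneg_left (sqrt_lb_aux _ (by linarith)) (by linarith)
  have u2 : (a₁:ℝ) * Real.sqrt (((n:ℝ) - p - 1/2 + a₁)^2 + 3/4)
      ≤ (a₁:ℝ) * ((n:ℝ) - p - 1/2 + a₁) + 3/8 :=
    sqrt_mul_ub_aux _ _ (by linarith) (by linarith) (by linarith)
  have u4 : (aᵢ:ℝ) * Real.sqrt (((n:ℝ) - p - 1/2 + aᵢ)^2 + 3/4)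
      ≤ (aᵢ:ℝ) * ((n:ℝ) - p - 1/2 + aᵢ) + 3/8 :=
    sqrt_mul_ub_aux _ _ (by linarith) (by linarith) (by linarith)
  nlinarith [l1, l3, u2, u4]
end

section
/- Let n, p be positive integers with n − p ≥ 2, let a₁ ≥ aᵢ ≥ 1 be positive integers, and let a_k ≥ 0 be an integer. Then √((n−p+a₁)² + (n−p−1+a_k)² + (n−p+a₁)(n−p−1+a_k)) + √((n−p−2+aᵢ)² + (n−p−1+a_k)² + (n−p−2+aᵢ)(n−p−1+a_k)) − √((n−p−1+a₁)² + (n−p−1+a_k)² + (n−p−1+a₁)(n−p−1+a_k)) − √((n−p−1+aᵢ)² + (n−p−1+a_k)² + (n−p−1+aᵢ)(n−p−1+a_k)) > 0. -/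
set_option maxHeartbeats 2000000

lemma eus_abstract (a b c s1 s2 s3 s4 : ℝ) (ha : 2 ≤ a) (hab : a ≤ b) (hc : 1 ≤ c)
    (hs1 : s1^2 = (b+1)^2 + c^2 + (b+1)*c) (hs2 : s2^2 = (a-1)^2 + c^2 + (a-1)*c)
    (hs3 : s3^2 = b^2 + c^2 + b*c) (hs4 : s4^2 = a^2 + c^2 + a*c)
    (hn1 : 0 ≤ s1) (hn2 : 0 ≤ s2) (hn3 : 0 ≤ s3) (hn4 : 0 ≤ s4)
    (hl1 : b + 1 + c/2 ≤ s1) (hl2 : a - 1 + c/2 ≤ s2)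
    (hl3 : b + c/2 ≤ s3) (hl4 : a + c/2 ≤ s4) :
    0 < s1 + s2 - s3 - s4 := by
  have hP : (b+1+c/2)*(a-1+c/2) ≤ s1*s2 :=
    mul_le_mul hl1 hl2 (by linarith) (by linarith)
  have hQ : (b+c/2)*(a+c/2) ≤ s3*s4 :=
    mul_le_mul hl3 hl4 (by linarith) (by linarith)
  have hS : 0 < s3*s4 + s1*s2 := by nlinarith
  have hpoly : (s3^2)*(s4^2) - (s1^2)*(s2^2) <
      (b-a+1)*((b+c/2)*(a+c/2)+(b+1+c/2)*(a-1+c/2)) := by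
    rw [hs1, hs2, hs3, hs4]
    nlinarith [mul_nonneg (sub_nonneg.2 hab) (sub_nonneg.2 hc), sq_nonneg (c-1), sq_nonneg (b-a),
      mul_nonneg (mul_nonneg (sub_nonneg.2 hab) (sub_nonneg.2 hc)) (sub_nonneg.2 hc),
      mul_nonneg (mul_nonneg (sub_nonneg.2 hab) (sub_nonneg.2 hab)) (sub_nonneg.2 hc)]
  have hkey : s3*s4 - s1*s2 < b - a + 1 := by
    have h1 : (s3*s4 - s1*s2) * (s3*s4 + s1*s2) = (s3^2)*(s4^2) - (s1^2)*(s2^2) := by ring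
    have h2 : (b-a+1)*((b+c/2)*(a+c/2)+(b+1+c/2)*(a-1+c/2)) ≤ (b-a+1)*(s3*s4+s1*s2) :=
      mul_le_mul_of_nonneg_left (by linarith) (by linarith)
    have h3 : (s3*s4 - s1*s2) * (s3*s4 + s1*s2) < (b-a+1)*(s3*s4+s1*s2) := by linarith
    exact (mul_lt_mul_iff_of_pos_right hS).mp h3
  have hsq : (s3+s4)^2 < (s1+s2)^2 := by nlinarith [hs1, hs2, hs3, hs4, hkey]
  have h5 : s3 + s4 < s1 + s2 := lt_of_pow_lt_pow_left₀ 2 (by linarith) hsq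
  linarith

lemma eus_key (a b c : ℝ) (ha : 2 ≤ a) (hab : a ≤ b) (hc : 1 ≤ c) :
    0 < Real.sqrt ((b+1)^2 + c^2 + (b+1)*c) + Real.sqrt ((a-1)^2 + c^2 + (a-1)*c)
      - Real.sqrt (b^2 + c^2 + b*c) - Real.sqrt (a^2 + c^2 + a*c) := by
  have hA0 : (0:ℝ) ≤ (b+1)^2 + c^2 + (b+1)*c := by nlinarith
  have hD0 : (0:ℝ) ≤ (a-1)^2 + c^2 + (a-1)*c := by nlinarith
  have hB0 : (0:ℝ) ≤ b^2 + c^2 + b*c := by nlinarith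
  have hC0 : (0:ℝ) ≤ a^2 + c^2 + a*c := by nlinarith
  refine eus_abstract a b c _ _ _ _ ha hab hc (Real.sq_sqrt hA0) (Real.sq_sqrt hD0)
    (Real.sq_sqrt hB0) (Real.sq_sqrt hC0) (Real.sqrt_nonneg _) (Real.sqrt_nonneg _)
    (Real.sqrt_nonneg _) (Real.sqrt_nonneg _) ?_ ?_ ?_ ?_
  · rw [Real.le_sqrt (by linarith) hA0]; nlinarith [sq_nonneg c]
  · rw [Real.le_sqrt (by linarith) hD0]; nlinarith [sq_nonneg c]
  · rw [Real.le_sqrt (by linarith) hB0]; nlinarith [sq_nonneg c]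
  · rw [Real.le_sqrt (by linarith) hC0]; nlinarith [sq_nonneg c]

/-- Claim 3: for positive integers `n, p` with `n - p ≥ 2`, positive integers `a₁ ≥ aᵢ ≥ 1` and
an integer `a_k ≥ 0`,
`√((n-p+a₁)² + (n-p-1+a_k)² + (n-p+a₁)(n-p-1+a_k))
  + √((n-p-2+aᵢ)² + (n-p-1+a_k)² + (n-p-2+aᵢ)(n-p-1+a_k))
  − √((n-p-1+a₁)² + (n-p-1+a_k)² + (n-p-1+a₁)(n-p-1+a_k))
  − √((n-p-1+aᵢ)² + (n-p-1+a_k)² + (n-p-1+aᵢ)(n-p-1+a_k)) > 0`. -/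
theorem eus_clique_shift_gt (n p a₁ aᵢ aₖ : ℕ) (hn : 0 < n) (hp : 0 < p) (hnp : p + 2 ≤ n)
    (hai : 1 ≤ aᵢ) (ha : aᵢ ≤ a₁) :
    0 < Real.sqrt (((n : ℝ) - p + a₁)^2 + ((n : ℝ) - p - 1 + aₖ)^2 +
          ((n : ℝ) - p + a₁) * ((n : ℝ) - p - 1 + aₖ)) +
        Real.sqrt (((n : ℝ) - p - 2 + aᵢ)^2 + ((n : ℝ) - p - 1 + aₖ)^2 +
          ((n : ℝ) - p - 2 + aᵢ) * ((n : ℝ) - p - 1 + aₖ)) -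
        Real.sqrt (((n : ℝ) - p - 1 + a₁)^2 + ((n : ℝ) - p - 1 + aₖ)^2 +
          ((n : ℝ) - p - 1 + a₁) * ((n : ℝ) - p - 1 + aₖ)) -
        Real.sqrt (((n : ℝ) - p - 1 + aᵢ)^2 + ((n : ℝ) - p - 1 + aₖ)^2 +
          ((n : ℝ) - p - 1 + aᵢ) * ((n : ℝ) - p - 1 + aₖ)) := by
  have hnp' : (p : ℝ) + 2 ≤ (n : ℝ) := by exact_mod_cast hnp
  have hai' : (1 : ℝ) ≤ (aᵢ : ℝ) := by exact_mod_cast hai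
  have ha' : (aᵢ : ℝ) ≤ (a₁ : ℝ) := by exact_mod_cast ha
  have hak : (0 : ℝ) ≤ (aₖ : ℝ) := Nat.cast_nonneg _
  have e1 : (n : ℝ) - p + a₁ = ((n : ℝ) - p - 1 + a₁) + 1 := by ring
  have e2 : (n : ℝ) - p - 2 + aᵢ = ((n : ℝ) - p - 1 + aᵢ) - 1 := by ring
  rw [e1, e2]
  exact eus_key ((n : ℝ) - p - 1 + aᵢ) ((n : ℝ) - p - 1 + a₁) ((n : ℝ) - p - 1 + aₖ)
    (by linarith) (by linarith) (by linarith)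
end

section
/- Let G be a finite simple graph and let P : v w₁ w₂ … w_k be a pendant path of G of length k ≥ 2 (so the degree of v in G is at least 3, the internal vertices w₁, …, w_{k−1} have degree 2, and w_k has degree 1). Then the sum of the Euler Sombor edge-weights over the edges of P satisfies Σ_{v_i v_j ∈ E(P)} √(d_i² + d_j² + d_i d_j) ≥ √19 + (k−2)√12 + √7 > k√12, where degrees d_i are taken in G. -/
open scoped Classical

/-- Let `P : v = c 0, w₁ = c 1, …, w_k = c k` be a pendant path of length `k ≥ 2` in a finite
simple graph `G` (an induced path with `deg(v) ≥ 3`, internal degrees `2`, and `deg(w_k) = 1`).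
Then the sum of the Euler Sombor edge-weights `√(d_i² + d_j² + d_i d_j)` over the `k` edges of
`P` is at least `√19 + (k-2)√12 + √7`, which in turn is greater than `k√12`. -/
theorem eus_pendant_path_bound {V : Type*} [Fintype V] (G : SimpleGraph V) (k : ℕ)
    (hk : 2 ≤ k) (c : ℕ → V)
    (hinj : Set.InjOn c (Set.Iic k))
    (hadj : ∀ i < k, G.Adj (c i) (c (i + 1)))
    (hind : ∀ i ≤ k, ∀ j ≤ k, G.Adj (c i) (c j) → j = i + 1 ∨ i = j + 1)
    (hdeg0 : 3 ≤ G.degree (c 0))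
    (hdegmid : ∀ i, 0 < i → i < k → G.degree (c i) = 2)
    (hdegend : G.degree (c k) = 1) :
    Real.sqrt 19 + ((k : ℝ) - 2) * Real.sqrt 12 + Real.sqrt 7 ≤
      ∑ i ∈ Finset.range k,
        Real.sqrt ((G.degree (c i) : ℝ)^2 + (G.degree (c (i + 1)) : ℝ)^2 +
          (G.degree (c i) : ℝ) * (G.degree (c (i + 1)) : ℝ)) ∧
    (k : ℝ) * Real.sqrt 12 <
      Real.sqrt 19 + ((k : ℝ) - 2) * Real.sqrt 12 + Real.sqrt 7 := by
  obtain ⟨m, rfl⟩ : ∃ m, k = m + 2 := ⟨k - 2, by omega⟩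
  set f : ℕ → ℝ := fun i =>
    Real.sqrt ((G.degree (c i) : ℝ)^2 + (G.degree (c (i + 1)) : ℝ)^2 +
      (G.degree (c i) : ℝ) * (G.degree (c (i + 1)) : ℝ)) with hf
  constructor
  · have hsum : ∑ i ∈ Finset.range (m + 2), f i
        = (∑ i ∈ Finset.range m, f (i + 1)) + f 0 + f (m + 1) := by
      rw [Finset.sum_range_succ, Finset.sum_range_succ']
    have h0 : Real.sqrt 19 ≤ f 0 := by
      have hd1 : G.degree (c 1) = 2 := hdegmid 1 one_pos (by omega)
      have hd0 : (3 : ℝ) ≤ (G.degree (c 0) : ℝ) := by exact_mod_cast hdeg0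
      simp only [hf, hd1]
      apply Real.sqrt_le_sqrt
      push_cast
      nlinarith
    have hend : Real.sqrt 7 ≤ f (m + 1) := by
      have hd1 : G.degree (c (m + 1)) = 2 := hdegmid (m + 1) (by omega) (by omega)
      simp only [hf, hd1, hdegend]
      push_cast
      norm_num
    have hmid : ∀ i ∈ Finset.range m, f (i + 1) = Real.sqrt 12 := by
      intro i hi
      have hi' := Finset.mem_range.mp hi
      have h1 : G.degree (c (i + 1)) = 2 := hdegmid (i + 1) (by omega) (by omega)
      have h2 : G.degree (c (i + 2)) = 2 := hdegmid (i + 2) (by omega) (by omega)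
      simp only [hf, show i + 1 + 1 = i + 2 from rfl, h1, h2]
      norm_num
    rw [hsum, Finset.sum_congr rfl hmid, Finset.sum_const, Finset.card_range]
    have : ((m : ℝ) + 2 - 2) * Real.sqrt 12 = (m : ℝ) * Real.sqrt 12 := by ring
    rw [nsmul_eq_mul]
    push_cast
    nlinarith [Real.sqrt_nonneg (12 : ℝ)]
  · have h133 : (11 : ℝ) < Real.sqrt 19 * Real.sqrt 7 := by
      rw [← Real.sqrt_mul (by norm_num)]
      norm_num
      rw [show (11 : ℝ) = Real.sqrt 121 by
        rw [show (121:ℝ) = 11^2 by norm_num, Real.sqrt_sq (by norm_num)]]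
      exact Real.sqrt_lt_sqrt (by norm_num) (by norm_num)
    nlinarith [Real.sq_sqrt (show (19:ℝ) ≥ 0 by norm_num),
      Real.sq_sqrt (show (7:ℝ) ≥ 0 by norm_num),
      Real.sq_sqrt (show (12:ℝ) ≥ 0 by norm_num),
      Real.sqrt_nonneg (19:ℝ), Real.sqrt_nonneg (7:ℝ), Real.sqrt_nonneg (12:ℝ)]
end

section
/- Let G be a connected unicyclic graph of order n with girth g ≤ n−2 having at least two vertices of degree at least 3. Then EUS(G) > 3√19 + 2(n−3)√3, and in particular EUS(G) > 3√19 + 2(n−4)√3 + √7. -/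
open scoped Classical

section Aux

open Finset

variable {V : Type*} [Fintype V] (G : SimpleGraph V)

/-- the symmetric function `(i, j) ↦ f i + f j` on `Sym2 V`. -/
noncomputable def pairSum (f : V → ℝ) : Sym2 V → ℝ :=
  Sym2.lift ⟨fun i j => f i + f j, fun i j => add_comm _ _⟩

lemma dart_sum_fst (f : V → ℝ) :
    ∑ d : G.Dart, f d.fst = ∑ v, (G.degree v : ℝ) * f v := by
  rw [← Finset.sum_fiberwise_of_maps_to (g := fun d : G.Dart => d.fst)
    (fun d _ => Finset.mem_univ _)]
  refine Finset.sum_congr rfl fun v _ => ?_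
  have h1 : ∀ d ∈ Finset.univ.filter (fun d : G.Dart => d.fst = v), f d.fst = f v := by
    intro d hd; simp only [Finset.mem_filter] at hd; rw [hd.2]
  have h2 : #(Finset.univ.filter (fun d : G.Dart => d.fst = v)) = G.degree v := by
    rw [← SimpleGraph.dart_fst_fiber_card_eq_degree G v]
  rw [Finset.sum_congr rfl h1, Finset.sum_const, h2]
  simp [mul_comm]

lemma dart_sum_edge (F : Sym2 V → ℝ) :
    ∑ d : G.Dart, F d.edge = ∑ e ∈ G.edgeFinset, 2 * F e := by
  rw [← Finset.sum_fiberwise_of_maps_to (t := G.edgeFinset) (g := fun d : G.Dart => d.edge)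
    (fun d _ => by simp [SimpleGraph.Dart.edge_mem])]
  refine Finset.sum_congr rfl fun e he => ?_
  have h1 : ∀ d ∈ Finset.univ.filter (fun d : G.Dart => d.edge = e), F d.edge = F e := by
    intro d hd; simp only [Finset.mem_filter] at hd; rw [hd.2]
  have h2 : #(Finset.univ.filter (fun d : G.Dart => d.edge = e)) = 2 := by
    rw [← SimpleGraph.dart_edge_fiber_card G e (by rwa [← SimpleGraph.mem_edgeFinset])]
  rw [Finset.sum_congr rfl h1, Finset.sum_const, h2]
  simp [two_mul]

lemma sum_pairSum_edges (f : V → ℝ) :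
    ∑ e ∈ G.edgeFinset, pairSum f e = ∑ v, (G.degree v : ℝ) * f v := by
  have hsnd : ∑ d : G.Dart, f d.snd = ∑ d : G.Dart, f d.fst := by
    refine Fintype.sum_equiv (SimpleGraph.Dart.symm_involutive (G := G)).toPerm
      (fun d => f d.snd) (fun d => f d.fst) fun d => ?_
    rfl
  have h1 : ∑ d : G.Dart, pairSum f d.edge = ∑ d : G.Dart, (f d.fst + f d.snd) := by
    refine Finset.sum_congr rfl fun d _ => ?_
    rcases d with ⟨⟨a, b⟩, hab⟩
    simp [pairSum, SimpleGraph.Dart.edge]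
  have h2 := dart_sum_edge G (pairSum f)
  have h3 := dart_sum_fst G f
  rw [h1, Finset.sum_add_distrib, hsnd, h3] at h2
  have h4 : ∑ e ∈ G.edgeFinset, 2 * pairSum f e = 2 * ∑ e ∈ G.edgeFinset, pairSum f e := by
    rw [Finset.mul_sum]
  rw [h4] at h2
  linarith

lemma eusWeight_ge_pairSum (e : Sym2 V) :
    Real.sqrt 3 / 2 * pairSum (fun v => (G.degree v : ℝ)) e ≤ eusWeight G e := by
  induction e using Sym2.inductionOn with
  | hf i j =>
    have ha : (0:ℝ) ≤ (G.degree i : ℝ) := Nat.cast_nonneg _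
    have hb : (0:ℝ) ≤ (G.degree j : ℝ) := Nat.cast_nonneg _
    simp only [eusWeight, pairSum, Sym2.lift_mk]
    rw [show Real.sqrt 3 / 2 * ((G.degree i : ℝ) + (G.degree j : ℝ))
        = Real.sqrt (3 * (((G.degree i : ℝ) + (G.degree j : ℝ)) / 2)^2) by
      rw [Real.sqrt_mul (by norm_num), Real.sqrt_sq (by positivity)]; ring]
    apply Real.sqrt_le_sqrt
    nlinarith [sq_nonneg ((G.degree i : ℝ) - (G.degree j : ℝ))]

lemma EUS_ge :
    Real.sqrt 3 / 2 * ∑ v, (G.degree v : ℝ)^2 ≤ EUS G := by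
  have h1 : ∑ e ∈ G.edgeFinset, Real.sqrt 3 / 2 * pairSum (fun v => (G.degree v : ℝ)) e
      ≤ ∑ e ∈ G.edgeFinset, eusWeight G e :=
    Finset.sum_le_sum fun e _ => eusWeight_ge_pairSum G e
  have h2 : ∑ e ∈ G.edgeFinset, Real.sqrt 3 / 2 * pairSum (fun v => (G.degree v : ℝ)) e
      = Real.sqrt 3 / 2 * ∑ v, (G.degree v : ℝ)^2 := by
    rw [← Finset.mul_sum, sum_pairSum_edges G (fun v => (G.degree v : ℝ))]
    congr 1
    exact Finset.sum_congr rfl fun v _ => by ring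
  rw [h2] at h1
  exact h1

lemma int_sq_add_self_nonneg (x : ℤ) : 0 ≤ x^2 + x := by
  rcases le_or_gt 0 x with h | h
  · positivity
  · have hx1 : x ≤ -1 := by omega
    nlinarith [mul_nonneg (by linarith : (0:ℤ) ≤ -x) (by linarith : (0:ℤ) ≤ -(x+1))]

end Aux

set_option maxHeartbeats 1000000 in
/-- Let `G` be a connected unicyclic graph of order `n` with girth `g ≤ n - 2` having at least
two vertices of degree at least `3`. Then `EUS(G) > 3√19 + 2(n-3)√3`, and in particular
`EUS(G) > 3√19 + 2(n-4)√3 + √7`. -/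
theorem eus_unicyclic_two_branch_vertices {V : Type*} [Fintype V] (G : SimpleGraph V)
    (n g : ℕ) (hcard : Fintype.card V = n)
    (hconn : G.Connected) (hunicyclic : G.edgeSet.ncard = Fintype.card V)
    (hg : G.egirth = (g : ℕ∞)) (hgn : g + 2 ≤ n)
    (hbranch : ∃ u v : V, u ≠ v ∧ 3 ≤ G.degree u ∧ 3 ≤ G.degree v) :
    3 * Real.sqrt 19 + 2 * ((n : ℝ) - 3) * Real.sqrt 3 < EUS G ∧
      3 * Real.sqrt 19 + 2 * ((n : ℝ) - 4) * Real.sqrt 3 + Real.sqrt 7 < EUS G := by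
  obtain ⟨u, v, huv, hu, hv⟩ := hbranch
  -- edge count
  have hedge : G.edgeFinset.card = n := by
    rw [← hcard, ← hunicyclic, SimpleGraph.edgeFinset, Set.ncard_eq_toFinset_card']
  have hdegsum : ∑ w, G.degree w = 2 * n := by
    rw [SimpleGraph.sum_degrees_eq_twice_card_edges, hedge]
  -- integer degree sum of squares bound
  set D : V → ℤ := fun w => ((G.degree w : ℤ) - 2) with hD
  have hsumD : ∑ w, D w = 0 := by
    have : ∑ w, D w = (∑ w, (G.degree w : ℤ)) - 2 * Fintype.card V := by
      simp [hD, Finset.sum_sub_distrib, Finset.card_univ, mul_comm]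
    rw [this, hcard]
    have : (∑ w, (G.degree w : ℤ)) = (2 * n : ℤ) := by exact_mod_cast congrArg Nat.cast hdegsum
    rw [this]; ring
  -- sum over the rest
  have hv' : v ∈ (Finset.univ.erase u) := Finset.mem_erase.mpr ⟨huv.symm, Finset.mem_univ v⟩
  have hu' : u ∈ (Finset.univ : Finset V) := Finset.mem_univ u
  have hsplit : ∀ f : V → ℤ, ∑ w, f w
      = f u + f v + ∑ w ∈ (Finset.univ.erase u).erase v, f w := by
    intro f
    rw [← Finset.add_sum_erase _ f hu', ← Finset.add_sum_erase _ f hv']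
    ring
  have hrest : ∑ w ∈ (Finset.univ.erase u).erase v, (-(D w)) ≤
      ∑ w ∈ (Finset.univ.erase u).erase v, (D w)^2 :=
    Finset.sum_le_sum fun w _ => by
      have := int_sq_add_self_nonneg (D w)
      linarith
  have hDu : 1 ≤ D u := by simp only [hD]; omega
  have hDv : 1 ≤ D v := by simp only [hD]; omega
  have h1 := hsplit (fun w => D w)
  have h2 := hsplit (fun w => (D w)^2)
  have hrest' : ∑ w ∈ (Finset.univ.erase u).erase v, D w = -(D u + D v) := by
    rw [h1] at hsumD; linarith
  have hrestneg : ∑ w ∈ (Finset.univ.erase u).erase v, (-(D w)) = D u + D v := by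
    rw [Finset.sum_neg_distrib, hrest']; ring
  have hSq : (4:ℤ) ≤ ∑ w, (D w)^2 := by
    rw [hrestneg] at hrest
    rw [h2]
    nlinarith [hrest, hDu, hDv]
  have hZ : (4*(n:ℤ)+4) ≤ ∑ w, (G.degree w : ℤ)^2 := by
    have he : ∑ w, (G.degree w : ℤ)^2 = ∑ w, ((D w)^2 + 4 * D w + 4) :=
      Finset.sum_congr rfl fun w _ => by simp only [hD]; ring
    rw [he, Finset.sum_add_distrib, Finset.sum_add_distrib]
    have h4D : ∑ x : V, 4 * D x = 0 := by rw [← Finset.mul_sum, hsumD]; ring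
    rw [h4D, Finset.sum_const, Finset.card_univ, hcard]
    simp only [nsmul_eq_mul]
    push_cast
    linarith
  have hsq_real : (4*(n:ℝ)+4) ≤ ∑ w, (G.degree w : ℝ)^2 := by
    have hcastsum : ∑ w, (G.degree w : ℝ)^2 = ((∑ w, (G.degree w : ℤ)^2 : ℤ) : ℝ) := by
      push_cast; rfl
    rw [hcastsum]
    exact_mod_cast hZ
  have hE := EUS_ge G
  have hE2 : 2 * Real.sqrt 3 * (n:ℝ) + 2 * Real.sqrt 3 ≤ EUS G := by
    have hm := mul_le_mul_of_nonneg_left hsq_real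
      (by positivity : (0:ℝ) ≤ Real.sqrt 3 / 2)
    nlinarith [hE, hm]
  have s3l : (1.73:ℝ) < Real.sqrt 3 := by
    nlinarith [Real.sq_sqrt (by norm_num : (0:ℝ) ≤ 3), Real.sqrt_nonneg 3]
  have s19u : Real.sqrt 19 < 4.36 := by
    nlinarith [Real.sq_sqrt (by norm_num : (0:ℝ) ≤ 19), Real.sqrt_nonneg 19]
  have s7u : Real.sqrt 7 < 2.646 := by
    nlinarith [Real.sq_sqrt (by norm_num : (0:ℝ) ≤ 7), Real.sqrt_nonneg 7]
  constructor
  · nlinarith [hE2, s3l, s19u]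
  · nlinarith [hE2, s3l, s19u, s7u]
end

section
/- Let n > p ≥ 1 with n − p ≥ 2, and let a₁, a₂, …, a_{n−p} be nonnegative integers with a₁ + a₂ + ⋯ + a_{n−p} = p and a₁ = max_k a_k < p. Let H = S(a₁, …, a_{n−p}) be the graph obtained from the complete graph K_{n−p} by attaching aₖ pendant vertices to its k-th vertex, and let H′ = S(a₁+1, a₂, …, a_{i−1}, aᵢ−1, a_{i+1}, …, a_{n−p}) for some index i with aᵢ ≥ 1. Then EUS(H′) > EUS(H). -/
open scoped Classical

/-- Offset of the pendant vertices attached to the `k`-th clique vertex in `Sgraph`: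
the pendants attached to clique vertex `k` are the vertices `n-p+r` for
`pendOffset a k ≤ r < pendOffset a k + a k`. -/
def pendOffset {q : ℕ} (a : Fin q → ℕ) (k : Fin q) : ℕ :=
  ∑ s ∈ Finset.univ.filter (fun s => s < k), a s

/-- `Sgraph n p a` : the graph `S(a₁, …, a_{n-p})` of order `n` obtained from the complete
graph on the vertices `0, …, n-p-1` by attaching `a k` pendant vertices to its `k`-th vertex,
for each `k`; the pendant vertices are `n-p, …, n-1` (assuming `∑ k, a k = p`). -/
def Sgraph (n p : ℕ) (a : Fin (n - p) → ℕ) : SimpleGraph (Fin n) :=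
  SimpleGraph.fromRel (fun i j =>
    (i.val < n - p ∧ j.val < n - p) ∨
    (∃ k : Fin (n - p), i.val = k.val ∧ n - p ≤ j.val ∧
      pendOffset a k ≤ j.val - (n - p) ∧ j.val - (n - p) < pendOffset a k + a k))

noncomputable def W (x y : ℝ) : ℝ := Real.sqrt (x^2 + y^2 + x*y)

lemma sq_le_imp {a b : ℝ} (ha : 0 ≤ a) (hb : 0 ≤ b) (h : a^2 ≤ b^2) : a ≤ b := by
  nlinarith

/-- slope lemma in m-form -/
lemma slope_m (m s t : ℝ) (hm : 0 ≤ m) (hst : t ≤ s) :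
    Real.sqrt ((t+1)^2+m) - Real.sqrt (t^2+m) ≤ Real.sqrt ((s+1)^2+m) - Real.sqrt (s^2+m) := by
  set P := Real.sqrt (t^2+m) with hP
  set Q := Real.sqrt ((t+1)^2+m) with hQ
  set R := Real.sqrt (s^2+m) with hR
  set S := Real.sqrt ((s+1)^2+m) with hS
  have hP0 : 0 ≤ P := Real.sqrt_nonneg _
  have hQ0 : 0 ≤ Q := Real.sqrt_nonneg _
  have hR0 : 0 ≤ R := Real.sqrt_nonneg _
  have hS0 : 0 ≤ S := Real.sqrt_nonneg _
  have hP2 : P^2 = t^2+m := Real.sq_sqrt (by positivity)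
  have hQ2 : Q^2 = (t+1)^2+m := Real.sq_sqrt (by positivity)
  have hR2 : R^2 = s^2+m := Real.sq_sqrt (by positivity)
  have hS2 : S^2 = (s+1)^2+m := Real.sq_sqrt (by positivity)
  -- lower bound for S*P
  have hSP : (s+1)*t + m ≤ S*P := by
    rcases le_or_gt ((s+1)*t + m) 0 with h | h
    · exact h.trans (mul_nonneg hS0 hP0)
    · apply sq_le_imp h.le (mul_nonneg hS0 hP0)
      have : (S*P)^2 = ((s+1)^2+m)*(t^2+m) := by rw [mul_pow, hS2, hP2]
      rw [this]; nlinarith [sq_nonneg ((s+1) - t)]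
  -- upper bound for Q*R
  have hQR : Q*R ≤ S*P + (s - t) := by
    apply sq_le_imp (mul_nonneg hQ0 hR0) (by nlinarith)
    have h1 : (Q*R)^2 = ((t+1)^2+m)*(s^2+m) := by rw [mul_pow, hQ2, hR2]
    have h2 : (S*P)^2 = ((s+1)^2+m)*(t^2+m) := by rw [mul_pow, hS2, hP2]
    nlinarith [hSP, sq_nonneg (s-t)]
  have key : Q + R ≤ S + P := by
    apply sq_le_imp (by linarith) (by linarith)
    nlinarith [hQR]
  linarith

/-- slope lemma for W in the first variable -/
lemma slope_W (c s t : ℝ) (hst : t ≤ s) :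
    W (t+1) c - W t c ≤ W (s+1) c - W s c := by
  have e : ∀ x : ℝ, W x c = Real.sqrt ((x + c/2)^2 + 3*c^2/4) := by
    intro x; unfold W; congr 1; ring
  rw [e, e, e, e]
  have h := slope_m (3*c^2/4) (s + c/2) (t + c/2) (by positivity) (by linarith)
  convert h using 3 <;> ring

lemma mono_W (c s t : ℝ) (hc : 0 ≤ c) (ht : 0 ≤ t) (hst : t ≤ s) : W t c ≤ W s c := by
  apply Real.sqrt_le_sqrt; nlinarith

lemma strict_W (x y : ℝ) (hy : 1 ≤ y) (hxy : y ≤ x) : W x y < W (x+1) (y-1) := by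
  apply Real.sqrt_lt_sqrt (by nlinarith) (by nlinarith)

lemma W_symm (x y : ℝ) : W x y = W y x := by unfold W; ring_nf

open Finset SimpleGraph

lemma two_mul_sum_edgeFinset {V : Type*} [Fintype V] [DecidableEq V] (G : SimpleGraph V)
    [DecidableRel G.Adj] (f : Sym2 V → ℝ) :
    2 * ∑ e ∈ G.edgeFinset, f e = ∑ v, ∑ w ∈ G.neighborFinset v, f s(v, w) := by
  have step1 : ∑ d : G.Dart, f d.edge = 2 * ∑ e ∈ G.edgeFinset, f e := by
    rw [← Finset.sum_fiberwise_of_maps_to (g := Dart.edge) (t := G.edgeFinset)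
      (fun d _ => by simp [mem_edgeFinset])]
    rw [Finset.mul_sum]
    refine Finset.sum_congr rfl fun e he => ?_
    have he' : e ∈ G.edgeSet := by rwa [← mem_edgeFinset]
    have hcard : #{d : G.Dart | d.edge = e} = 2 := G.dart_edge_fiber_card e he'
    calc ∑ d ∈ ({d : G.Dart | d.edge = e} : Finset _), f d.edge
        = ∑ d ∈ ({d : G.Dart | d.edge = e} : Finset _), f e := by
          refine Finset.sum_congr rfl fun d hd => ?_
          simp only [Finset.mem_filter] at hd
          rw [hd.2]
      _ = 2 * f e := by rw [Finset.sum_const, hcard]; ring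
  have step2 : ∑ d : G.Dart, f d.edge = ∑ v, ∑ w ∈ G.neighborFinset v, f s(v, w) := by
    rw [← Finset.sum_fiberwise_of_maps_to (g := fun d : G.Dart => d.fst) (t := Finset.univ)
      (fun d _ => Finset.mem_univ _)]
    refine Finset.sum_congr rfl fun v _ => ?_
    refine Finset.sum_bij' (fun d _ => d.snd)
      (fun w hw => Dart.mk (v, w) (by rwa [mem_neighborFinset] at hw)) ?_ ?_ ?_ ?_ ?_
    · intro d hd
      simp only [Finset.mem_filter, Finset.mem_univ, true_and] at hd
      rw [mem_neighborFinset]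
      exact hd ▸ d.adj
    · intro w hw
      simp
    · intro d hd
      simp only [Finset.mem_filter, Finset.mem_univ, true_and] at hd
      ext <;> simp [hd]
    · intro w hw
      rfl
    · intro d hd
      simp only [Finset.mem_filter, Finset.mem_univ, true_and] at hd
      subst hd
      rfl
  linarith [step1, step2]

section off
variable {q : ℕ} (a : Fin q → ℕ)

lemma off_add (k : Fin q) :
    pendOffset a k + a k = ∑ s ∈ Finset.univ.filter (fun s => s ≤ k), a s := by
  have h : (Finset.univ.filter (fun s => s ≤ k)) =
      insert k (Finset.univ.filter (fun s : Fin q => s < k)) := by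
    ext s
    simp [le_iff_lt_or_eq, or_comm]
  rw [h, Finset.sum_insert (by simp), pendOffset, add_comm]

lemma off_add_le (k : Fin q) : pendOffset a k + a k ≤ ∑ s, a s := by
  rw [off_add]
  exact Finset.sum_le_sum_of_subset (Finset.subset_univ _)

lemma off_disj {k l : Fin q} (h : k < l) : pendOffset a k + a k ≤ pendOffset a l := by
  rw [off_add, pendOffset]
  refine Finset.sum_le_sum_of_subset ?_
  intro s hs
  simp only [Finset.mem_filter, Finset.mem_univ, true_and] at *
  exact lt_of_le_of_lt hs h

lemma off_mono {k l : Fin q} (h : k ≤ l) : pendOffset a k ≤ pendOffset a l := by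
  refine Finset.sum_le_sum_of_subset ?_
  intro s hs
  simp only [Finset.mem_filter, Finset.mem_univ, true_and] at *
  exact lt_of_lt_of_le hs h

lemma off_succ (k : Fin q) (h : k.val + 1 < q) :
    pendOffset a ⟨k.val + 1, h⟩ = pendOffset a k + a k := by
  rw [off_add, pendOffset]
  apply Finset.sum_congr _ (fun _ _ => rfl)
  ext s
  simp only [Finset.mem_filter, Finset.mem_univ, true_and]
  rw [Fin.lt_def, Fin.le_def]
  simp only [Fin.val_mk]
  omega

lemma off_last (h : 0 < q) :
    pendOffset a ⟨q - 1, by omega⟩ + a ⟨q - 1, by omega⟩ = ∑ s, a s := by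
  rw [off_add]
  apply Finset.sum_congr _ (fun _ _ => rfl)
  ext s
  simp only [Finset.mem_filter, Finset.mem_univ, true_and, iff_true]
  rw [Fin.le_def]
  simp only [Fin.val_mk]
  omega

lemma off_exists {t : ℕ} (ht : t < ∑ s, a s) :
    ∃ k, pendOffset a k ≤ t ∧ t < pendOffset a k + a k := by
  have hq : 0 < q := by
    rcases Nat.eq_zero_or_pos q with h | h
    · subst h; simp at ht
    · exact h
  set S := Finset.univ.filter (fun k : Fin q => pendOffset a k ≤ t) with hS
  have hne : S.Nonempty := by
    refine ⟨⟨0, hq⟩, ?_⟩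
    simp only [hS, Finset.mem_filter, Finset.mem_univ, true_and]
    have h0 : pendOffset a ⟨0, hq⟩ = 0 := by
      rw [pendOffset]
      apply Finset.sum_eq_zero
      intro s hs
      simp only [Finset.mem_filter, Finset.mem_univ, true_and, Fin.lt_def, Fin.val_mk] at hs
      omega
    omega
  set k := S.max' hne with hk
  have hkS : k ∈ S := S.max'_mem hne
  simp only [hS, Finset.mem_filter, Finset.mem_univ, true_and] at hkS
  refine ⟨k, hkS, ?_⟩
  by_contra hcon
  push_neg at hcon
  rcases Nat.lt_or_ge (k.val + 1) q with h | h
  · have h1 : pendOffset a ⟨k.val + 1, h⟩ ≤ t := by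
      rw [off_succ]; omega
    have h2 : (⟨k.val + 1, h⟩ : Fin q) ∈ S := by
      simp only [hS, Finset.mem_filter, Finset.mem_univ, true_and]; exact h1
    have h3 := S.le_max' _ h2
    rw [← hk, Fin.le_def, Fin.val_mk] at h3
    omega
  · have hkq : k.val = q - 1 := by omega
    have : pendOffset a ⟨q - 1, by omega⟩ + a ⟨q - 1, by omega⟩ = ∑ s, a s := off_last a hq
    have hkk : k = ⟨q - 1, by omega⟩ := by ext; simp [hkq]
    rw [hkk] at hcon
    omega


lemma off_unique {t : ℕ} {k l : Fin q}
    (hk1 : pendOffset a k ≤ t) (hk2 : t < pendOffset a k + a k)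
    (hl1 : pendOffset a l ≤ t) (hl2 : t < pendOffset a l + a l) : k = l := by
  rcases lt_trichotomy k l with h | h | h
  · have := off_disj a h; omega
  · exact h
  · have := off_disj a h; omega

end off

section G
variable (n p : ℕ) (a : Fin (n - p) → ℕ)

/-- the k-th clique vertex, as a vertex of `Fin n` -/
def cvert (k : Fin (n - p)) : Fin n := ⟨k.val, lt_of_lt_of_le k.isLt (Nat.sub_le n p)⟩

/-- clique neighbors of clique vertex `i` -/
def F1 (i : Fin n) : Finset (Fin n) :=
  Finset.univ.filter (fun j => j.val < n - p ∧ j ≠ i)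

/-- pendant neighbors of clique vertex `k` -/
def F2 (k : Fin (n - p)) : Finset (Fin n) :=
  Finset.univ.filter (fun j => n - p ≤ j.val ∧ pendOffset a k ≤ j.val - (n - p) ∧
    j.val - (n - p) < pendOffset a k + a k)

lemma adj_iff (i j : Fin n) :
    (Sgraph n p a).Adj i j ↔ i ≠ j ∧
      (((i.val < n - p ∧ j.val < n - p) ∨
        (∃ k : Fin (n - p), i.val = k.val ∧ n - p ≤ j.val ∧
          pendOffset a k ≤ j.val - (n - p) ∧ j.val - (n - p) < pendOffset a k + a k)) ∨
       ((j.val < n - p ∧ i.val < n - p) ∨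
        (∃ k : Fin (n - p), j.val = k.val ∧ n - p ≤ i.val ∧
          pendOffset a k ≤ i.val - (n - p) ∧ i.val - (n - p) < pendOffset a k + a k))) := by
  rw [Sgraph, SimpleGraph.fromRel_adj]

lemma nbr_clique (k : Fin (n - p)) :
    (Sgraph n p a).neighborFinset (cvert n p k) = F1 n p (cvert n p k) ∪ F2 n p a k := by
  ext j
  rw [mem_neighborFinset, adj_iff, Finset.mem_union, F1, F2]
  simp only [Finset.mem_filter, Finset.mem_univ, true_and]
  have hck : (cvert n p k).val = k.val := rfl
  have hkq : k.val < n - p := k.isLt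
  constructor
  · rintro ⟨hne, h | h⟩
    · rcases h with ⟨h1, h2⟩ | ⟨k', hk', h2, h3, h4⟩
      · exact Or.inl ⟨h2, Ne.symm hne⟩
      · have : k' = k := by ext; rw [← hk', hck]
        subst this
        exact Or.inr ⟨h2, h3, h4⟩
    · rcases h with ⟨h1, h2⟩ | ⟨k', hk', h2, h3, h4⟩
      · exact Or.inl ⟨h1, Ne.symm hne⟩
      · rw [hck] at h2; omega
  · rintro (⟨h1, h2⟩ | ⟨h1, h2, h3⟩)
    · refine ⟨Ne.symm h2, Or.inl (Or.inl ⟨by omega, h1⟩)⟩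
    · refine ⟨?_, Or.inl (Or.inr ⟨k, rfl, h1, h2, h3⟩)⟩
      intro hje
      rw [hje] at hck
      omega

lemma nbr_pend (j : Fin n) (k : Fin (n - p)) (hj : n - p ≤ j.val)
    (h2 : pendOffset a k ≤ j.val - (n - p)) (h3 : j.val - (n - p) < pendOffset a k + a k) :
    (Sgraph n p a).neighborFinset j = {cvert n p k} := by
  ext x
  rw [mem_neighborFinset, adj_iff, Finset.mem_singleton]
  have hkq : k.val < n - p := k.isLt
  constructor
  · rintro ⟨hne, h | h⟩
    · rcases h with ⟨h1, _⟩ | ⟨k', hk', _, _, _⟩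
      · omega
      · rw [hk'] at hj; omega
    · rcases h with ⟨_, h1⟩ | ⟨k', hk', hx2, hx3, hx4⟩
      · omega
      · have hkk : k' = k := off_unique a hx3 hx4 h2 h3
        subst hkk
        ext
        exact hk' 
  · rintro rfl
    refine ⟨?_, Or.inr (Or.inr ⟨k, rfl, hj, h2, h3⟩)⟩
    intro hje
    have : j.val = k.val := by rw [hje]; rfl
    omega


lemma card_F1 (k : Fin (n - p)) : (F1 n p (cvert n p k)).card = n - p - 1 := by
  have hkq : k.val < n - p := k.isLt
  rw [show n - p - 1 = ((Finset.range (n - p)).erase k.val).card by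
    rw [Finset.card_erase_of_mem (Finset.mem_range.mpr hkq), Finset.card_range]]
  apply Finset.card_bij (fun j _ => j.val)
  · intro j hj
    rw [F1, Finset.mem_filter] at hj
    rw [Finset.mem_erase, Finset.mem_range]
    refine ⟨?_, hj.2.1⟩
    intro h
    exact hj.2.2 (by ext; exact h)
  · intro j1 h1 j2 h2 h
    ext; exact h
  · intro m hm
    rw [Finset.mem_erase, Finset.mem_range] at hm
    refine ⟨⟨m, by omega⟩, ?_, rfl⟩
    rw [F1, Finset.mem_filter]
    refine ⟨Finset.mem_univ _, hm.2, ?_⟩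
    intro h
    exact hm.1 (congrArg Fin.val h)

lemma card_F2 (hn : n - p + p = n) (hsum : ∑ s, a s = p) (k : Fin (n - p)) :
    (F2 n p a k).card = a k := by
  have hbd : pendOffset a k + a k ≤ p := by
    have := off_add_le a k
    omega
  rw [show a k = (Finset.Ico (n - p + pendOffset a k) (n - p + pendOffset a k + a k)).card by
    rw [Nat.card_Ico]; omega]
  apply Finset.card_bij (fun j _ => j.val)
  · intro j hj
    rw [F2, Finset.mem_filter] at hj
    rw [Finset.mem_Ico]
    omega
  · intro j1 h1 j2 h2 h
    ext; exact h
  · intro m hm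
    rw [Finset.mem_Ico] at hm
    refine ⟨⟨m, by omega⟩, ?_, rfl⟩
    rw [F2, Finset.mem_filter]
    simp only [Finset.mem_univ, true_and, Fin.val_mk]
    omega

lemma deg_clique (hn : n - p + p = n) (hsum : ∑ s, a s = p) (k : Fin (n - p)) :
    (Sgraph n p a).degree (cvert n p k) = (n - p - 1) + a k := by
  rw [← SimpleGraph.card_neighborFinset_eq_degree, nbr_clique,
    Finset.card_union_of_disjoint, card_F1, card_F2 n p a hn hsum]
  rw [Finset.disjoint_left]
  intro j hj1 hj2
  rw [F1, Finset.mem_filter] at hj1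
  rw [F2, Finset.mem_filter] at hj2
  omega

lemma deg_pend (j : Fin n) (k : Fin (n - p)) (hj : n - p ≤ j.val)
    (h2 : pendOffset a k ≤ j.val - (n - p)) (h3 : j.val - (n - p) < pendOffset a k + a k) :
    (Sgraph n p a).degree j = 1 := by
  rw [← SimpleGraph.card_neighborFinset_eq_degree, nbr_pend n p a j k hj h2 h3,
    Finset.card_singleton]

/-- real degree of clique vertex -/
noncomputable def Dr (k : Fin (n - p)) : ℝ := ((n - p - 1 + a k : ℕ) : ℝ)

lemma eusWeight_mk (G : SimpleGraph (Fin n)) (i j : Fin n) :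
    eusWeight G s(i, j) = W (G.degree i : ℝ) (G.degree j : ℝ) := rfl

lemma pend_partition (hn : n - p + p = n) (hsum : ∑ s, a s = p) :
    Finset.univ.filter (fun v : Fin n => ¬ v.val < n - p) =
      Finset.univ.biUnion (fun k => F2 n p a k) := by
  ext v
  simp only [Finset.mem_filter, Finset.mem_biUnion, Finset.mem_univ, true_and, not_lt]
  constructor
  · intro hv
    have ht : v.val - (n - p) < ∑ s, a s := by
      rw [hsum]
      have := v.isLt
      omega
    obtain ⟨k, hk1, hk2⟩ := off_exists a ht
    exact ⟨k, Finset.mem_filter.mpr ⟨Finset.mem_univ _, hv, hk1, hk2⟩⟩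
  · rintro ⟨k, hk⟩
    rw [F2, Finset.mem_filter] at hk
    exact hk.2.1

lemma F2_pairwise_disjoint :
    ∀ k ∈ (Finset.univ : Finset (Fin (n - p))), ∀ l ∈ Finset.univ, k ≠ l →
      Disjoint (F2 n p a k) (F2 n p a l) := by
  intro k _ l _ hkl
  rw [Finset.disjoint_left]
  intro j hj1 hj2
  rw [F2, Finset.mem_filter] at hj1 hj2
  exact hkl (off_unique a hj1.2.2.1 hj1.2.2.2 hj2.2.2.1 hj2.2.2.2)

lemma sgraph_formula (hn : n - p + p = n) (hq : 1 ≤ n - p) (hsum : ∑ s, a s = p) :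
    EUS (Sgraph n p a) =
      (∑ k, ∑ l ∈ Finset.univ.erase k, W (Dr n p a k) (Dr n p a l)) / 2
      + ∑ k, (a k : ℝ) * W (Dr n p a k) 1 := by
  have key := two_mul_sum_edgeFinset (Sgraph n p a) (eusWeight (Sgraph n p a))
  rw [show (∑ e ∈ (Sgraph n p a).edgeFinset, eusWeight (Sgraph n p a) e)
      = EUS (Sgraph n p a) from rfl] at key
  have hsplit : (∑ v, ∑ w ∈ (Sgraph n p a).neighborFinset v, eusWeight (Sgraph n p a) s(v, w))
      = (∑ v ∈ Finset.univ.filter (fun v : Fin n => v.val < n - p),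
          ∑ w ∈ (Sgraph n p a).neighborFinset v, eusWeight (Sgraph n p a) s(v, w))
      + (∑ v ∈ Finset.univ.filter (fun v : Fin n => ¬ v.val < n - p),
          ∑ w ∈ (Sgraph n p a).neighborFinset v, eusWeight (Sgraph n p a) s(v, w)) :=
    (Finset.sum_filter_add_sum_filter_not _ _ _).symm
  -- clique part
  have hA : (∑ v ∈ Finset.univ.filter (fun v : Fin n => v.val < n - p),
          ∑ w ∈ (Sgraph n p a).neighborFinset v, eusWeight (Sgraph n p a) s(v, w))
      = ∑ k : Fin (n - p), (∑ l ∈ Finset.univ.erase k, W (Dr n p a k) (Dr n p a l)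
          + (a k : ℝ) * W (Dr n p a k) 1) := by
    refine Finset.sum_bij' (fun v hv => (⟨v.val, (Finset.mem_filter.mp hv).2⟩ : Fin (n - p)))
      (fun k _ => cvert n p k) ?_ ?_ ?_ ?_ ?_
    · intro v hv; exact Finset.mem_univ _
    · intro k _
      rw [Finset.mem_filter]
      exact ⟨Finset.mem_univ _, k.isLt⟩
    · intro v hv; rfl
    · intro k _; rfl
    · intro v hv
      have hvlt : v.val < n - p := (Finset.mem_filter.mp hv).2
      show (∑ w ∈ (Sgraph n p a).neighborFinset (cvert n p ⟨v.val, hvlt⟩),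
          eusWeight (Sgraph n p a) s(cvert n p ⟨v.val, hvlt⟩, w))
        = ∑ l ∈ Finset.univ.erase (⟨v.val, hvlt⟩ : Fin (n - p)),
            W (Dr n p a ⟨v.val, hvlt⟩) (Dr n p a l)
          + (a (⟨v.val, hvlt⟩ : Fin (n - p)) : ℝ) * W (Dr n p a ⟨v.val, hvlt⟩) 1
      set k : Fin (n - p) := (⟨v.val, hvlt⟩ : Fin (n - p)) with hk
      rw [nbr_clique, Finset.sum_union (by
        rw [Finset.disjoint_left]
        intro j hj1 hj2
        rw [F1, Finset.mem_filter] at hj1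
        rw [F2, Finset.mem_filter] at hj2
        omega)]
      congr 1
      · -- clique-clique edges
        refine Finset.sum_bij' (fun w hw => (⟨w.val, (Finset.mem_filter.mp hw).2.1⟩ : Fin (n - p)))
          (fun l _ => cvert n p l) ?_ ?_ ?_ ?_ ?_
        · intro w hw
          rw [F1, Finset.mem_filter] at hw
          rw [Finset.mem_erase]
          refine ⟨?_, Finset.mem_univ _⟩
          intro h
          apply hw.2.2
          have h2 := congrArg Fin.val h
          ext
          exact h2
        · intro l hl
          rw [Finset.mem_erase] at hl
          rw [F1, Finset.mem_filter]
          refine ⟨Finset.mem_univ _, l.isLt, ?_⟩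
          intro h
          apply hl.1
          have h2 := congrArg Fin.val h
          ext
          exact h2
        · intro w hw; rfl
        · intro l _; rfl
        · intro w hw
          have hwlt : w.val < n - p := (Finset.mem_filter.mp hw).2.1
          show eusWeight (Sgraph n p a) s(cvert n p k, cvert n p ⟨w.val, hwlt⟩) = _
          rw [eusWeight_mk, deg_clique n p a hn hsum, deg_clique n p a hn hsum]
          rfl
      · -- clique-pendant edges
        have hconst : ∀ w ∈ F2 n p a k, eusWeight (Sgraph n p a) s(cvert n p k, w)
            = W (Dr n p a k) 1 := by
          intro w hw
          rw [F2, Finset.mem_filter] at hw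
          rw [eusWeight_mk, deg_clique n p a hn hsum,
            deg_pend n p a w k hw.2.1 hw.2.2.1 hw.2.2.2]
          norm_num [Dr]
        rw [Finset.sum_congr rfl hconst, Finset.sum_const, card_F2 n p a hn hsum,
          nsmul_eq_mul]
  -- pendant part
  have hB : (∑ v ∈ Finset.univ.filter (fun v : Fin n => ¬ v.val < n - p),
          ∑ w ∈ (Sgraph n p a).neighborFinset v, eusWeight (Sgraph n p a) s(v, w))
      = ∑ k : Fin (n - p), (a k : ℝ) * W (Dr n p a k) 1 := by
    rw [pend_partition n p a hn hsum, Finset.sum_biUnion (F2_pairwise_disjoint n p a)]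
    refine Finset.sum_congr rfl fun k _ => ?_
    have hconst : ∀ w ∈ F2 n p a k,
        (∑ x ∈ (Sgraph n p a).neighborFinset w, eusWeight (Sgraph n p a) s(w, x))
          = W (Dr n p a k) 1 := by
      intro w hw
      rw [F2, Finset.mem_filter] at hw
      rw [nbr_pend n p a w k hw.2.1 hw.2.2.1 hw.2.2.2, Finset.sum_singleton,
        eusWeight_mk, deg_pend n p a w k hw.2.1 hw.2.2.1 hw.2.2.2,
        deg_clique n p a hn hsum, W_symm]
      norm_num [Dr]
    rw [Finset.sum_congr rfl hconst, Finset.sum_const, card_F2 n p a hn hsum, nsmul_eq_mul]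
  rw [hsplit, hA, hB, Finset.sum_add_distrib] at key
  linarith [key]

end G

/-- Let `n > p ≥ 1` with `n - p ≥ 2`, and let `a : Fin (n-p) → ℕ` with `∑ a = p` and
`a u = max_k a k < p`. If `a v ≥ 1` for some `v ≠ u`, and `a'` is obtained from `a` by
increasing `a u` by one and decreasing `a v` by one, then
`EUS(S(a')) > EUS(S(a))`. -/
theorem eus_Sgraph_shift (n p : ℕ) (hp : 1 ≤ p) (hnp : p + 2 ≤ n)
    (a : Fin (n - p) → ℕ) (hsum : ∑ k, a k = p)
    (u v : Fin (n - p)) (huv : u ≠ v)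
    (hmax : ∀ k, a k ≤ a u) (hlt : a u < p) (hv : 1 ≤ a v) :
    EUS (Sgraph n p a) <
      EUS (Sgraph n p (Function.update (Function.update a u (a u + 1)) v (a v - 1))) := by
  have hq2 : 2 ≤ n - p := by omega
  have hn : n - p + p = n := by omega
  set a' : Fin (n - p) → ℕ := Function.update (Function.update a u (a u + 1)) v (a v - 1)
    with ha'
  have ha'u : a' u = a u + 1 := by
    rw [ha', Function.update_of_ne huv, Function.update_self]
  have ha'v : a' v = a v - 1 := by
    rw [ha', Function.update_self]
  have ha'l : ∀ l, l ≠ u → l ≠ v → a' l = a l := by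
    intro l hlu hlv
    rw [ha', Function.update_of_ne hlv, Function.update_of_ne hlu]
  have hvmem : v ∈ Finset.univ.erase u := Finset.mem_erase.mpr ⟨Ne.symm huv, Finset.mem_univ _⟩
  set E : Finset (Fin (n - p)) := (Finset.univ.erase u).erase v with hE
  have hEmem : ∀ k ∈ E, k ≠ u ∧ k ≠ v := by
    intro k hk
    rw [hE, Finset.mem_erase, Finset.mem_erase] at hk
    exact ⟨hk.2.1, hk.1⟩
  have hdecompN : ∀ b : Fin (n - p) → ℕ, ∑ k, b k = b u + (b v + ∑ k ∈ E, b k) := by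
    intro b
    rw [← Finset.add_sum_erase _ _ (Finset.mem_univ u), ← Finset.add_sum_erase _ _ hvmem]
  have htailN : ∑ k ∈ E, a' k = ∑ k ∈ E, a k :=
    Finset.sum_congr rfl fun k hk => ha'l k (hEmem k hk).1 (hEmem k hk).2
  have hsum' : ∑ k, a' k = p := by
    have h1 := hdecompN a'
    have h2 := hdecompN a
    rw [ha'u, ha'v, htailN] at h1
    omega
  rw [sgraph_formula n p a hn (by omega) hsum, sgraph_formula n p a' hn (by omega) hsum']
  have hx1 : Dr n p a' u = Dr n p a u + 1 := by
    rw [Dr, Dr, ha'u]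
    push_cast
    ring
  have hy1 : Dr n p a' v = Dr n p a v - 1 := by
    rw [Dr, Dr, ha'v]
    have h1 : n - p - 1 + (a v - 1) = (n - p - 1 + a v) - 1 := by omega
    rw [h1, Nat.cast_sub (by omega)]
    push_cast
    ring
  have hzl : ∀ l, l ≠ u → l ≠ v → Dr n p a' l = Dr n p a l := by
    intro l hlu hlv
    rw [Dr, Dr, ha'l l hlu hlv]
  have hyx : Dr n p a v ≤ Dr n p a u := by
    rw [Dr, Dr]
    have h := hmax v
    have h2 : n - p - 1 + a v ≤ n - p - 1 + a u := by omega
    exact Nat.cast_le.mpr h2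
  have hy_ge1 : 1 ≤ Dr n p a v := by
    rw [Dr]
    have h2 : 1 ≤ n - p - 1 + a v := by omega
    exact Nat.one_le_cast.mpr h2
  have hz_nonneg : ∀ l, (0:ℝ) ≤ Dr n p a l := fun l => Nat.cast_nonneg _
  -- decomposition of the double sum
  have hereaseuv : (Finset.univ.erase v).erase u = E := by
    rw [hE]; ext s; simp only [Finset.mem_erase, Finset.mem_univ, and_true]; tauto
  have hdecompR : ∀ g : Fin (n - p) → ℝ, ∑ k, g k = g u + (g v + ∑ k ∈ E, g k) := by
    intro g
    rw [← Finset.add_sum_erase _ _ (Finset.mem_univ u), ← Finset.add_sum_erase _ _ hvmem]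
  have hdecompS : ∀ b : Fin (n - p) → ℕ,
      (∑ k, ∑ l ∈ Finset.univ.erase k, W (Dr n p b k) (Dr n p b l))
      = (W (Dr n p b u) (Dr n p b v) + ∑ l ∈ E, W (Dr n p b u) (Dr n p b l))
        + ((W (Dr n p b v) (Dr n p b u) + ∑ l ∈ E, W (Dr n p b v) (Dr n p b l))
        + ∑ k ∈ E, (W (Dr n p b k) (Dr n p b u) + (W (Dr n p b k) (Dr n p b v)
            + ∑ l ∈ E.erase k, W (Dr n p b k) (Dr n p b l)))) := by
    intro b
    rw [hdecompR (fun k => ∑ l ∈ Finset.univ.erase k, W (Dr n p b k) (Dr n p b l))]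
    have h_u : (∑ l ∈ Finset.univ.erase u, W (Dr n p b u) (Dr n p b l))
        = W (Dr n p b u) (Dr n p b v) + ∑ l ∈ E, W (Dr n p b u) (Dr n p b l) :=
      (Finset.add_sum_erase _ _ hvmem).symm
    have h_v : (∑ l ∈ Finset.univ.erase v, W (Dr n p b v) (Dr n p b l))
        = W (Dr n p b v) (Dr n p b u) + ∑ l ∈ E, W (Dr n p b v) (Dr n p b l) := by
      have humem : u ∈ Finset.univ.erase v := Finset.mem_erase.mpr ⟨huv, Finset.mem_univ _⟩
      rw [← Finset.add_sum_erase _ _ humem, hereaseuv]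
    have h_k : ∀ k ∈ E, (∑ l ∈ Finset.univ.erase k, W (Dr n p b k) (Dr n p b l))
        = W (Dr n p b k) (Dr n p b u) + (W (Dr n p b k) (Dr n p b v)
            + ∑ l ∈ E.erase k, W (Dr n p b k) (Dr n p b l)) := by
      intro k hk
      obtain ⟨hku, hkv⟩ := hEmem k hk
      have humem : u ∈ Finset.univ.erase k :=
        Finset.mem_erase.mpr ⟨fun h => hku h.symm, Finset.mem_univ _⟩
      have hvmem' : v ∈ (Finset.univ.erase k).erase u :=
        Finset.mem_erase.mpr ⟨Ne.symm huv, Finset.mem_erase.mpr ⟨fun h => hkv h.symm, Finset.mem_univ _⟩⟩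
      have hset : ((Finset.univ.erase k).erase u).erase v = E.erase k := by
        rw [hE]; ext s
        simp only [Finset.mem_erase, Finset.mem_univ, and_true]
        tauto
      rw [← Finset.add_sum_erase _ _ humem, ← Finset.add_sum_erase _ _ hvmem', hset]
    rw [h_u, h_v, Finset.sum_congr rfl h_k]
  have hdecompT : ∀ b : Fin (n - p) → ℕ,
      (∑ k, (b k : ℝ) * W (Dr n p b k) 1)
      = (b u : ℝ) * W (Dr n p b u) 1 + ((b v : ℝ) * W (Dr n p b v) 1
          + ∑ k ∈ E, (b k : ℝ) * W (Dr n p b k) 1) :=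
    fun b => hdecompR (fun k => (b k : ℝ) * W (Dr n p b k) 1)
  rw [hdecompS a, hdecompS a', hdecompT a, hdecompT a', hx1, hy1, ha'u, ha'v]
  have hcastu : ((a u + 1 : ℕ) : ℝ) = (a u : ℝ) + 1 := by push_cast; ring
  have hcastv : ((a v - 1 : ℕ) : ℝ) = (a v : ℝ) - 1 := by
    rw [Nat.cast_sub hv]; norm_num
  rw [hcastu, hcastv]
  have hS1' : (∑ l ∈ E, W (Dr n p a u + 1) (Dr n p a' l))
      = ∑ l ∈ E, W (Dr n p a u + 1) (Dr n p a l) :=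
    Finset.sum_congr rfl fun l hl => by rw [hzl l (hEmem l hl).1 (hEmem l hl).2]
  have hS2' : (∑ l ∈ E, W (Dr n p a v - 1) (Dr n p a' l))
      = ∑ l ∈ E, W (Dr n p a v - 1) (Dr n p a l) :=
    Finset.sum_congr rfl fun l hl => by rw [hzl l (hEmem l hl).1 (hEmem l hl).2]
  have hS3' : (∑ k ∈ E, (W (Dr n p a' k) (Dr n p a u + 1) + (W (Dr n p a' k) (Dr n p a v - 1)
        + ∑ l ∈ E.erase k, W (Dr n p a' k) (Dr n p a' l))))
      = ∑ k ∈ E, (W (Dr n p a k) (Dr n p a u + 1) + (W (Dr n p a k) (Dr n p a v - 1)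
        + ∑ l ∈ E.erase k, W (Dr n p a k) (Dr n p a l))) := by
    refine Finset.sum_congr rfl fun k hk => ?_
    rw [hzl k (hEmem k hk).1 (hEmem k hk).2]
    congr 2
    refine Finset.sum_congr rfl fun l hl => ?_
    have hl' := hEmem l (Finset.mem_of_mem_erase hl)
    rw [hzl l hl'.1 hl'.2]
  have hT' : (∑ k ∈ E, (a' k : ℝ) * W (Dr n p a' k) 1)
      = ∑ k ∈ E, (a k : ℝ) * W (Dr n p a k) 1 :=
    Finset.sum_congr rfl fun k hk => by
      rw [hzl k (hEmem k hk).1 (hEmem k hk).2, ha'l k (hEmem k hk).1 (hEmem k hk).2]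
  rw [hS1', hS2', hS3', hT']
  -- now pure real arithmetic
  have i1 : W (Dr n p a u) (Dr n p a v) < W (Dr n p a u + 1) (Dr n p a v - 1) :=
    strict_W _ _ hy_ge1 hyx
  have isym1 : W (Dr n p a v) (Dr n p a u) = W (Dr n p a u) (Dr n p a v) := W_symm _ _
  have isym2 : W (Dr n p a v - 1) (Dr n p a u + 1)
      = W (Dr n p a u + 1) (Dr n p a v - 1) := W_symm _ _
  have pointw : ∀ z : ℝ, W (Dr n p a u) z + W (Dr n p a v) z
      ≤ W (Dr n p a u + 1) z + W (Dr n p a v - 1) z := by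
    intro z
    have hs := slope_W z (Dr n p a u) (Dr n p a v - 1) (by linarith)
    rw [show Dr n p a v - 1 + 1 = Dr n p a v by ring] at hs
    linarith
  have i2 : (∑ l ∈ E, W (Dr n p a u) (Dr n p a l)) + (∑ l ∈ E, W (Dr n p a v) (Dr n p a l))
      ≤ (∑ l ∈ E, W (Dr n p a u + 1) (Dr n p a l))
        + (∑ l ∈ E, W (Dr n p a v - 1) (Dr n p a l)) := by
    rw [← Finset.sum_add_distrib, ← Finset.sum_add_distrib]
    exact Finset.sum_le_sum fun l _ => pointw (Dr n p a l)
  have i3 : (∑ k ∈ E, (W (Dr n p a k) (Dr n p a u) + (W (Dr n p a k) (Dr n p a v)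
        + ∑ l ∈ E.erase k, W (Dr n p a k) (Dr n p a l))))
      ≤ ∑ k ∈ E, (W (Dr n p a k) (Dr n p a u + 1) + (W (Dr n p a k) (Dr n p a v - 1)
        + ∑ l ∈ E.erase k, W (Dr n p a k) (Dr n p a l))) := by
    refine Finset.sum_le_sum fun k _ => ?_
    have h := pointw (Dr n p a k)
    rw [W_symm (Dr n p a u), W_symm (Dr n p a v), W_symm (Dr n p a u + 1),
      W_symm (Dr n p a v - 1)] at h
    linarith
  have i4 : (a u : ℝ) * W (Dr n p a u) 1 + (a v : ℝ) * W (Dr n p a v) 1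
      ≤ ((a u : ℝ) + 1) * W (Dr n p a u + 1) 1
        + ((a v : ℝ) - 1) * W (Dr n p a v - 1) 1 := by
    have hBA : (a v : ℝ) ≤ (a u : ℝ) := Nat.cast_le.mpr (hmax v)
    have hB1 : (1 : ℝ) ≤ (a v : ℝ) := Nat.one_le_cast.mpr hv
    have hA0 : (0 : ℝ) ≤ (a u : ℝ) := Nat.cast_nonneg _
    have slope1 : W (Dr n p a v) 1 - W (Dr n p a v - 1) 1
        ≤ W (Dr n p a u + 1) 1 - W (Dr n p a u) 1 := by
      have hs := slope_W 1 (Dr n p a u) (Dr n p a v - 1) (by linarith)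
      rw [show Dr n p a v - 1 + 1 = Dr n p a v by ring] at hs
      linarith
    have mono1 : W (Dr n p a v) 1 ≤ W (Dr n p a u + 1) 1 :=
      mono_W 1 _ _ zero_le_one (by linarith) (by linarith)
    have snn : 0 ≤ W (Dr n p a v) 1 - W (Dr n p a v - 1) 1 := by
      have := mono_W 1 (Dr n p a v) (Dr n p a v - 1) zero_le_one (by linarith) (by linarith)
      linarith
    have prod : ((a v : ℝ) - 1) * (W (Dr n p a v) 1 - W (Dr n p a v - 1) 1)
        ≤ (a u : ℝ) * (W (Dr n p a u + 1) 1 - W (Dr n p a u) 1) :=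
      mul_le_mul (by linarith) slope1 snn hA0
    nlinarith [prod, mono1]
  linarith [i1, i2, i3, i4]
end
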